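/- arXiv:1708.00552 — 4 statements merged into one kernel-verified Lean document; each statement's English description precedes it below -/
import Mathlib

section
/- For every natural number n ≥ 39, every admissible multiplicity function m, every sum labeling ℓ of G(n,m), and every vertex v ∈ ψ(2): ℓ(v) ≠ 1. -/
/-- `Sn n = {2,3,…,n} ∪ {n+2}`. -/
def Sn (n : ℕ) : Set ℕ := {k | (2 ≤ k ∧ k ≤ n) ∨ k = n + 2}

/-- `m` is an admissible multiplicity function for `Sn n`. -/
def Admissible (n : ℕ) (m : ℕ → ℕ) : Prop :=
  (∀ i ∈ Sn n, 2 * i ∈ Sn n → 2 ≤ m i) ∧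
  (∀ i ∈ Sn n, 2 * i ∉ Sn n → m i = 1) ∧
  (∀ i, i ∉ Sn n → m i = 0)

/-- The vertex set of `G(n,m)`: pairs `(i,j)` with `i ∈ Sn n` and `j < m i`. -/
def Vnm (n : ℕ) (m : ℕ → ℕ) : Set (ℕ × ℕ) := {p | p.1 ∈ Sn n ∧ p.2 < m p.1}

/-- Distinct vertices `u`, `v` of `G(n,m)` are adjacent iff `u.1 + v.1 ∈ Sn n`. -/
def AdjG (n : ℕ) (u v : ℕ × ℕ) : Prop := u ≠ v ∧ u.1 + v.1 ∈ Sn n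

/-- `psi m i` is the set of vertices induced by the integer `i`. -/
def psi (m : ℕ → ℕ) (i : ℕ) : Set (ℕ × ℕ) := {p | p.1 = i ∧ p.2 < m i}

/-- The set of proper terminals of a vertex `v` of `G(n,m)`. -/
def tau (n : ℕ) (m : ℕ → ℕ) (v : ℕ × ℕ) : Set (ℕ × ℕ) :=
  {w ∈ Vnm n m | w ≠ v ∧ v.1 + w.1 ∉ Sn n}

/-- A (possibly non-injective) sum labeling of the graph `G(n,m)`. -/
def IsSumLabelingG (n : ℕ) (m : ℕ → ℕ) (ℓ : ℕ × ℕ → ℕ) : Prop :=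
  (∀ v ∈ Vnm n m, 1 ≤ ℓ v) ∧
  ∀ u ∈ Vnm n m, ∀ v ∈ Vnm n m, u ≠ v →
    (AdjG n u v ↔ ∃ w ∈ Vnm n m, ℓ u + ℓ v = ℓ w)

namespace OneNot

open Classical

/-- `t` is a label value attained on the vertex set. -/
def lam (n : ℕ) (m : ℕ → ℕ) (ℓ : ℕ × ℕ → ℕ) (t : ℕ) : Prop :=
  ∃ w ∈ Vnm n m, ℓ w = t

variable {n : ℕ} {m : ℕ → ℕ} {ℓ : ℕ × ℕ → ℕ} {v : ℕ × ℕ}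

structure Setup (n : ℕ) (m : ℕ → ℕ) (ℓ : ℕ × ℕ → ℕ) (v : ℕ × ℕ) : Prop where
  hn : 39 ≤ n
  hm : Admissible n m
  hl : IsSumLabelingG n m ℓ
  hvV : v ∈ Vnm n m
  hv2 : v.1 = 2
  hv1 : ℓ v = 1

theorem Setup.mem_Sn (S : Setup n m ℓ v) {k : ℕ} (h : (2 ≤ k ∧ k ≤ n) ∨ k = n + 2) :
    k ∈ Sn n := h

theorem Setup.Sn_elim (S : Setup n m ℓ v) {k : ℕ} (h : k ∈ Sn n) :
    (2 ≤ k ∧ k ≤ n) ∨ k = n + 2 := h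

theorem Setup.mpos (S : Setup n m ℓ v) {i : ℕ} (hi : i ∈ Sn n) : 0 < m i := by
  by_cases h : 2 * i ∈ Sn n
  · have := S.hm.1 i hi h; omega
  · have := S.hm.2.1 i hi h; omega

theorem Setup.mone (S : Setup n m ℓ v) {i : ℕ} (hi : i ∈ Sn n) (h : ¬ (2 * i ∈ Sn n)) :
    m i = 1 := S.hm.2.1 i hi h

theorem Setup.mtwo (S : Setup n m ℓ v) {i : ℕ} (hi : i ∈ Sn n) (h : 2 * i ∈ Sn n) :
    2 ≤ m i := S.hm.1 i hi h

/-- the basic coordinate vertex `(c,0)`. -/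
theorem Setup.vmem (S : Setup n m ℓ v) {c : ℕ} (h : (2 ≤ c ∧ c ≤ n) ∨ c = n + 2) :
    ((c, 0) : ℕ × ℕ) ∈ Vnm n m := ⟨h, S.mpos h⟩

/-- the secondary coordinate vertex `(c,1)`, available when `2c ∈ Sn`. -/
theorem Setup.vmem1 (S : Setup n m ℓ v) {c : ℕ} (h : (2 ≤ c ∧ c ≤ n) ∨ c = n + 2)
    (h2 : (2 ≤ 2*c ∧ 2*c ≤ n) ∨ 2*c = n + 2) : ((c, 1) : ℕ × ℕ) ∈ Vnm n m :=
  ⟨h, by show (1:ℕ) < m c; have := S.mtwo (i := c) h h2; omega⟩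

/-- a vertex whose coordinate has multiplicity 1 is pinned. -/
theorem Setup.pin (S : Setup n m ℓ v) {u : ℕ × ℕ} (hu : u ∈ Vnm n m) {c : ℕ}
    (hc : u.1 = c) (h2 : ¬ ((2 ≤ 2*c ∧ 2*c ≤ n) ∨ 2*c = n + 2)) : u = (c, 0) := by
  have h1 : m c = 1 := S.mone (hc ▸ hu.1) h2
  have := hu.2
  rw [hc] at this
  have : u.2 = 0 := by omega
  exact Prod.ext hc this

theorem Setup.lpos (S : Setup n m ℓ v) {u : ℕ × ℕ} (hu : u ∈ Vnm n m) : 1 ≤ ℓ u :=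
  S.hl.1 u hu

/-- adjacent pair: sum of labels is attained. -/
theorem Setup.ladd (S : Setup n m ℓ v) {u w : ℕ × ℕ} (hu : u ∈ Vnm n m) (hw : w ∈ Vnm n m)
    (hne : u ≠ w) (hs : u.1 + w.1 ∈ Sn n) : lam n m ℓ (ℓ u + ℓ w) := by
  have := (S.hl.2 u hu w hw hne).mp ⟨hne, hs⟩
  obtain ⟨x, hx, he⟩ := this
  exact ⟨x, hx, he.symm⟩

/-- non-adjacent pair: sum of labels is not attained. -/
theorem Setup.lnot (S : Setup n m ℓ v) {u w : ℕ × ℕ} (hu : u ∈ Vnm n m) (hw : w ∈ Vnm n m)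
    (hne : u ≠ w) (hs : ¬ (u.1 + w.1 ∈ Sn n)) : ¬ lam n m ℓ (ℓ u + ℓ w) := by
  intro ⟨x, hx, he⟩
  have := (S.hl.2 u hu w hw hne).mpr ⟨x, hx, he.symm⟩
  exact hs this.2

theorem Setup.lam_le (S : Setup n m ℓ v) : ∃ N, ∀ t, lam n m ℓ t → t ≤ N := by
  classical
  refine ⟨((Finset.range (n+3)) ×ˢ Finset.range ((Finset.range (n+3)).sup m)).sup ℓ, ?_⟩
  rintro t ⟨w, hw, rfl⟩
  apply Finset.le_sup
  rw [Finset.mem_product, Finset.mem_range, Finset.mem_range]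
  have h1 : w.1 < n + 3 := by rcases hw.1 with h | h <;> omega
  refine ⟨h1, lt_of_lt_of_le hw.2 ?_⟩
  exact Finset.le_sup (Finset.mem_range.mpr h1)

/-- maximum of a nonempty family of attained labels -/
theorem Setup.exists_max (S : Setup n m ℓ v) (P : ℕ × ℕ → Prop)
    (hne : ∃ u ∈ Vnm n m, P u) :
    ∃ M, (∃ u ∈ Vnm n m, P u ∧ ℓ u = M) ∧ ∀ u ∈ Vnm n m, P u → ℓ u ≤ M := by
  classical
  obtain ⟨N, hN⟩ := S.lam_le
  obtain ⟨u0, hu0, hPu0⟩ := hne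
  set Q : ℕ → Prop := fun t => ∃ u ∈ Vnm n m, P u ∧ ℓ u = t with hQ
  have hu0N : ℓ u0 ≤ N := hN _ ⟨u0, hu0, rfl⟩
  have hQ0 : Q (ℓ u0) := ⟨u0, hu0, hPu0, rfl⟩
  refine ⟨Nat.findGreatest Q N, Nat.findGreatest_spec hu0N hQ0, ?_⟩
  intro u hu hPu
  exact Nat.le_findGreatest (hN _ ⟨u, hu, rfl⟩) ⟨u, hu, hPu, rfl⟩

end OneNot
namespace OneNot
variable {n : ℕ} {m : ℕ → ℕ} {ℓ : ℕ × ℕ → ℕ} {v : ℕ × ℕ}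

/-- no vertex with coordinate in `[3, n]` has label 1 -/
theorem Setup.L3 (S : Setup n m ℓ v) {u : ℕ × ℕ} (hu : u ∈ Vnm n m)
    (h3 : 3 ≤ u.1) (hn1 : u.1 ≤ n) : 2 ≤ ℓ u := by
  have hn := S.hn
  by_contra h
  have hu1 : ℓ u = 1 := by have := S.lpos hu; omega
  by_cases hcn : u.1 ≤ n - 1
  · -- use z = (n,0)
    have hz : ((n,0) : ℕ×ℕ) ∈ Vnm n m := S.vmem (by omega)
    have h1 : lam n m ℓ (ℓ (n,0) + 1) := by
      have hne : ((n,0) : ℕ×ℕ) ≠ v := by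
        intro h; have := S.hv2; rw [← h] at this; simp at this; omega
      have := S.ladd hz S.hvV hne (by
        show (2 ≤ n + v.1 ∧ n + v.1 ≤ n) ∨ n + v.1 = n + 2
        rw [S.hv2]; omega)
      rwa [S.hv1] at this
    have h2 : ¬ lam n m ℓ (ℓ (n,0) + 1) := by
      have hne : ((n,0) : ℕ×ℕ) ≠ u := by
        intro h; rw [← h] at hcn; simp at hcn; omega
      have := S.lnot hz hu hne (by
        intro hmem
        rcases S.Sn_elim hmem with h' | h' <;> simp at h' <;> omega)
      rwa [hu1] at this
    exact h2 h1
  · -- u = (n, 0); use d = (n-2,0)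
    have hun : u.1 = n := by omega
    have hd : ((n-2,0) : ℕ×ℕ) ∈ Vnm n m := S.vmem (by omega)
    have h1 : lam n m ℓ (ℓ (n-2,0) + 1) := by
      have hne : ((n-2,0) : ℕ×ℕ) ≠ v := by
        intro h; have := S.hv2; rw [← h] at this; simp at this; omega
      have := S.ladd hd S.hvV hne (by
        show (2 ≤ (n-2) + v.1 ∧ (n-2) + v.1 ≤ n) ∨ (n-2) + v.1 = n + 2
        rw [S.hv2]; omega)
      rwa [S.hv1] at this
    have h2 : ¬ lam n m ℓ (ℓ (n-2,0) + 1) := by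
      have hne : ((n-2,0) : ℕ×ℕ) ≠ u := by
        intro h; rw [← h] at hun; simp at hun; omega
      have := S.lnot hd hu hne (by
        intro hmem
        rcases S.Sn_elim hmem with h' | h' <;> simp at h' <;> omega)
      rwa [hu1] at this
    exact h2 h1

/-- the chain lemma: any attained label `≥ 2` other than `B`, `X` has its successor attained. -/
theorem Setup.CH (S : Setup n m ℓ v) {t : ℕ} (ht : lam n m ℓ t) (h2 : 2 ≤ t)
    (hB : t ≠ ℓ (n-1, 0)) (hX : t ≠ ℓ (n+2, 0)) : lam n m ℓ (t+1) := by
  have hn := S.hn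
  obtain ⟨w, hw, hwt⟩ := ht
  have hwv : w ≠ v := by
    intro h; rw [h, S.hv1] at hwt; omega
  have hcoord : (2 ≤ w.1 ∧ w.1 ≤ n - 2) ∨ w.1 = n := by
    rcases S.Sn_elim hw.1 with h | h
    · rcases Nat.lt_or_ge w.1 (n - 1) with h' | h'
      · left; omega
      · by_cases he : w.1 = n - 1
        · exfalso; apply hB
          rw [← hwt]; congr 1
          exact S.pin hw he (by omega)
        · right; omega
    · exfalso; apply hX
      rw [← hwt]; congr 1
      exact S.pin hw h (by omega)
  have := S.ladd hw S.hvV hwv (by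
    show (2 ≤ w.1 + v.1 ∧ w.1 + v.1 ≤ n) ∨ w.1 + v.1 = n + 2
    rw [S.hv2]; omega)
  rwa [S.hv1, hwt] at this

/-- interval lemma: from any attained `t ≥ 2` there is an attained interval `[t, s]`
with `s ∈ {B, X}`. -/
theorem Setup.INT (S : Setup n m ℓ v) {t : ℕ} (ht : lam n m ℓ t) (h2 : 2 ≤ t) :
    ∃ s, (s = ℓ (n-1,0) ∨ s = ℓ (n+2,0)) ∧ t ≤ s ∧ ∀ r, t ≤ r → r ≤ s → lam n m ℓ r := by
  obtain ⟨N, hN⟩ := S.lam_le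
  suffices h : ∀ k, ∀ t, N - t ≤ k → lam n m ℓ t → 2 ≤ t →
      ∃ s, (s = ℓ (n-1,0) ∨ s = ℓ (n+2,0)) ∧ t ≤ s ∧ ∀ r, t ≤ r → r ≤ s → lam n m ℓ r by
    exact h (N - t) t le_rfl ht h2
  intro k
  induction k with
  | zero =>
    intro t hk ht h2
    have htN : t ≤ N := hN t ht
    by_cases hB : t = ℓ (n-1,0)
    · exact ⟨t, Or.inl hB, le_rfl, fun r h1 h2 => by
        have : r = t := le_antisymm h2 h1; rwa [this]⟩
    by_cases hX : t = ℓ (n+2,0)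
    · exact ⟨t, Or.inr hX, le_rfl, fun r h1 h2 => by
        have : r = t := le_antisymm h2 h1; rwa [this]⟩
    · exfalso
      have := hN _ (S.CH ht h2 hB hX)
      omega
  | succ k ih =>
    intro t hk ht h2
    by_cases hB : t = ℓ (n-1,0)
    · exact ⟨t, Or.inl hB, le_rfl, fun r h1 h2 => by
        have : r = t := le_antisymm h2 h1; rwa [this]⟩
    by_cases hX : t = ℓ (n+2,0)
    · exact ⟨t, Or.inr hX, le_rfl, fun r h1 h2 => by
        have : r = t := le_antisymm h2 h1; rwa [this]⟩
    · have ht1 : lam n m ℓ (t+1) := S.CH ht h2 hB hX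
      have hle : N - (t+1) ≤ k := by
        have := hN _ ht1; omega
      obtain ⟨s, hs, hts, hint⟩ := ih (t+1) hle ht1 (by omega)
      refine ⟨s, hs, by omega, fun r h1 h2 => ?_⟩
      rcases Nat.eq_or_lt_of_le h1 with h | h
      · rwa [← h]
      · exact hint r (by omega) h2
end OneNot
namespace OneNot
variable {n : ℕ} {m : ℕ → ℕ} {ℓ : ℕ × ℕ → ℕ} {v : ℕ × ℕ}

theorem fst_ne {u w : ℕ × ℕ} (h : u.1 ≠ w.1) : u ≠ w := fun he => h (he ▸ rfl)

/-- b ~ a3 -/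
theorem Setup.lam_BA (S : Setup n m ℓ v) : lam n m ℓ (ℓ (n-1,0) + ℓ (3,0)) := by
  have hn := S.hn
  exact S.ladd (S.vmem (by omega)) (S.vmem (by omega))
    (fst_ne (by simp; omega)) (by show (2 ≤ (n-1) + 3 ∧ (n-1) + 3 ≤ n) ∨ (n-1) + 3 = n + 2; omega)

/-- b is not adjacent to v : B + 1 is not attained -/
theorem Setup.notlam_B1 (S : Setup n m ℓ v) : ¬ lam n m ℓ (ℓ (n-1,0) + 1) := by
  have hn := S.hn
  have hb : ((n-1,0) : ℕ×ℕ) ∈ Vnm n m := S.vmem (by omega)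
  have hne : ((n-1,0) : ℕ×ℕ) ≠ v := fst_ne (by rw [S.hv2]; simp; omega)
  have := S.lnot hb S.hvV hne (by
    intro hmem; rcases S.Sn_elim hmem with h | h <;> rw [S.hv2] at h <;> simp at h <;> omega)
  rwa [S.hv1] at this

/-- Phase 1 : unique maximum at x -/
theorem Setup.Xmax (S : Setup n m ℓ v) :
    (∀ t, lam n m ℓ t → t ≤ ℓ (n+2,0)) ∧
    (∀ u ∈ Vnm n m, ℓ u = ℓ (n+2,0) → u = (n+2,0)) := by
  have hn := S.hn
  obtain ⟨M, ⟨y, hy, -, hyM⟩, hbnd⟩ := S.exists_max (fun _ => True) ⟨v, S.hvV, trivial⟩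
  have hBA := S.lam_BA
  have hBA_le : ℓ (n-1,0) + ℓ (3,0) ≤ M := by
    obtain ⟨w, hw, hwe⟩ := hBA
    rw [← hwe]; exact hbnd w hw trivial
  have hBpos : 1 ≤ ℓ (n-1,0) := S.lpos (S.vmem (by omega))
  have hApos : 1 ≤ ℓ (3,0) := S.lpos (S.vmem (by omega))
  have key : ∀ u ∈ Vnm n m, ℓ u = M → u = (n+2,0) := by
    intro u hu huM
    rcases S.Sn_elim hu.1 with hc | hc
    · exfalso
      have huv : u ≠ v := by
        intro h; rw [h, S.hv1] at huM; omega
      by_cases hc1 : u.1 = n - 1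
      · have := S.pin hu hc1 (by omega)
        rw [this] at huM; omega
      · have hadj : u.1 + v.1 ∈ Sn n := by
          show (2 ≤ u.1 + v.1 ∧ u.1 + v.1 ≤ n) ∨ u.1 + v.1 = n + 2
          rw [S.hv2]; omega
        have := S.ladd hu S.hvV huv hadj
        obtain ⟨w, hw, hwe⟩ := this
        have := hbnd w hw trivial
        rw [S.hv1, huM] at hwe
        omega
    · exact S.pin hu hc (by omega)
  have hyx : y = (n+2,0) := key y hy hyM
  have hXM : ℓ (n+2,0) = M := by rw [← hyx, hyM]
  constructor
  · intro t ht; obtain ⟨w, hw, hwe⟩ := ht; rw [← hwe, hXM]; exact hbnd w hw trivial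
  · intro u hu hue; exact key u hu (by rw [hue, hXM])

/-- convenient form : strict bound off x -/
theorem Setup.Xlt (S : Setup n m ℓ v) {u : ℕ × ℕ} (hu : u ∈ Vnm n m)
    (hne : u ≠ (n+2,0)) : ℓ u < ℓ (n+2,0) := by
  have h1 := S.Xmax.1 (ℓ u) ⟨u, hu, rfl⟩
  rcases Nat.eq_or_lt_of_le h1 with h | h
  · exact absurd (S.Xmax.2 u hu h) hne
  · exact h

/-- Phase 2 : either b dominates all of `V \ {x}`, or z is second max with X = Z+1 and
all coordinate-2 labels are 1. -/
theorem Setup.PQ (S : Setup n m ℓ v) :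
    (∀ u ∈ Vnm n m, u ≠ (n+2,0) → u ≠ (n-1,0) → ℓ u < ℓ (n-1,0)) ∨
    (ℓ (n,0) + 1 = ℓ (n+2,0) ∧ (∀ u ∈ Vnm n m, u.1 = 2 → ℓ u = 1) ∧
      (∀ u ∈ Vnm n m, u ≠ (n+2,0) → ℓ u ≤ ℓ (n,0))) := by
  have hn := S.hn
  have hvx : v ≠ ((n+2,0) : ℕ×ℕ) := fst_ne (by rw [S.hv2]; simp; omega)
  obtain ⟨M, ⟨y, hy, hyx, hyM⟩, hbnd⟩ :=
    S.exists_max (fun u => u ≠ (n+2,0)) ⟨v, S.hvV, hvx⟩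
  have hbnd' : ∀ u ∈ Vnm n m, u ≠ (n+2,0) → ℓ u ≤ M := fun u hu hx => hbnd u hu hx
  have ha3 : ((3,0) : ℕ×ℕ) ∈ Vnm n m := S.vmem (by omega)
  have hM2 : 2 ≤ M := le_trans (S.L3 ha3 (by simp) (by simp; omega))
    (hbnd' _ ha3 (fst_ne (by simp; omega)))
  -- main dichotomy
  by_cases hyb : ∃ u ∈ Vnm n m, u ≠ (n+2,0) ∧ u ≠ (n-1,0) ∧ ℓ u = M
  · right
    obtain ⟨y, hy, hyx, hyb', hyM⟩ := hyb
    have hyv : y ≠ v := by intro h; rw [h, S.hv1] at hyM; omega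
    have hcoord : (2 ≤ y.1 ∧ y.1 ≤ n - 2) ∨ y.1 = n := by
      rcases S.Sn_elim hy.1 with h | h
      · by_cases he : y.1 = n - 1
        · exact absurd (S.pin hy he (by omega)) hyb'
        · rcases Nat.lt_or_ge y.1 (n-1) with h' | h'
          · left; omega
          · right; omega
      · exact absurd (S.pin hy h (by omega)) hyx
    -- X = M + 1
    have hXM : ℓ (n+2,0) = M + 1 := by
      have hadj : lam n m ℓ (M + 1) := by
        have := S.ladd hy S.hvV hyv (by
          show (2 ≤ y.1 + v.1 ∧ y.1 + v.1 ≤ n) ∨ y.1 + v.1 = n + 2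
          rw [S.hv2]; omega)
        rwa [S.hv1, hyM] at this
      obtain ⟨w, hw, hwe⟩ := hadj
      by_cases hwx : w = (n+2,0)
      · rw [← hwe, hwx]
      · have := hbnd' w hw hwx; omega
    -- all neighbors of y have label 1
    have hnb : ∀ e ∈ Vnm n m, e ≠ y → y.1 + e.1 ∈ Sn n → ℓ e = 1 := by
      intro e he hey hs
      have := S.ladd hy he (Ne.symm hey) hs
      obtain ⟨w, hw, hwe⟩ := this
      rw [hyM] at hwe
      by_cases hwx : w = (n+2,0)
      · rw [hwx, hXM] at hwe
        have := S.lpos he; omega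
      · have := hbnd' w hw hwx
        have := S.lpos he; omega
    -- coordinate cases
    rcases hcoord with ⟨h2, hle⟩ | hyn
    · exfalso
      rcases Nat.lt_or_ge y.1 (n - 2) with hlt | hge
      · -- y.1 ≤ n - 3 : a coordinate-3 partner has label 1
        have h31 : ((3,1) : ℕ×ℕ) ∈ Vnm n m := S.vmem1 (by omega) (by omega)
        by_cases h3y : y = ((3,0) : ℕ×ℕ)
        · have := hnb (3,1) h31 (by rw [h3y]; simp) (by
            show (2 ≤ y.1 + 3 ∧ y.1 + 3 ≤ n) ∨ y.1 + 3 = n + 2; omega)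
          have := S.L3 h31 (by simp) (by simp; omega)
          omega
        · have := hnb (3,0) ha3 (fun h => h3y h.symm) (by
            show (2 ≤ y.1 + 3 ∧ y.1 + 3 ≤ n) ∨ y.1 + 3 = n + 2; omega)
          have := S.L3 ha3 (by simp) (by simp; omega)
          omega
      · -- y = (n-2, 0) : the coordinate-4 vertex has label 1
        have hy2 : y.1 = n - 2 := by omega
        have ha4 : ((4,0) : ℕ×ℕ) ∈ Vnm n m := S.vmem (by omega)
        have := hnb (4,0) ha4 (fst_ne (by simp; omega)) (by
          show (2 ≤ y.1 + 4 ∧ y.1 + 4 ≤ n) ∨ y.1 + 4 = n + 2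
          right; omega)
        have := S.L3 ha4 (by simp) (by simp; omega)
        omega
    · -- y = (n, 0) : CASE Q
      have hyz : y = ((n,0) : ℕ×ℕ) := S.pin hy hyn (by omega)
      refine ⟨by rw [← hyz, hyM, hXM], ?_, ?_⟩
      · intro u hu hu2
        refine hnb u hu (fun h => by rw [h, hyz] at hu2; simp at hu2; omega) ?_
        rw [hyz]; show (2 ≤ n + u.1 ∧ n + u.1 ≤ n) ∨ n + u.1 = n + 2
        right; omega
      · intro u hu hux
        rw [hyz] at hyM
        rw [hyM]; exact hbnd' u hu hux
  · left
    intro u hu hux hub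
    have h1 := hbnd' u hu hux
    have h2 : ℓ u ≠ M := fun h => hyb ⟨u, hu, hux, hub, h⟩
    -- B = M
    have hyB : y = ((n-1,0) : ℕ×ℕ) := by
      by_contra h
      exact hyb ⟨y, hy, hyx, h, hyM⟩
    rw [← hyB, hyM]
    omega
end OneNot
namespace OneNot
variable {n : ℕ} {m : ℕ → ℕ} {ℓ : ℕ × ℕ → ℕ} {v : ℕ × ℕ}

theorem Setup.caseP (S : Setup n m ℓ v)
    (hP : ∀ u ∈ Vnm n m, u ≠ (n+2,0) → u ≠ (n-1,0) → ℓ u < ℓ (n-1,0)) : False := by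
  have hn := S.hn
  have hbV : ((n-1,0) : ℕ×ℕ) ∈ Vnm n m := S.vmem (by omega)
  have hxV : ((n+2,0) : ℕ×ℕ) ∈ Vnm n m := S.vmem (by omega)
  have hzV : ((n,0) : ℕ×ℕ) ∈ Vnm n m := S.vmem (by omega)
  have hdV : ((n-2,0) : ℕ×ℕ) ∈ Vnm n m := S.vmem (by omega)
  have ha3V : ((3,0) : ℕ×ℕ) ∈ Vnm n m := S.vmem (by omega)
  have ha3V' : ((3,1) : ℕ×ℕ) ∈ Vnm n m := S.vmem1 (by omega) (by omega)
  have ha4V : ((4,0) : ℕ×ℕ) ∈ Vnm n m := S.vmem (by omega)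
  have hlamX : lam n m ℓ (ℓ (n+2,0)) := ⟨_, hxV, rfl⟩
  have hlamB : lam n m ℓ (ℓ (n-1,0)) := ⟨_, hbV, rfl⟩
  -- P-top : every attained value is ≤ B or equals X
  have htop : ∀ t, lam n m ℓ t → t ≤ ℓ (n-1,0) ∨ t = ℓ (n+2,0) := by
    rintro t ⟨w, hw, rfl⟩
    by_cases hwx : w = (n+2,0)
    · right; rw [hwx]
    by_cases hwb : w = (n-1,0)
    · left; rw [hwb]
    · left; exact le_of_lt (hP w hw hwx hwb)
  -- P1 : every coordinate-3 label w satisfies B + ℓ w = X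
  have hcoord3 : ∀ w ∈ Vnm n m, w.1 = 3 → ℓ (n-1,0) + ℓ w = ℓ (n+2,0) := by
    intro w hw hw3
    have hne : ((n-1,0):ℕ×ℕ) ≠ w := fst_ne (by simp <;> omega)
    have hadj := S.ladd hbV hw hne (by
      show (2 ≤ (n-1) + w.1 ∧ (n-1) + w.1 ≤ n) ∨ (n-1) + w.1 = n + 2
      right; omega)
    have hwpos := S.lpos hw
    rcases htop _ hadj with h | h
    · omega
    · exact h
  have hXBA : ℓ (n+2,0) = ℓ (n-1,0) + ℓ (3,0) := (hcoord3 _ ha3V rfl).symm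
  have hA2 : 2 ≤ ℓ (3,0) := S.L3 ha3V (by simp) (by simp <;> omega)
  have hA2' : 2 ≤ ℓ (3,1) := S.L3 ha3V' (by simp) (by simp <;> omega)
  have hAA' : ℓ (3,1) = ℓ (3,0) := by
    have h1 := hcoord3 _ ha3V rfl
    have h2 := hcoord3 _ ha3V' rfl
    omega
  -- P4 : 2 α ≤ B
  have h2A : 2 * ℓ (3,0) ≤ ℓ (n-1,0) := by
    have hadj := S.ladd ha3V ha3V' (by simp) (by
      show (2 ≤ 3 + 3 ∧ 3 + 3 ≤ n) ∨ (3:ℕ) + 3 = n + 2; omega)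
    rw [hAA'] at hadj
    have hAB : ℓ (3,0) < ℓ (n-1,0) := hP _ ha3V (fst_ne (by simp <;> omega)) (fst_ne (by simp <;> omega))
    rcases htop _ hadj with h | h
    · omega
    · rw [hXBA] at h; omega
  -- P5 : the interval [α+1, B] is attained
  have hint : ∀ r, ℓ (3,0) + 1 ≤ r → r ≤ ℓ (n-1,0) → lam n m ℓ r := by
    have hA1 : lam n m ℓ (ℓ (3,0) + 1) := by
      have hne : ((3,0):ℕ×ℕ) ≠ v := by
        intro h; have := S.hv1; rw [← h] at this; omega
      have := S.ladd ha3V S.hvV hne (by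
        show (2 ≤ 3 + v.1 ∧ 3 + v.1 ≤ n) ∨ 3 + v.1 = n + 2
        rw [S.hv2]; omega)
      rwa [S.hv1] at this
    obtain ⟨s, hs, hle, hintv⟩ := S.INT hA1 (by omega)
    rcases hs with hsB | hsX
    · intro r h1 h2; exact hintv r h1 (by omega)
    · exfalso
      apply S.notlam_B1
      exact hintv _ (by omega) (by rw [hsX, hXBA]; omega)
  -- P6 : low-coordinate bound ℓ u ≤ B - α
  have hlow : ∀ u ∈ Vnm n m, 2 ≤ u.1 → u.1 + 3 ≤ n → ℓ u + ℓ (3,0) ≤ ℓ (n-1,0) := by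
    intro u hu h2 h3
    have hux : u ≠ ((n+2,0):ℕ×ℕ) := fst_ne (by omega)
    have hub : u ≠ ((n-1,0):ℕ×ℕ) := fst_ne (by omega)
    have huB : ℓ u < ℓ (n-1,0) := hP u hu hux hub
    by_cases h30 : u = ((3,0) : ℕ×ℕ)
    · have hadj := S.ladd hu ha3V' (by rw [h30]; simp) (by
        show (2 ≤ u.1 + 3 ∧ u.1 + 3 ≤ n) ∨ u.1 + 3 = n + 2; omega)
      rw [hAA'] at hadj
      rcases htop _ hadj with h | h
      · omega
      · rw [hXBA] at h; omega
    · have hadj := S.ladd hu ha3V (fun h => h30 h) (by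
        show (2 ≤ u.1 + 3 ∧ u.1 + 3 ≤ n) ∨ u.1 + 3 = n + 2; omega)
      rcases htop _ hadj with h | h
      · omega
      · rw [hXBA] at h; omega
  -- P7 : lower bounds for Z and D
  have hZup : ℓ (n,0) < ℓ (n-1,0) := hP _ hzV (fst_ne (by simp <;> omega)) (fst_ne (by simp <;> omega))
  have hDup : ℓ (n-2,0) < ℓ (n-1,0) := hP _ hdV (fst_ne (by simp <;> omega)) (fst_ne (by simp <;> omega))
  have hZ2 : 2 ≤ ℓ (n,0) := S.L3 hzV (by simp <;> omega) (by simp)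
  have hD2 : 2 ≤ ℓ (n-2,0) := S.L3 hdV (by simp <;> omega) (by simp <;> omega)
  have hZlo : ℓ (n-1,0) + 1 ≤ ℓ (n,0) + ℓ (3,0) := by
    by_contra h
    exact S.lnot hzV ha3V (fst_ne (by simp <;> omega))
      (by intro hmem; rcases S.Sn_elim hmem with h' | h' <;> simp at h' <;> omega)
      (hint _ (by omega) (by omega))
  have hDlo : ℓ (n-1,0) + 1 ≤ ℓ (n-2,0) + ℓ (3,0) := by
    by_contra h
    exact S.lnot hdV ha3V (fst_ne (by simp <;> omega))
      (by intro hmem; rcases S.Sn_elim hmem with h' | h' <;> simp at h' <;> omega)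
      (hint _ (by omega) (by omega))
  -- P8 : carriers of values in (B - α, B) are z or d
  have hcarrier : ∀ t, ℓ (n-1,0) < t + ℓ (3,0) → t < ℓ (n-1,0) →
      t = ℓ (n,0) ∨ t = ℓ (n-2,0) := by
    intro t h1 h2
    have hlam : lam n m ℓ t := hint t (by omega) (by omega)
    obtain ⟨w, hw, rfl⟩ := hlam
    rcases S.Sn_elim hw.1 with hc | hc
    · by_cases hwn : w.1 = n
      · left; rw [S.pin hw hwn (by omega)]
      by_cases hwn2 : w.1 = n - 2
      · right; rw [S.pin hw hwn2 (by omega)]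
      by_cases hwn1 : w.1 = n - 1
      · exfalso; rw [S.pin hw hwn1 (by omega)] at h2; omega
      · exfalso
        have := hlow w hw (by omega) (by omega)
        omega
    · exfalso
      rw [S.pin hw hc (by omega)] at h2
      have : ℓ (n-1,0) < ℓ (n+2,0) := by rw [hXBA]; omega
      omega
  -- α ≤ 3
  have hAle3 : ℓ (3,0) ≤ 3 := by
    by_contra h
    have c1 := hcarrier (ℓ (n-1,0) - 1) (by omega) (by omega)
    have c2 := hcarrier (ℓ (n-1,0) - 2) (by omega) (by omega)
    have c3 := hcarrier (ℓ (n-1,0) - 3) (by omega) (by omega)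
    have hB6 : 6 ≤ ℓ (n-1,0) := by omega
    rcases c1 with h1 | h1 <;> rcases c2 with h2 | h2 <;> rcases c3 with h3 | h3 <;> omega
  -- Z ≠ D (otherwise (4,0) separates z from d)
  have hZD : ℓ (n,0) ≠ ℓ (n-2,0) := by
    intro hZDe
    have hadj := S.ladd hdV ha4V (fst_ne (by simp <;> omega)) (by
      show (2 ≤ (n-2) + 4 ∧ (n-2) + 4 ≤ n) ∨ (n-2) + 4 = n + 2
      right; omega)
    apply S.lnot hzV ha4V (fst_ne (by simp <;> omega)) (by
      intro hmem; rcases S.Sn_elim hmem with h' | h' <;> simp at h' <;> omega)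
    rwa [hZDe]
  -- now α ∈ {2,3}
  have hAcase : ℓ (3,0) = 2 ∨ ℓ (3,0) = 3 := by omega
  rcases hAcase with hA | hA
  · -- α = 2 : Z = D = B - 1, contradiction with Z ≠ D
    have c1 := hcarrier (ℓ (n-1,0) - 1) (by omega) (by omega)
    have hZr : ℓ (n,0) + 2 ≤ ℓ (n-1,0) + 1 := by rw [← hA]; omega
    have hDr : ℓ (n-2,0) + 2 ≤ ℓ (n-1,0) + 1 := by rw [← hA]; omega
    have hZlo' := hZlo; have hDlo' := hDlo
    rw [hA] at hZlo' hDlo'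
    rcases c1 with h | h <;> omega
  · -- α = 3
    rw [hA] at hlow hint h2A hXBA hZlo hDlo hcarrier
    have hB6 : 6 ≤ ℓ (n-1,0) := by omega
    -- {Z, D} = {B-1, B-2}
    have c1 := hcarrier (ℓ (n-1,0) - 1) (by omega) (by omega)
    have c2 := hcarrier (ℓ (n-1,0) - 2) (by omega) (by omega)
    have hZDv : (ℓ (n,0) = ℓ (n-1,0) - 1 ∧ ℓ (n-2,0) = ℓ (n-1,0) - 2) ∨
        (ℓ (n,0) = ℓ (n-1,0) - 2 ∧ ℓ (n-2,0) = ℓ (n-1,0) - 1) := by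
      rcases c1 with h1 | h1 <;> rcases c2 with h2 | h2 <;> omega
    -- B ≠ 6 and B ≠ 7 preliminaries use z ≁ d
    have hzd : ¬ lam n m ℓ (ℓ (n,0) + ℓ (n-2,0)) := S.lnot hzV hdV
      (fst_ne (by simp <;> omega))
      (by intro hmem; rcases S.Sn_elim hmem with h' | h' <;> simp at h' <;> omega)
    -- coordinate-2 labels are all 1
    have hc2 : ∀ u ∈ Vnm n m, u.1 = 2 → ℓ u = 1 := by
      intro u hu hu2
      have hzadj := S.ladd hzV hu (fst_ne (by simp <;> omega)) (by
        show (2 ≤ n + u.1 ∧ n + u.1 ≤ n) ∨ n + u.1 = n + 2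
        right; omega)
      have hdadj := S.ladd hdV hu (fst_ne (by simp <;> omega)) (by
        show (2 ≤ (n-2) + u.1 ∧ (n-2) + u.1 ≤ n) ∨ (n-2) + u.1 = n + 2
        left; omega)
      have h1 := htop _ hzadj
      have h2 := htop _ hdadj
      have hup := S.lpos hu
      rw [hXBA] at h1 h2
      rcases hZDv with ⟨hZv, hDv⟩ | ⟨hZv, hDv⟩ <;> rw [hZv] at h1 <;> rw [hDv] at h2 <;> omega
    -- value hunt helper : the label of any vertex with coordinate in [5, n-3]
    -- is not adjacent to z nor d
    have hz5 : ∀ w ∈ Vnm n m, 5 ≤ w.1 → w.1 + 3 ≤ n → ¬ lam n m ℓ (ℓ (n,0) + ℓ w) := by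
      intro w hw h5 h3
      exact S.lnot hzV hw (fst_ne (by simp <;> omega))
        (by intro hmem; rcases S.Sn_elim hmem with h' | h' <;> simp at h' <;> omega)
    have hd5 : ∀ w ∈ Vnm n m, 5 ≤ w.1 → w.1 + 3 ≤ n → ¬ lam n m ℓ (ℓ (n-2,0) + ℓ w) := by
      intro w hw h5 h3
      exact S.lnot hdV hw (fst_ne (by simp <;> omega))
        (by intro hmem; rcases S.Sn_elim hmem with h' | h' <;> simp at h' <;> omega)
    rcases hZDv with ⟨hZv, hDv⟩ | ⟨hZv, hDv⟩
    · -- P3a : Z = B-1, D = B-2 ; show coordinate-4 ≡ 5, then value 4 has no carrier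
      have hB6' : ℓ (n-1,0) ≠ 6 := by
        intro h
        apply hzd
        have : ℓ (n,0) + ℓ (n-2,0) = ℓ (n+2,0) := by rw [hXBA]; omega
        rw [this]; exact hlamX
      have hc4 : ∀ u ∈ Vnm n m, u.1 = 4 → ℓ u = 5 := by
        intro u hu hu4
        have hdadj := S.ladd hdV hu (fst_ne (by simp <;> omega)) (by
          show (2 ≤ (n-2) + u.1 ∧ (n-2) + u.1 ≤ n) ∨ (n-2) + u.1 = n + 2
          right; omega)
        have h2u : 2 ≤ ℓ u := S.L3 hu (by omega) (by omega)
        have h1 := htop _ hdadj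
        rw [hXBA, hDv] at h1
        -- ℓ u = 2 or ℓ u = 5
        have : ℓ u = 2 ∨ ℓ u = 5 := by omega
        rcases this with h | h
        · exfalso
          -- e' = (n-3,0) is non-adjacent to u but ℓ e' + 2 lands in the interval
          have heV : ((n-3,0) : ℕ×ℕ) ∈ Vnm n m := S.vmem (by omega)
          have helow := hlow _ heV (by simp <;> omega) (by simp <;> omega)
          have he2 : 2 ≤ ℓ (n-3,0) := S.L3 heV (by simp <;> omega) (by simp <;> omega)
          apply S.lnot heV hu (fst_ne (by simp <;> omega)) (by
            intro hmem; rcases S.Sn_elim hmem with h' | h' <;> simp at h' <;> omega)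
          rw [h]
          exact hint _ (by omega) (by omega)
        · exact h
      -- value 4 has no carrier
      obtain ⟨w, hw, hw4⟩ := hint 4 (by omega) (by omega)
      rcases S.Sn_elim hw.1 with hc | hc
      · by_cases h2 : w.1 = 2
        · have := hc2 w hw h2; omega
        by_cases h3 : w.1 = 3
        · have := hcoord3 w hw h3; rw [hXBA] at this; omega
        by_cases h4 : w.1 = 4
        · have := hc4 w hw h4; omega
        by_cases hn2 : w.1 = n - 2
        · rw [S.pin hw hn2 (by omega)] at hw4; omega
        by_cases hn1 : w.1 = n - 1
        · rw [S.pin hw hn1 (by omega)] at hw4; omega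
        by_cases hnn : w.1 = n
        · rw [S.pin hw hnn (by omega)] at hw4; omega
        · -- w.1 ∈ [5, n-3] : z-rule contradiction
          apply hz5 w hw (by omega) (by omega)
          rw [hw4, hZv]
          have : ℓ (n,0) + 4 = ℓ (n+2,0) := by rw [hXBA, hZv]; omega
          rw [hZv] at this; rw [this]; exact hlamX
      · rw [S.pin hw hc (by omega)] at hw4
        rw [hXBA] at hw4; omega
    · -- P3b : Z = B-2, D = B-1 ; coordinate-4 ≡ 4, then value 5
      have hc4 : ∀ u ∈ Vnm n m, u.1 = 4 → ℓ u = 4 := by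
        intro u hu hu4
        have hdadj := S.ladd hdV hu (fst_ne (by simp <;> omega)) (by
          show (2 ≤ (n-2) + u.1 ∧ (n-2) + u.1 ≤ n) ∨ (n-2) + u.1 = n + 2
          right; omega)
        have h2u : 2 ≤ ℓ u := S.L3 hu (by omega) (by omega)
        have h1 := htop _ hdadj
        rw [hXBA, hDv] at h1
        omega
      have hB7 : 7 ≤ ℓ (n-1,0) := by
        have := hc4 _ ha4V rfl
        have := hlow _ ha4V (by simp) (by simp <;> omega)
        omega
      -- value 5 hunt
      obtain ⟨w, hw, hw5⟩ := hint 5 (by omega) (by omega)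
      have hwz : w.1 = n → ℓ (n-1,0) = 7 := by
        intro hwn; rw [S.pin hw hwn (by omega)] at hw5; omega
      rcases S.Sn_elim hw.1 with hc | hc
      · by_cases h2 : w.1 = 2
        · have := hc2 w hw h2; omega
        by_cases h3 : w.1 = 3
        · have := hcoord3 w hw h3; rw [hXBA] at this; omega
        by_cases h4 : w.1 = 4
        · have := hc4 w hw h4; omega
        by_cases hn2 : w.1 = n - 2
        · rw [S.pin hw hn2 (by omega)] at hw5; omega
        by_cases hn1 : w.1 = n - 1
        · rw [S.pin hw hn1 (by omega)] at hw5; omega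
        by_cases hnn : w.1 = n
        · -- B = 7 : all coordinates in [5, n-3] carry 3, then uniformity kill
          have hB7' := hwz hnn
          have hval : ∀ u ∈ Vnm n m, 5 ≤ u.1 → u.1 + 3 ≤ n → ℓ u = 3 := by
            intro u hu h5 h3u
            have h2u : 2 ≤ ℓ u := S.L3 hu (by omega) (by omega)
            have hlu := hlow u hu (by omega) (by omega)
            have hnz := hz5 u hu h5 h3u
            have hnd := hd5 u hu h5 h3u
            -- ℓ u ∈ [2,4] ; exclude 2 (z-rule gives B) and 4 (d-rule gives X)
            have hu2 : ℓ u ≠ 2 := by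
              intro h
              apply hnz; rw [h, hZv]
              have : ℓ (n,0) + 2 = ℓ (n-1,0) := by omega
              rw [hZv] at this; rw [this]; exact hlamB
            have hu4 : ℓ u ≠ 4 := by
              intro h
              apply hnd; rw [h, hDv]
              have : ℓ (n-2,0) + 4 = ℓ (n+2,0) := by rw [hXBA]; omega
              rw [hDv] at this; rw [this]; exact hlamX
            omega
          have h10V : ((10,0) : ℕ×ℕ) ∈ Vnm n m := S.vmem (by omega)
          have hm10V : ((n-10,0) : ℕ×ℕ) ∈ Vnm n m := S.vmem (by omega)
          have hm9V : ((n-9,0) : ℕ×ℕ) ∈ Vnm n m := S.vmem (by omega)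
          have e1 := hval _ h10V (by simp <;> omega) (by simp <;> omega)
          have e2 := hval _ hm10V (by simp <;> omega) (by simp <;> omega)
          have e3 := hval _ hm9V (by simp <;> omega) (by simp <;> omega)
          have hadj := S.ladd h10V hm10V (fst_ne (by simp <;> omega)) (by
            show (2 ≤ 10 + (n-10) ∧ 10 + (n-10) ≤ n) ∨ 10 + (n-10) = n + 2
            left; omega)
          apply S.lnot h10V hm9V (fst_ne (by simp <;> omega)) (by
            intro hmem; rcases S.Sn_elim hmem with h' | h' <;> simp at h' <;> omega)
          rw [e1, e3]
          rwa [e1, e2] at hadj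
        · -- w.1 ∈ [5, n-3] : z-rule contradiction
          apply hz5 w hw (by omega) (by omega)
          rw [hw5, hZv]
          have : ℓ (n,0) + 5 = ℓ (n+2,0) := by rw [hXBA, hZv]; omega
          rw [hZv] at this; rw [this]; exact hlamX
      · rw [S.pin hw hc (by omega)] at hw5
        rw [hXBA] at hw5; omega
end OneNot
namespace OneNot
variable {n : ℕ} {m : ℕ → ℕ} {ℓ : ℕ × ℕ → ℕ} {v : ℕ × ℕ}

/-- distinct low coordinates have distinct labels -/
theorem Setup.inj (S : Setup n m ℓ v) {c c' : ℕ} (h5 : 5 ≤ c) (hlt : c < c')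
    (h19 : c' ≤ 19) : ℓ (c,0) ≠ ℓ (c',0) := by
  have hn := S.hn
  intro he
  have hcV : ((c,0) : ℕ×ℕ) ∈ Vnm n m := S.vmem (by omega)
  have hcV' : ((c',0) : ℕ×ℕ) ∈ Vnm n m := S.vmem (by omega)
  have hrV : ((n+1-c',0) : ℕ×ℕ) ∈ Vnm n m := S.vmem (by omega)
  have h1 : lam n m ℓ (ℓ (c,0) + ℓ (n+1-c',0)) :=
    S.ladd hcV hrV (fst_ne (by simp <;> omega)) (by
      show (2 ≤ c + (n+1-c') ∧ c + (n+1-c') ≤ n) ∨ c + (n+1-c') = n + 2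
      omega)
  have h2 : ¬ lam n m ℓ (ℓ (c',0) + ℓ (n+1-c',0)) :=
    S.lnot hcV' hrV (fst_ne (by simp <;> omega)) (by
      intro hmem; rcases S.Sn_elim hmem with h' | h' <;> simp at h' <;> omega)
  rw [he] at h1
  exact h2 h1

/-- the five vertices (10,0) … (14,0) have pairwise distinct labels -/
theorem Setup.inj5 (S : Setup n m ℓ v) :
    ℓ ((10:ℕ),(0:ℕ)) ≠ ℓ ((11:ℕ),(0:ℕ)) ∧ ℓ ((10:ℕ),(0:ℕ)) ≠ ℓ ((12:ℕ),(0:ℕ)) ∧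
    ℓ ((10:ℕ),(0:ℕ)) ≠ ℓ ((13:ℕ),(0:ℕ)) ∧ ℓ ((10:ℕ),(0:ℕ)) ≠ ℓ ((14:ℕ),(0:ℕ)) ∧
    ℓ ((11:ℕ),(0:ℕ)) ≠ ℓ ((12:ℕ),(0:ℕ)) ∧ ℓ ((11:ℕ),(0:ℕ)) ≠ ℓ ((13:ℕ),(0:ℕ)) ∧
    ℓ ((11:ℕ),(0:ℕ)) ≠ ℓ ((14:ℕ),(0:ℕ)) ∧ ℓ ((12:ℕ),(0:ℕ)) ≠ ℓ ((13:ℕ),(0:ℕ)) ∧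
    ℓ ((12:ℕ),(0:ℕ)) ≠ ℓ ((14:ℕ),(0:ℕ)) ∧ ℓ ((13:ℕ),(0:ℕ)) ≠ ℓ ((14:ℕ),(0:ℕ)) :=
  ⟨S.inj (by norm_num) (by norm_num) (by norm_num),
   S.inj (by norm_num) (by norm_num) (by norm_num),
   S.inj (by norm_num) (by norm_num) (by norm_num),
   S.inj (by norm_num) (by norm_num) (by norm_num),
   S.inj (by norm_num) (by norm_num) (by norm_num),
   S.inj (by norm_num) (by norm_num) (by norm_num),
   S.inj (by norm_num) (by norm_num) (by norm_num),
   S.inj (by norm_num) (by norm_num) (by norm_num),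
   S.inj (by norm_num) (by norm_num) (by norm_num),
   S.inj (by norm_num) (by norm_num) (by norm_num)⟩

/-- a coordinate-3 vertex and a vertex with coordinate in [5,n-3] cannot share a label. -/
theorem Setup.bpair (S : Setup n m ℓ v) {w u : ℕ×ℕ} (hw : w ∈ Vnm n m) (hw3 : w.1 = 3)
    (hu : u ∈ Vnm n m) (h5 : 5 ≤ u.1) (hun : u.1 + 3 ≤ n) (he : ℓ w = ℓ u) : False := by
  have hn := S.hn
  have hbV : ((n-1,0) : ℕ×ℕ) ∈ Vnm n m := S.vmem (by omega)
  have h1 : lam n m ℓ (ℓ (n-1,0) + ℓ w) :=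
    S.ladd hbV hw (fst_ne (by simp <;> omega)) (by
      show (2 ≤ (n-1) + w.1 ∧ (n-1) + w.1 ≤ n) ∨ (n-1) + w.1 = n + 2
      right; omega)
  have h2 : ¬ lam n m ℓ (ℓ (n-1,0) + ℓ u) :=
    S.lnot hbV hu (fst_ne (by simp <;> omega)) (by
      intro hmem; rcases S.Sn_elim hmem with h' | h' <;> omega)
  rw [he] at h1
  exact h2 h1

/-- given a vertex y with coordinate in [3, n-3] whose neighbours all satisfy P(label),
we extract a coordinate-3 neighbour and a neighbour with coordinate in [5, n-3]. -/
theorem Setup.twoPartners (S : Setup n m ℓ v) {y : ℕ×ℕ} (P : ℕ → Prop)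
    (hy : y ∈ Vnm n m) (h3 : 3 ≤ y.1) (hn3 : y.1 + 3 ≤ n)
    (hnb : ∀ e ∈ Vnm n m, e ≠ y → y.1 + e.1 ∈ Sn n → P (ℓ e)) :
    ∃ w ∈ Vnm n m, w.1 = 3 ∧ P (ℓ w) ∧
      ∃ u ∈ Vnm n m, 5 ≤ u.1 ∧ u.1 + 3 ≤ n ∧ P (ℓ u) := by
  have hn := S.hn
  have ha3V : ((3,0) : ℕ×ℕ) ∈ Vnm n m := S.vmem (by omega)
  have ha3V' : ((3,1) : ℕ×ℕ) ∈ Vnm n m := S.vmem1 (by omega) (by omega)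
  -- the coordinate-3 partner
  have hW : ∃ w ∈ Vnm n m, w.1 = 3 ∧ P (ℓ w) := by
    by_cases h30 : y = ((3,0) : ℕ×ℕ)
    · exact ⟨(3,1), ha3V', rfl, hnb _ ha3V' (by rw [h30]; simp) (by
        show (2 ≤ y.1 + 3 ∧ y.1 + 3 ≤ n) ∨ y.1 + 3 = n + 2; omega)⟩
    · exact ⟨(3,0), ha3V, rfl, hnb _ ha3V (fun h => h30 h.symm) (by
        show (2 ≤ y.1 + 3 ∧ y.1 + 3 ≤ n) ∨ y.1 + 3 = n + 2; omega)⟩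
  obtain ⟨w, hwV, hw3, hPw⟩ := hW
  refine ⟨w, hwV, hw3, hPw, ?_⟩
  -- the second partner with coordinate in [5, n-3]
  by_cases hy5 : y.1 = 5
  · have h6V : ((6,0) : ℕ×ℕ) ∈ Vnm n m := S.vmem (by omega)
    exact ⟨(6,0), h6V, by norm_num, by simp; omega, hnb _ h6V (fst_ne (by simp <;> omega)) (by
      show (2 ≤ y.1 + 6 ∧ y.1 + 6 ≤ n) ∨ y.1 + 6 = n + 2; omega)⟩
  by_cases hy55 : y.1 + 5 ≤ n
  · have h5V : ((5,0) : ℕ×ℕ) ∈ Vnm n m := S.vmem (by omega)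
    exact ⟨(5,0), h5V, by norm_num, by simp; omega, hnb _ h5V (fst_ne (by simp <;> omega)) (by
      show (2 ≤ y.1 + 5 ∧ y.1 + 5 ≤ n) ∨ y.1 + 5 = n + 2; omega)⟩
  · -- y.1 ∈ {n-4, n-3} : take coordinate n+2-y.1 ∈ {6,5}
    have hcV : ((n+2-y.1,0) : ℕ×ℕ) ∈ Vnm n m := S.vmem (by omega)
    exact ⟨(n+2-y.1,0), hcV, by simp; omega, by simp; omega,
      hnb _ hcV (fst_ne (by simp <;> omega)) (by
        show (2 ≤ y.1 + (n+2-y.1) ∧ y.1 + (n+2-y.1) ≤ n) ∨ y.1 + (n+2-y.1) = n + 2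
        right; omega)⟩
end OneNot
namespace OneNot
variable {n : ℕ} {m : ℕ → ℕ} {ℓ : ℕ × ℕ → ℕ} {v : ℕ × ℕ}

/-- context for CASE Q -/
structure QCtx (n : ℕ) (m : ℕ → ℕ) (ℓ : ℕ × ℕ → ℕ) : Prop where
  hZX : ℓ (n,0) + 1 = ℓ (n+2,0)
  hc2 : ∀ u ∈ Vnm n m, u.1 = 2 → ℓ u = 1
  hbd : ∀ u ∈ Vnm n m, u ≠ (n+2,0) → ℓ u ≤ ℓ (n,0)

/-- no vertex with coordinate in [3,n-3] can have label X - 2 -/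
theorem Setup.QI (S : Setup n m ℓ v) {y : ℕ×ℕ} (hy : y ∈ Vnm n m) (h3 : 3 ≤ y.1)
    (hn3 : y.1 + 3 ≤ n) : ℓ y + 2 ≠ ℓ (n+2,0) := by
  have hn := S.hn
  intro hX
  have hnb : ∀ e ∈ Vnm n m, e ≠ y → y.1 + e.1 ∈ Sn n → ℓ e ≤ 2 := by
    intro e he hey hs
    have := S.ladd hy he (Ne.symm hey) hs
    have h1 := S.Xmax.1 _ this
    omega
  obtain ⟨w, hwV, hw3, hPw, u, huV, h5, hun, hPu⟩ :=
    S.twoPartners (fun t => t ≤ 2) hy h3 hn3 hnb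
  have hw2 : 2 ≤ ℓ w := S.L3 hwV (by omega) (by omega)
  have hu2 : 2 ≤ ℓ u := S.L3 huV (by omega) (by omega)
  exact S.bpair hwV hw3 huV h5 hun (by omega)

theorem Setup.Q2 (S : Setup n m ℓ v) (Q : QCtx n m ℓ) :
    ℓ (n-1,0) + 3 ≤ ℓ (n+2,0) := by
  have hn := S.hn
  have hbV : ((n-1,0) : ℕ×ℕ) ∈ Vnm n m := S.vmem (by omega)
  have hzV : ((n,0) : ℕ×ℕ) ∈ Vnm n m := S.vmem (by omega)
  have hxV : ((n+2,0) : ℕ×ℕ) ∈ Vnm n m := S.vmem (by omega)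
  have h1 : ℓ (n-1,0) ≤ ℓ (n,0) := Q.hbd _ hbV (fst_ne (by simp <;> omega))
  have h2 := Q.hZX
  have h3 : ℓ (n-1,0) + 1 ≠ ℓ (n+2,0) := by
    intro h; exact S.notlam_B1 (h ▸ ⟨_, hxV, rfl⟩)
  have h4 : ℓ (n-1,0) + 1 ≠ ℓ (n,0) := by
    intro h; exact S.notlam_B1 (h ▸ ⟨_, hzV, rfl⟩)
  omega

/-- only z (and x) can carry the value X - 1 -/
theorem Setup.Q1 (S : Setup n m ℓ v) (Q : QCtx n m ℓ) {u : ℕ×ℕ} (hu : u ∈ Vnm n m)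
    (he : ℓ u + 1 = ℓ (n+2,0)) : u.1 = n ∨ u.1 = n + 2 := by
  have hn := S.hn
  have hzV : ((n,0) : ℕ×ℕ) ∈ Vnm n m := S.vmem (by omega)
  have hZ2 : 2 ≤ ℓ (n,0) := S.L3 hzV (by simp; omega) (by simp)
  rcases S.Sn_elim hu.1 with hc | hc
  · rcases Nat.lt_or_ge u.1 3 with h2 | h3
    · -- u.1 = 2
      exfalso
      have e1 := Q.hc2 u hu (by omega)
      have e2 := Q.hZX
      omega
    rcases Nat.lt_or_ge u.1 (n-1) with hlt | hge
    · -- u.1 ∈ [3, n-2] : all neighbours would have label ≤ 1, impossible for coord 3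
      exfalso
      have hnb : ∀ e ∈ Vnm n m, e ≠ u → u.1 + e.1 ∈ Sn n → ℓ e ≤ 1 := by
        intro e heV hey hs
        have := S.ladd hu heV (Ne.symm hey) hs
        have h1 := S.Xmax.1 _ this
        omega
      by_cases hd : u.1 = n - 2
      · have ha4V : ((4,0) : ℕ×ℕ) ∈ Vnm n m := S.vmem (by omega)
        have := hnb _ ha4V (fst_ne (by simp <;> omega)) (by
          show (2 ≤ u.1 + 4 ∧ u.1 + 4 ≤ n) ∨ u.1 + 4 = n + 2
          right; omega)
        have := S.L3 ha4V (by simp) (by simp; omega)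
        omega
      · obtain ⟨w, hwV, hw3, hPw, -⟩ :=
          S.twoPartners (fun t => t ≤ 1) hu (by omega) (by omega) hnb
        have := S.L3 hwV (by omega) (by omega)
        omega
    · by_cases hb : u.1 = n - 1
      · exfalso
        have hub : u = ((n-1,0) : ℕ×ℕ) := S.pin hu hb (by omega)
        have := S.Q2 Q
        rw [hub] at he
        omega
      · left; omega
  · right; exact hc
end OneNot
namespace OneNot
variable {n : ℕ} {m : ℕ → ℕ} {ℓ : ℕ × ℕ → ℕ} {v : ℕ × ℕ}

theorem Setup.caseQb (S : Setup n m ℓ v) (Q : QCtx n m ℓ)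
    (hQb : ∀ u ∈ Vnm n m, 3 ≤ u.1 → u.1 + 1 ≤ n → u ≠ (n-1,0) → ℓ u < ℓ (n-1,0)) :
    False := by
  have hn := S.hn
  have hbV : ((n-1,0) : ℕ×ℕ) ∈ Vnm n m := S.vmem (by omega)
  have hxV : ((n+2,0) : ℕ×ℕ) ∈ Vnm n m := S.vmem (by omega)
  have hzV : ((n,0) : ℕ×ℕ) ∈ Vnm n m := S.vmem (by omega)
  have hdV : ((n-2,0) : ℕ×ℕ) ∈ Vnm n m := S.vmem (by omega)
  have ha3V : ((3,0) : ℕ×ℕ) ∈ Vnm n m := S.vmem (by omega)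
  have hlamX : lam n m ℓ (ℓ (n+2,0)) := ⟨_, hxV, rfl⟩
  have hlamB : lam n m ℓ (ℓ (n-1,0)) := ⟨_, hbV, rfl⟩
  have hlamZ : lam n m ℓ (ℓ (n,0)) := ⟨_, hzV, rfl⟩
  have hZX := Q.hZX
  have hQ2 := S.Q2 Q
  have hB2 : 2 ≤ ℓ (n-1,0) := S.L3 hbV (by simp <;> omega) (by simp <;> omega)
  have hA2 : 2 ≤ ℓ (3,0) := S.L3 ha3V (by simp) (by simp <;> omega)
  have hD2 : 2 ≤ ℓ (n-2,0) := S.L3 hdV (by simp <;> omega) (by simp <;> omega)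
  have hAB : ℓ (3,0) < ℓ (n-1,0) :=
    hQb _ ha3V (by simp) (by simp <;> omega) (fst_ne (by simp <;> omega))
  have hDB : ℓ (n-2,0) < ℓ (n-1,0) :=
    hQb _ hdV (by simp <;> omega) (by simp <;> omega) (fst_ne (by simp <;> omega))
  -- top classification
  have htop : ∀ t, lam n m ℓ t → t ≤ ℓ (n-1,0) ∨ t = ℓ (n,0) ∨ t = ℓ (n+2,0) := by
    rintro t ⟨w, hw, rfl⟩
    rcases S.Sn_elim hw.1 with hc | hc
    · by_cases h2 : w.1 = 2
      · left; have := Q.hc2 w hw h2; omega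
      by_cases hnn : w.1 = n
      · right; left; rw [S.pin hw hnn (by omega)]
      by_cases hwb : w = ((n-1,0) : ℕ×ℕ)
      · left; rw [hwb]
      · left; exact le_of_lt (hQb w hw (by omega) (by omega) hwb)
    · right; right; rw [S.pin hw hc (by omega)]
  -- attained interval [A+1, B]
  have hint : ∀ r, ℓ (3,0) + 1 ≤ r → r ≤ ℓ (n-1,0) → lam n m ℓ r := by
    have hA1 : lam n m ℓ (ℓ (3,0) + 1) := by
      have hne : ((3,0):ℕ×ℕ) ≠ v := by
        intro h; have := S.hv1; rw [← h] at this; omega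
      have := S.ladd ha3V S.hvV hne (by
        show (2 ≤ 3 + v.1 ∧ 3 + v.1 ≤ n) ∨ 3 + v.1 = n + 2
        rw [S.hv2]; omega)
      rwa [S.hv1] at this
    obtain ⟨s, hs, hle, hintv⟩ := S.INT hA1 (by omega)
    rcases hs with hsB | hsX
    · intro r h1 h2; exact hintv r h1 (by omega)
    · exfalso
      exact S.notlam_B1 (hintv _ (by omega) (by omega))
  -- coordinate-3 labels
  have hc3 : ∀ w ∈ Vnm n m, w.1 = 3 →
      ℓ (n-1,0) + ℓ w = ℓ (n,0) ∨ ℓ (n-1,0) + ℓ w = ℓ (n+2,0) := by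
    intro w hw hw3
    have hadj := S.ladd hbV hw (fst_ne (by simp <;> omega)) (by
      show (2 ≤ (n-1) + w.1 ∧ (n-1) + w.1 ≤ n) ∨ (n-1) + w.1 = n + 2
      right; omega)
    have hwl := S.L3 hw (by omega) (by omega)
    rcases htop _ hadj with h | h | h
    · omega
    · left; exact h
    · right; exact h
  rcases hc3 _ ha3V rfl with hBA | hBA
  · -- CASE Qb1' : B + A = Z, X = B + A + 1
    have class4 : ∀ u ∈ Vnm n m, 4 ≤ u.1 → u.1 + 3 ≤ n → ℓ u + ℓ (3,0) ≤ ℓ (n-1,0) := by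
      intro u hu h4 h3
      have hadj := S.ladd hu ha3V (fst_ne (by simp <;> omega)) (by
        show (2 ≤ u.1 + 3 ∧ u.1 + 3 ≤ n) ∨ u.1 + 3 = n + 2; omega)
      have hub := hQb u hu (by omega) (by omega) (fst_ne (by omega))
      rcases htop _ hadj with h | h | h <;> omega
    have excl : ∀ u ∈ Vnm n m, 4 ≤ u.1 → u.1 + 3 ≤ n →
        ℓ u ≠ ℓ (3,0) ∧ ℓ u ≠ ℓ (3,0) + 1 := by
      intro u hu h4 h3
      have hnadj := S.lnot hbV hu (fst_ne (by simp <;> omega)) (by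
        intro hmem; rcases S.Sn_elim hmem with h' | h' <;> simp at h' <;> omega)
      constructor
      · intro h; rw [h, hBA] at hnadj; exact hnadj hlamZ
      · intro h; apply hnadj; rw [h]
        have : ℓ (n-1,0) + (ℓ (3,0) + 1) = ℓ (n+2,0) := by omega
        rw [this]; exact hlamX
    have carr1 : ∀ t, ℓ (3,0) + 1 ≤ t → ℓ (n-1,0) + 1 ≤ t + ℓ (3,0) →
        t + 1 ≤ ℓ (n-1,0) → t = ℓ (3,0) + 1 ∨ t = ℓ (n-2,0) := by
      intro t h1 h2 h3
      obtain ⟨w, hw, rfl⟩ := hint t h1 (by omega)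
      rcases S.Sn_elim hw.1 with hc | hc
      · by_cases hw2 : w.1 = 2
        · have := Q.hc2 w hw hw2; omega
        by_cases hw3 : w.1 = 3
        · left
          rcases hc3 w hw hw3 with h | h <;> omega
        by_cases hwn : w.1 = n
        · exfalso; rw [S.pin hw hwn (by omega)] at h3; omega
        by_cases hwn1 : w.1 = n - 1
        · exfalso; rw [S.pin hw hwn1 (by omega)] at h3; omega
        by_cases hwn2 : w.1 = n - 2
        · right; rw [S.pin hw hwn2 (by omega)]
        · exfalso
          have := class4 w hw (by omega) (by omega)
          omega
      · exfalso; rw [S.pin hw hc (by omega)] at h3; omega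
    have h10V : ((10,0) : ℕ×ℕ) ∈ Vnm n m := S.vmem (by omega)
    have h11V : ((11,0) : ℕ×ℕ) ∈ Vnm n m := S.vmem (by omega)
    have h12V : ((12,0) : ℕ×ℕ) ∈ Vnm n m := S.vmem (by omega)
    have e10 := class4 _ h10V (by simp) (by simp <;> omega)
    have e11 := class4 _ h11V (by simp) (by simp <;> omega)
    have e12 := class4 _ h12V (by simp) (by simp <;> omega)
    have x10 := excl _ h10V (by simp) (by simp <;> omega)
    have x11 := excl _ h11V (by simp) (by simp <;> omega)
    have x12 := excl _ h12V (by simp) (by simp <;> omega)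
    have l10 : 2 ≤ ℓ (10,0) := S.L3 h10V (by simp) (by simp <;> omega)
    have l11 : 2 ≤ ℓ (11,0) := S.L3 h11V (by simp) (by simp <;> omega)
    have l12 : 2 ≤ ℓ (12,0) := S.L3 h12V (by simp) (by simp <;> omega)
    obtain ⟨i1, i2, -, -, i5, -⟩ := S.inj5
    by_cases hA3 : ℓ (3,0) ≤ 3
    · by_cases hA2' : ℓ (3,0) = 2
      · -- A = 2
        by_cases hB4 : ℓ (n-1,0) ≤ 4
        · rw [hA2'] at e10 x10; omega
        · have hD := carr1 (ℓ (n-1,0) - 1) (by omega) (by omega) (by omega)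
          have hDv : ℓ (n-2,0) = ℓ (n-1,0) - 1 := by omega
          have c3eq2 : ∀ w ∈ Vnm n m, w.1 = 3 → ℓ w = 2 := by
            intro w hw hw3
            have hwl := S.L3 hw (by omega) (by omega)
            rcases hc3 w hw hw3 with h | h
            · omega
            · exfalso
              have hnadj := S.lnot hdV hw (fst_ne (by simp <;> omega)) (by
                intro hmem; rcases S.Sn_elim hmem with h' | h' <;> omega)
              apply hnadj
              have : ℓ (n-2,0) + ℓ w = ℓ (n,0) := by omega
              rw [this]; exact hlamZ
          -- value 3 has no carrier
          obtain ⟨w, hw, hw3v⟩ := hint 3 (by omega) (by omega)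
          rcases S.Sn_elim hw.1 with hc | hc
          · by_cases hw2 : w.1 = 2
            · have := Q.hc2 w hw hw2; omega
            by_cases hw3 : w.1 = 3
            · have := c3eq2 w hw hw3; omega
            by_cases hwn : w.1 = n
            · rw [S.pin hw hwn (by omega)] at hw3v; omega
            by_cases hwn1 : w.1 = n - 1
            · rw [S.pin hw hwn1 (by omega)] at hw3v; omega
            by_cases hwn2 : w.1 = n - 2
            · rw [S.pin hw hwn2 (by omega)] at hw3v; omega
            · have := excl w hw (by omega) (by omega)
              rw [hA2'] at this; omega
          · rw [S.pin hw hc (by omega)] at hw3v; omega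
      · -- A = 3
        have hA3v : ℓ (3,0) = 3 := by omega
        by_cases hB5 : ℓ (n-1,0) ≤ 5
        · rw [hA3v] at e10 e11 x10 x11; omega
        · by_cases hB7 : 7 ≤ ℓ (n-1,0)
          · have c1 := carr1 (ℓ (n-1,0) - 1) (by omega) (by omega) (by omega)
            have c2 := carr1 (ℓ (n-1,0) - 2) (by omega) (by omega) (by omega)
            omega
          · -- B = 6, D = 5 : all coords in [4,n-3] are 2
            have hB6 : ℓ (n-1,0) = 6 := by omega
            omega
    · -- A ≥ 4
      by_cases hBA4 : ℓ (n-1,0) ≤ ℓ (3,0) + 3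
      · omega
      · have c1 := carr1 (ℓ (n-1,0) - 1) (by omega) (by omega) (by omega)
        have c2 := carr1 (ℓ (n-1,0) - 2) (by omega) (by omega) (by omega)
        have c3 := carr1 (ℓ (n-1,0) - 3) (by omega) (by omega) (by omega)
        omega
  · -- CASE Qb2' : B + A = X, Z = B + A - 1
    have hA3 : 3 ≤ ℓ (3,0) := by
      rcases Nat.lt_or_ge (ℓ (3,0)) 3 with h | h
      · exfalso
        apply S.notlam_B1
        have : ℓ (n-1,0) + 1 = ℓ (n,0) := by omega
        rw [this]; exact hlamZ
      · exact h
    have class4 : ∀ u ∈ Vnm n m, 4 ≤ u.1 → u.1 + 3 ≤ n →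
        ℓ u + ℓ (3,0) ≤ ℓ (n-1,0) ∨ ℓ u + ℓ (3,0) = ℓ (n,0) := by
      intro u hu h4 h3
      have hadj := S.ladd hu ha3V (fst_ne (by simp <;> omega)) (by
        show (2 ≤ u.1 + 3 ∧ u.1 + 3 ≤ n) ∨ u.1 + 3 = n + 2; omega)
      have hub := hQb u hu (by omega) (by omega) (fst_ne (by omega))
      rcases htop _ hadj with h | h | h
      · left; exact h
      · right; exact h
      · omega
    have excl : ∀ u ∈ Vnm n m, 4 ≤ u.1 → u.1 + 3 ≤ n →
        ℓ u + 1 ≠ ℓ (3,0) ∧ ℓ u ≠ ℓ (3,0) := by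
      intro u hu h4 h3
      have hnadj := S.lnot hbV hu (fst_ne (by simp <;> omega)) (by
        intro hmem; rcases S.Sn_elim hmem with h' | h' <;> simp at h' <;> omega)
      constructor
      · intro h; apply hnadj
        have : ℓ (n-1,0) + ℓ u = ℓ (n,0) := by omega
        rw [this]; exact hlamZ
      · intro h; rw [h] at hnadj; rw [hBA] at hnadj; exact hnadj hlamX
    have hDrange : ℓ (n-1,0) + 1 ≤ ℓ (n-2,0) + ℓ (3,0) ∧
        ℓ (n-2,0) + 2 ≤ ℓ (n-1,0) := by
      have hnadj := S.lnot hdV ha3V (fst_ne (by simp <;> omega)) (by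
        intro hmem; rcases S.Sn_elim hmem with h' | h' <;> simp at h' <;> omega)
      constructor
      · by_contra h
        exact hnadj (hint _ (by omega) (by omega))
      · have h1 : ℓ (n-2,0) + ℓ (3,0) ≠ ℓ (n,0) := by
          intro h; rw [h] at hnadj; exact hnadj hlamZ
        have h2 : ℓ (n-2,0) + ℓ (3,0) ≠ ℓ (n+2,0) := by
          intro h; rw [h] at hnadj; exact hnadj hlamX
        omega
    have carr2 : ∀ t, ℓ (3,0) + 1 ≤ t → ℓ (n-1,0) + 1 ≤ t + ℓ (3,0) →
        t + 2 ≤ ℓ (n-1,0) → t = ℓ (n-2,0) := by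
      intro t h1 h2 h3
      obtain ⟨w, hw, rfl⟩ := hint t h1 (by omega)
      rcases S.Sn_elim hw.1 with hc | hc
      · by_cases hw2 : w.1 = 2
        · have := Q.hc2 w hw hw2; omega
        by_cases hw3 : w.1 = 3
        · exfalso; rcases hc3 w hw hw3 with h | h <;> omega
        by_cases hwn : w.1 = n
        · exfalso; rw [S.pin hw hwn (by omega)] at h3; omega
        by_cases hwn1 : w.1 = n - 1
        · exfalso; rw [S.pin hw hwn1 (by omega)] at h3; omega
        by_cases hwn2 : w.1 = n - 2
        · rw [S.pin hw hwn2 (by omega)]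
        · exfalso
          rcases class4 w hw (by omega) (by omega) with h | h <;> omega
      · exfalso; rw [S.pin hw hc (by omega)] at h3; omega
    have h10V : ((10,0) : ℕ×ℕ) ∈ Vnm n m := S.vmem (by omega)
    have h11V : ((11,0) : ℕ×ℕ) ∈ Vnm n m := S.vmem (by omega)
    have h12V : ((12,0) : ℕ×ℕ) ∈ Vnm n m := S.vmem (by omega)
    have h13V : ((13,0) : ℕ×ℕ) ∈ Vnm n m := S.vmem (by omega)
    have e10 := class4 _ h10V (by simp) (by simp <;> omega)
    have e11 := class4 _ h11V (by simp) (by simp <;> omega)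
    have e12 := class4 _ h12V (by simp) (by simp <;> omega)
    have e13 := class4 _ h13V (by simp) (by simp <;> omega)
    have x10 := excl _ h10V (by simp) (by simp <;> omega)
    have x11 := excl _ h11V (by simp) (by simp <;> omega)
    have x12 := excl _ h12V (by simp) (by simp <;> omega)
    have x13 := excl _ h13V (by simp) (by simp <;> omega)
    have l10 : 2 ≤ ℓ (10,0) := S.L3 h10V (by simp) (by simp <;> omega)
    have l11 : 2 ≤ ℓ (11,0) := S.L3 h11V (by simp) (by simp <;> omega)
    have l12 : 2 ≤ ℓ (12,0) := S.L3 h12V (by simp) (by simp <;> omega)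
    have l13 : 2 ≤ ℓ (13,0) := S.L3 h13V (by simp) (by simp <;> omega)
    obtain ⟨i1, i2, i3, -, i5, i6, -, i8, -, -⟩ := S.inj5
    by_cases h2A : 2 * ℓ (3,0) ≤ ℓ (n-1,0)
    · by_cases hA4 : 4 ≤ ℓ (3,0)
      · have c1 := carr2 (ℓ (n-1,0) - 2) (by omega) (by omega) (by omega)
        have c2 := carr2 (ℓ (n-1,0) - 3) (by omega) (by omega) (by omega)
        omega
      · -- A = 3, B ≥ 6
        have hA3v : ℓ (3,0) = 3 := by omega
        have hDv : ℓ (n-2,0) = ℓ (n-1,0) - 2 :=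
          (carr2 (ℓ (n-1,0) - 2) (by omega) (by omega) (by omega)).symm ▸ rfl
        have excl45 : ∀ u ∈ Vnm n m, 5 ≤ u.1 → u.1 + 3 ≤ n →
            ℓ u ≠ 4 ∧ ℓ u ≠ 5 := by
          intro u hu h5 h3
          have hnadj := S.lnot hdV hu (fst_ne (by simp <;> omega)) (by
            intro hmem; rcases S.Sn_elim hmem with h' | h' <;> simp at h' <;> omega)
          constructor
          · intro h; apply hnadj
            have : ℓ (n-2,0) + ℓ u = ℓ (n,0) := by omega
            rw [this]; exact hlamZ
          · intro h; apply hnadj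
            have : ℓ (n-2,0) + ℓ u = ℓ (n+2,0) := by omega
            rw [this]; exact hlamX
        by_cases hB6 : ℓ (n-1,0) = 6
        · have y10 := excl45 _ h10V (by simp) (by simp <;> omega)
          rw [hA3v] at e10 x10
          omega
        · -- B ≥ 7 : find the carrier of B - 1 with coordinate in [5, n-3]
          have hB7 : 7 ≤ ℓ (n-1,0) := by omega
          obtain ⟨u, hu, huv⟩ := hint (ℓ (n-1,0) - 1) (by omega) (by omega)
          have hu5 : 5 ≤ u.1 ∧ u.1 + 3 ≤ n := by
            rcases S.Sn_elim hu.1 with hc | hc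
            · by_cases hw2 : u.1 = 2
              · exfalso; have := Q.hc2 u hu hw2; omega
              by_cases hw3 : u.1 = 3
              · exfalso; rcases hc3 u hu hw3 with h | h <;> omega
              by_cases hw4 : u.1 = 4
              · exfalso
                have hadj := S.ladd hdV hu (fst_ne (by simp <;> omega)) (by
                  show (2 ≤ (n-2) + u.1 ∧ (n-2) + u.1 ≤ n) ∨ (n-2) + u.1 = n + 2
                  right; omega)
                rcases htop _ hadj with h | h | h <;> omega
              by_cases hwn : u.1 = n
              · exfalso; rw [S.pin hu hwn (by omega)] at huv; omega
              by_cases hwn1 : u.1 = n - 1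
              · exfalso; rw [S.pin hu hwn1 (by omega)] at huv; omega
              by_cases hwn2 : u.1 = n - 2
              · exfalso; rw [S.pin hu hwn2 (by omega)] at huv; omega
              · omega
            · exfalso; rw [S.pin hu hc (by omega)] at huv; omega
          -- partner coordinate
          have hpart : ∃ c, 5 ≤ c ∧ c + 3 ≤ n ∧ c ≠ u.1 ∧
              (u.1 + c = n ∨ u.1 + c = n + 2) := by
            by_cases hc1 : u.1 + 5 ≤ n ∧ 2 * u.1 ≠ n
            · exact ⟨n - u.1, by omega, by omega, by omega, Or.inl (by omega)⟩
            by_cases hc2 : 2 * u.1 = n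
            · exact ⟨u.1 + 2, by omega, by omega, by omega, Or.inr (by omega)⟩
            · exact ⟨n + 2 - u.1, by omega, by omega, by omega, Or.inr (by omega)⟩
          obtain ⟨c, hc5, hc3n, hcu, hsum⟩ := hpart
          have hcV : ((c,0) : ℕ×ℕ) ∈ Vnm n m := S.vmem (by omega)
          have hcl : 2 ≤ ℓ (c,0) := S.L3 hcV (by simp <;> omega) (by simp <;> omega)
          have hcx := excl _ hcV (by simp <;> omega) (by simp <;> omega)
          have hcy := excl45 _ hcV (by simp <;> omega) (by simp <;> omega)
          have hc6 : 6 ≤ ℓ (c,0) := by rw [hA3v] at hcx; omega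
          have hadj := S.ladd hu hcV (fst_ne (by simp <;> omega)) (by
            show (2 ≤ u.1 + c ∧ u.1 + c ≤ n) ∨ u.1 + c = n + 2
            rcases hsum with h | h
            · left; omega
            · right; omega)
          rcases htop _ hadj with h | h | h <;> omega
    · by_cases hBA4 : ℓ (n-1,0) ≤ ℓ (3,0) + 3
      · -- labels in {2, 3, B-1} : four distinct vertices give a contradiction
        omega
      · have hA5 : 5 ≤ ℓ (3,0) := by omega
        have c1 := carr2 (ℓ (n-1,0) - 2) (by omega) (by omega) (by omega)
        have c2 := carr2 (ℓ (n-1,0) - 3) (by omega) (by omega) (by omega)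
        omega
end OneNot
namespace OneNot
variable {n : ℕ} {m : ℕ → ℕ} {ℓ : ℕ × ℕ → ℕ} {v : ℕ × ℕ}

set_option maxHeartbeats 1000000 in
theorem pigeon4 (x1 x2 x3 x4 s t X : ℕ)
    (h1 : x1 = 3 ∨ x1 + s = X ∨ x1 + t = X)
    (h2 : x2 = 3 ∨ x2 + s = X ∨ x2 + t = X)
    (h3 : x3 = 3 ∨ x3 + s = X ∨ x3 + t = X)
    (h4 : x4 = 3 ∨ x4 + s = X ∨ x4 + t = X)
    (d1 : x1 ≠ x2) (d2 : x1 ≠ x3) (d3 : x1 ≠ x4)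
    (d4 : x2 ≠ x3) (d5 : x2 ≠ x4) (d6 : x3 ≠ x4) : False := by omega

set_option maxHeartbeats 1000000 in
theorem bound5 (x1 x2 x3 x4 x5 L : ℕ)
    (g1 : 6 ≤ x1) (g2 : 6 ≤ x2) (g3 : 6 ≤ x3) (g4 : 6 ≤ x4) (g5 : 6 ≤ x5)
    (l1 : x1 + 3 ≤ L) (l2 : x2 + 3 ≤ L) (l3 : x3 + 3 ≤ L) (l4 : x4 + 3 ≤ L) (l5 : x5 + 3 ≤ L)
    (d1 : x1 ≠ x2) (d2 : x1 ≠ x3) (d3 : x1 ≠ x4) (d4 : x1 ≠ x5)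
    (d5 : x2 ≠ x3) (d6 : x2 ≠ x4) (d7 : x2 ≠ x5)
    (d8 : x3 ≠ x4) (d9 : x3 ≠ x5) (d10 : x4 ≠ x5) : 13 ≤ L := by omega

theorem Setup.caseQd (S : Setup n m ℓ v) (Q : QCtx n m ℓ)
    (hD : ℓ (n-2,0) + 2 = ℓ (n+2,0)) : False := by
  have hn := S.hn
  have hbV : ((n-1,0) : ℕ×ℕ) ∈ Vnm n m := S.vmem (by omega)
  have hxV : ((n+2,0) : ℕ×ℕ) ∈ Vnm n m := S.vmem (by omega)
  have hzV : ((n,0) : ℕ×ℕ) ∈ Vnm n m := S.vmem (by omega)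
  have hdV : ((n-2,0) : ℕ×ℕ) ∈ Vnm n m := S.vmem (by omega)
  have ha3V : ((3,0) : ℕ×ℕ) ∈ Vnm n m := S.vmem (by omega)
  have ha4V : ((4,0) : ℕ×ℕ) ∈ Vnm n m := S.vmem (by omega)
  have hlamX : lam n m ℓ (ℓ (n+2,0)) := ⟨_, hxV, rfl⟩
  have hlamB : lam n m ℓ (ℓ (n-1,0)) := ⟨_, hbV, rfl⟩
  have hlamZ : lam n m ℓ (ℓ (n,0)) := ⟨_, hzV, rfl⟩
  have hlamD : lam n m ℓ (ℓ (n-2,0)) := ⟨_, hdV, rfl⟩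
  have hZX := Q.hZX
  have hQ2 := S.Q2 Q
  -- coordinate 4 carries the label 2
  have hc4 : ∀ u ∈ Vnm n m, u.1 = 4 → ℓ u = 2 := by
    intro u hu h4
    have hadj := S.ladd hdV hu (fst_ne (by simp <;> omega)) (by
      show (2 ≤ (n-2) + u.1 ∧ (n-2) + u.1 ≤ n) ∨ (n-2) + u.1 = n + 2
      right; omega)
    have h1 := S.Xmax.1 _ hadj
    have h2 := S.L3 hu (by omega) (by omega)
    omega
  -- every vertex with coordinate in [3,n] other than 4 and n-2 has label ≥ 3
  have qd2 : ∀ u ∈ Vnm n m, 3 ≤ u.1 → u.1 ≤ n → u.1 ≠ n - 2 → u.1 ≠ 4 → 3 ≤ ℓ u := by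
    intro u hu h3 hun hd2 h4
    have hnadj := S.lnot hdV hu (fst_ne (by simp <;> omega)) (by
      intro hmem; rcases S.Sn_elim hmem with h' | h' <;> simp at h' <;> omega)
    have hp := S.lpos hu
    by_contra h
    rcases Nat.lt_or_ge (ℓ u) 2 with h1 | h1
    · apply hnadj
      have : ℓ (n-2,0) + ℓ u = ℓ (n,0) := by omega
      rw [this]; exact hlamZ
    · apply hnadj
      have : ℓ (n-2,0) + ℓ u = ℓ (n+2,0) := by omega
      rw [this]; exact hlamX
  have hB3 : 3 ≤ ℓ (n-1,0) := qd2 _ hbV (by simp <;> omega) (by simp <;> omega)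
    (by simp <;> omega) (by simp <;> omega)
  have hA3 : 3 ≤ ℓ (3,0) := qd2 _ ha3V (by simp) (by simp <;> omega)
    (by simp <;> omega) (by simp)
  -- B + 2 is not attained
  have hbna4 : ¬ lam n m ℓ (ℓ (n-1,0) + 2) := by
    have h2 := hc4 _ ha4V rfl
    have := S.lnot hbV ha4V (fst_ne (by simp <;> omega)) (by
      intro hmem; rcases S.Sn_elim hmem with h' | h' <;> simp at h' <;> omega)
    rwa [h2] at this
  -- strict bound on [3, n-3]
  have hstrict : ∀ u ∈ Vnm n m, 3 ≤ u.1 → u.1 + 3 ≤ n → ℓ u + 1 ≤ ℓ (n-1,0) := by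
    obtain ⟨M, ⟨y, hy, ⟨hy3, hyn⟩, hyM⟩, hbnd⟩ :=
      S.exists_max (fun u => 3 ≤ u.1 ∧ u.1 + 3 ≤ n) ⟨(3,0), ha3V, by simp, by simp; omega⟩
    have hMA : 3 ≤ M := by
      have := hA3
      have := hbnd _ ha3V ⟨by simp, by simp <;> omega⟩
      omega
    have hyv : y ≠ v := by
      intro h; rw [h, S.hv1] at hyM; omega
    have hM1 : lam n m ℓ (M + 1) := by
      have := S.ladd hy S.hvV hyv (by
        show (2 ≤ y.1 + v.1 ∧ y.1 + v.1 ≤ n) ∨ y.1 + v.1 = n + 2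
        rw [S.hv2]; omega)
      rwa [S.hv1, hyM] at this
    have key : M + 1 = ℓ (n-1,0) := by
      obtain ⟨w, hw, hwM⟩ := hM1
      rcases S.Sn_elim hw.1 with hc | hc
      · by_cases hw2 : w.1 = 2
        · exfalso; have := Q.hc2 w hw hw2; omega
        by_cases hw3 : w.1 + 3 ≤ n
        · exfalso
          have := hbnd w hw ⟨by omega, hw3⟩
          omega
        by_cases hwd : w.1 = n - 2
        · -- M = X - 3 : contradiction via twoPartners
          exfalso
          rw [S.pin hw hwd (by omega)] at hwM
          have hMX : M + 3 = ℓ (n+2,0) := by omega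
          have hnb : ∀ e ∈ Vnm n m, e ≠ y → y.1 + e.1 ∈ Sn n → ℓ e ≤ 3 := by
            intro e heV hey hs
            have := S.ladd hy heV (Ne.symm hey) hs
            have h1 := S.Xmax.1 _ this
            omega
          obtain ⟨w', hw'V, hw'3, hPw', u, huV, h5, hun, hPu⟩ :=
            S.twoPartners (fun t => t ≤ 3) hy (by omega) (by omega) hnb
          have e1 : 3 ≤ ℓ w' := qd2 _ hw'V (by omega) (by omega) (by omega) (by omega)
          have e2 : 3 ≤ ℓ u := qd2 _ huV (by omega) (by omega) (by omega) (by omega)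
          exact S.bpair hw'V hw'3 huV h5 hun (by omega)
        by_cases hwb : w.1 = n - 1
        · rw [S.pin hw hwb (by omega)] at hwM; omega
        by_cases hwz : w.1 = n
        · -- M = X - 2 : QI contradiction at y
          exfalso
          rw [S.pin hw hwz (by omega)] at hwM
          exact S.QI hy hy3 hyn (by omega)
        · omega
      · -- M = X - 1 : Q1 contradiction at y
        exfalso
        rw [S.pin hw hc (by omega)] at hwM
        have := S.Q1 Q hy (by omega)
        omega
    intro u hu h3 hn3
    have := hbnd u hu ⟨h3, hn3⟩
    omega
  -- the gap classification
  have gap : ∀ t, lam n m ℓ t → t ≤ ℓ (n-1,0) ∨ t + 2 = ℓ (n+2,0) ∨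
      t + 1 = ℓ (n+2,0) ∨ t = ℓ (n+2,0) := by
    rintro t ⟨w, hw, rfl⟩
    rcases S.Sn_elim hw.1 with hc | hc
    · by_cases hw2 : w.1 = 2
      · left; have := Q.hc2 w hw hw2; omega
      by_cases hw3 : w.1 + 3 ≤ n
      · left; have := hstrict w hw (by omega) hw3; omega
      by_cases hwd : w.1 = n - 2
      · right; left; rw [S.pin hw hwd (by omega)]; omega
      by_cases hwb : w.1 = n - 1
      · left; rw [S.pin hw hwb (by omega)]
      by_cases hwz : w.1 = n
      · right; right; left; rw [S.pin hw hwz (by omega)]; omega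
      · exfalso; omega
    · right; right; right; rw [S.pin hw hc (by omega)]
  -- X ≥ B + 5
  have hXB5 : ℓ (n-1,0) + 5 ≤ ℓ (n+2,0) := by
    have h1 : ℓ (n-2,0) ≠ ℓ (n-1,0) + 1 := by
      intro h; exact S.notlam_B1 (h ▸ hlamD)
    have h2 : ℓ (n-2,0) ≠ ℓ (n-1,0) + 2 := by
      intro h; exact hbna4 (h ▸ hlamD)
    omega
  -- coordinate-3 classification
  have hc3set : ∀ w ∈ Vnm n m, w.1 = 3 → ℓ (n-1,0) + ℓ w + 2 = ℓ (n+2,0) ∨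
      ℓ (n-1,0) + ℓ w + 1 = ℓ (n+2,0) ∨ ℓ (n-1,0) + ℓ w = ℓ (n+2,0) := by
    intro w hw hw3
    have hadj := S.ladd hbV hw (fst_ne (by simp <;> omega)) (by
      show (2 ≤ (n-1) + w.1 ∧ (n-1) + w.1 ≤ n) ∨ (n-1) + w.1 = n + 2
      right; omega)
    have hwl : 3 ≤ ℓ w := qd2 w hw (by omega) (by omega) (by omega) (by omega)
    rcases gap _ hadj with h | h | h | h <;> omega
  have amain := hc3set _ ha3V rfl
  -- attained interval [A+1, B]
  have hint : ∀ r, ℓ (3,0) + 1 ≤ r → r ≤ ℓ (n-1,0) → lam n m ℓ r := by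
    have hA1 : lam n m ℓ (ℓ (3,0) + 1) := by
      have hne : ((3,0):ℕ×ℕ) ≠ v := by
        intro h; have := S.hv1; rw [← h] at this; omega
      have := S.ladd ha3V S.hvV hne (by
        show (2 ≤ 3 + v.1 ∧ 3 + v.1 ≤ n) ∨ 3 + v.1 = n + 2
        rw [S.hv2]; omega)
      rwa [S.hv1] at this
    obtain ⟨s, hs, hle, hintv⟩ := S.INT hA1 (by omega)
    have hAB : ℓ (3,0) + 1 ≤ ℓ (n-1,0) := hstrict _ ha3V (by simp) (by simp <;> omega)
    rcases hs with hsB | hsX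
    · intro r h1 h2; exact hintv r h1 (by omega)
    · exfalso
      exact S.notlam_B1 (hintv _ (by omega) (by omega))
  -- α + 2 ≤ B
  have hA2B : ℓ (3,0) + 2 ≤ ℓ (n-1,0) := by
    have h2 := hc4 _ ha4V rfl
    have hadj := S.ladd ha4V ha3V (fst_ne (by simp)) (by
      show (2 ≤ 4 + 3 ∧ 4 + 3 ≤ n) ∨ (4:ℕ) + 3 = n + 2
      left; omega)
    rw [h2] at hadj
    have hAb := hstrict _ ha3V (by simp) (by simp <;> omega)
    rcases gap _ hadj with h | h | h | h <;> omega
  -- classification of [4, n-3] vertices by their sum with a3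
  have class5 : ∀ u ∈ Vnm n m, 4 ≤ u.1 → u.1 + 3 ≤ n →
      ℓ u + ℓ (3,0) ≤ ℓ (n-1,0) ∨ ℓ u + ℓ (3,0) + 2 = ℓ (n+2,0) ∨
      ℓ u + ℓ (3,0) + 1 = ℓ (n+2,0) := by
    intro u hu h4 h3
    have hadj := S.ladd hu ha3V (fst_ne (by simp <;> omega)) (by
      show (2 ≤ u.1 + 3 ∧ u.1 + 3 ≤ n) ∨ u.1 + 3 = n + 2; omega)
    have hub := hstrict u hu (by omega) (by omega)
    rcases gap _ hadj with h | h | h | h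
    · left; exact h
    · right; left; omega
    · right; right; omega
    · exfalso; rcases amain with h' | h' | h' <;> omega
  -- b-rule exclusions
  have bexcl : ∀ u ∈ Vnm n m, 4 ≤ u.1 → u.1 + 3 ≤ n →
      ℓ (n-1,0) + ℓ u + 2 ≠ ℓ (n+2,0) ∧ ℓ (n-1,0) + ℓ u + 1 ≠ ℓ (n+2,0) ∧
      ℓ (n-1,0) + ℓ u ≠ ℓ (n+2,0) := by
    intro u hu h4 h3
    have hnadj := S.lnot hbV hu (fst_ne (by simp <;> omega)) (by
      intro hmem; rcases S.Sn_elim hmem with h' | h' <;> simp at h' <;> omega)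
    refine ⟨fun h => hnadj ?_, fun h => hnadj ?_, fun h => hnadj ?_⟩
    · have : ℓ (n-1,0) + ℓ u = ℓ (n-2,0) := by omega
      rw [this]; exact hlamD
    · have : ℓ (n-1,0) + ℓ u = ℓ (n,0) := by omega
      rw [this]; exact hlamZ
    · rw [h]; exact hlamX
  -- vertex pack
  have h10V : ((10,0) : ℕ×ℕ) ∈ Vnm n m := S.vmem (by omega)
  have h11V : ((11,0) : ℕ×ℕ) ∈ Vnm n m := S.vmem (by omega)
  have h12V : ((12,0) : ℕ×ℕ) ∈ Vnm n m := S.vmem (by omega)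
  have h13V : ((13,0) : ℕ×ℕ) ∈ Vnm n m := S.vmem (by omega)
  have h14V : ((14,0) : ℕ×ℕ) ∈ Vnm n m := S.vmem (by omega)
  by_cases hI : ℓ (n-1,0) ≤ ℓ (3,0) + 3
  · -- (I) : only three possible labels on [5, n-3]
    have hval : ∀ u ∈ Vnm n m, 5 ≤ u.1 → u.1 + 3 ≤ n →
        ℓ u = 3 ∨ ℓ u + (ℓ (3,0) + 2) = ℓ (n+2,0) ∨
        ℓ u + (ℓ (3,0) + 1) = ℓ (n+2,0) := by
      intro u hu h5 h3
      have hq := qd2 u hu (by omega) (by omega) (by omega) (by omega)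
      rcases class5 u hu (by omega) h3 with h | h | h
      · left; omega
      · right; left; omega
      · right; right; omega
    have f10 := hval _ h10V (by simp) (by simp <;> omega)
    have f11 := hval _ h11V (by simp) (by simp <;> omega)
    have f12 := hval _ h12V (by simp) (by simp <;> omega)
    have f13 := hval _ h13V (by simp) (by simp <;> omega)
    obtain ⟨i1, i2, i3, -, i5, i6, -, i8, -, -⟩ := S.inj5
    exact pigeon4 _ _ _ _ _ _ _ f10 f11 f12 f13 i1 i2 i3 i5 i6 i8
  by_cases hII : ℓ (3,0) = 3
  · -- (II) : α = 3, X = B + 5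
    have hX5 : ℓ (n+2,0) = ℓ (n-1,0) + 5 := by
      rcases amain with h | h | h <;> omega
    have lows : ∀ u ∈ Vnm n m, 5 ≤ u.1 → u.1 + 3 ≤ n →
        6 ≤ ℓ u ∧ ℓ u + 3 ≤ ℓ (n-1,0) := by
      intro u hu h5 h3
      have hq := qd2 u hu (by omega) (by omega) (by omega) (by omega)
      have hb := bexcl u hu (by omega) h3
      have hcl := class5 u hu (by omega) h3
      have hs := hstrict u hu (by omega) h3
      rw [hII] at hcl
      constructor
      · omega
      · rcases hcl with h | h | h <;> omega
    have lo10 := lows _ h10V (by simp) (by simp <;> omega)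
    have lo11 := lows _ h11V (by simp) (by simp <;> omega)
    have lo12 := lows _ h12V (by simp) (by simp <;> omega)
    have lo13 := lows _ h13V (by simp) (by simp <;> omega)
    have lo14 := lows _ h14V (by simp) (by simp <;> omega)
    have hB13 : 13 ≤ ℓ (n-1,0) := by
      obtain ⟨i1, i2, i3, i4, i5, i6, i7, i8, i9, i10⟩ := S.inj5
      exact bound5 _ _ _ _ _ _ lo10.1 lo11.1 lo12.1 lo13.1 lo14.1
        lo10.2 lo11.2 lo12.2 lo13.2 lo14.2 i1 i2 i3 i4 i5 i6 i7 i8 i9 i10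
    -- there is a coordinate-3 vertex with label 5
    obtain ⟨w5, hw5V, hw5v⟩ := hint 5 (by omega) (by omega)
    have hw53 : w5.1 = 3 := by
      rcases S.Sn_elim hw5V.1 with hc | hc
      · by_cases hw2 : w5.1 = 2
        · exfalso; have := Q.hc2 w5 hw5V hw2; omega
        by_cases hw3 : w5.1 = 3
        · exact hw3
        by_cases hw4 : w5.1 = 4
        · exfalso; have := hc4 w5 hw5V hw4; omega
        by_cases hw3n : w5.1 + 3 ≤ n
        · exfalso; have := (lows w5 hw5V (by omega) hw3n).1; omega
        by_cases hwd : w5.1 = n - 2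
        · exfalso; rw [S.pin hw5V hwd (by omega)] at hw5v; omega
        by_cases hwb : w5.1 = n - 1
        · exfalso; rw [S.pin hw5V hwb (by omega)] at hw5v; omega
        by_cases hwz : w5.1 = n
        · exfalso; rw [S.pin hw5V hwz (by omega)] at hw5v; omega
        · exfalso; omega
      · exfalso; rw [S.pin hw5V hc (by omega)] at hw5v; omega
    -- all low labels are ≤ B - 5
    have lows5 : ∀ u ∈ Vnm n m, 5 ≤ u.1 → u.1 + 3 ≤ n → ℓ u + 5 ≤ ℓ (n-1,0) := by
      intro u hu h5 h3
      have hadj := S.ladd hu hw5V (fst_ne (by omega)) (by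
        show (2 ≤ u.1 + w5.1 ∧ u.1 + w5.1 ≤ n) ∨ u.1 + w5.1 = n + 2
        rw [hw53]; omega)
      rw [hw5v] at hadj
      have hl := lows u hu h5 h3
      rcases gap _ hadj with h | h | h | h <;> omega
    -- value B - 4 has no carrier
    obtain ⟨w, hw, hwv⟩ := hint (ℓ (n-1,0) - 4) (by omega) (by omega)
    rcases S.Sn_elim hw.1 with hc | hc
    · by_cases hw2 : w.1 = 2
      · have := Q.hc2 w hw hw2; omega
      by_cases hw3 : w.1 = 3
      · rcases hc3set w hw hw3 with h | h | h <;> omega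
      by_cases hw4 : w.1 = 4
      · have := hc4 w hw hw4; omega
      by_cases hw3n : w.1 + 3 ≤ n
      · have := lows5 w hw (by omega) hw3n; omega
      by_cases hwd : w.1 = n - 2
      · rw [S.pin hw hwd (by omega)] at hwv; omega
      by_cases hwb : w.1 = n - 1
      · rw [S.pin hw hwb (by omega)] at hwv; omega
      by_cases hwz : w.1 = n
      · rw [S.pin hw hwz (by omega)] at hwv; omega
      · omega
    · rw [S.pin hw hc (by omega)] at hwv; omega
  · -- (III) : α ≥ 4 and B ≥ α + 4 : find the coordinate-3 carrier W of B - 3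
    have hA4 : 4 ≤ ℓ (3,0) := by omega
    have hW : ∃ w ∈ Vnm n m, w.1 = 3 ∧ ℓ w + 3 = ℓ (n-1,0) := by
      obtain ⟨w, hw, hwv⟩ := hint (ℓ (n-1,0) - 3) (by omega) (by omega)
      rcases S.Sn_elim hw.1 with hc | hc
      · by_cases hw2 : w.1 = 2
        · exfalso; have := Q.hc2 w hw hw2; omega
        by_cases hw3 : w.1 = 3
        · exact ⟨w, hw, hw3, by omega⟩
        by_cases hw4 : w.1 = 4
        · exfalso; have := hc4 w hw hw4; omega
        by_cases hw3n : w.1 + 3 ≤ n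
        · exfalso
          have := class5 w hw (by omega) hw3n
          rcases amain with h' | h' | h' <;> omega
        by_cases hwd : w.1 = n - 2
        · exfalso; rw [S.pin hw hwd (by omega)] at hwv; omega
        by_cases hwb : w.1 = n - 1
        · exfalso; rw [S.pin hw hwb (by omega)] at hwv; omega
        by_cases hwz : w.1 = n
        · exfalso; rw [S.pin hw hwz (by omega)] at hwv; omega
        · exfalso; omega
      · exfalso; rw [S.pin hw hc (by omega)] at hwv; omega
    obtain ⟨W, hWV, hW3, hWv⟩ := hW
    have hXbound : 2 * ℓ (n-1,0) ≤ ℓ (n+2,0) + 3 := by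
      rcases hc3set W hWV hW3 with h | h | h <;> omega
    have hval : ∀ u ∈ Vnm n m, 5 ≤ u.1 → u.1 + 3 ≤ n →
        ℓ u = 3 ∨ ℓ u + (ℓ W + 2) = ℓ (n+2,0) ∨ ℓ u + (ℓ W + 1) = ℓ (n+2,0) := by
      intro u hu h5 h3
      have hq := qd2 u hu (by omega) (by omega) (by omega) (by omega)
      have hs := hstrict u hu (by omega) h3
      have hadj := S.ladd hu hWV (fst_ne (by omega)) (by
        show (2 ≤ u.1 + W.1 ∧ u.1 + W.1 ≤ n) ∨ u.1 + W.1 = n + 2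
        rw [hW3]; omega)
      rcases gap _ hadj with h | h | h | h
      · left; omega
      · right; left; omega
      · right; right; omega
      · exfalso; omega
    have f10 := hval _ h10V (by simp) (by simp <;> omega)
    have f11 := hval _ h11V (by simp) (by simp <;> omega)
    have f12 := hval _ h12V (by simp) (by simp <;> omega)
    have f13 := hval _ h13V (by simp) (by simp <;> omega)
    obtain ⟨i1, i2, i3, -, i5, i6, -, i8, -, -⟩ := S.inj5
    exact pigeon4 _ _ _ _ _ _ _ f10 f11 f12 f13 i1 i2 i3 i5 i6 i8
end OneNot
namespace OneNot
variable {n : ℕ} {m : ℕ → ℕ} {ℓ : ℕ × ℕ → ℕ} {v : ℕ × ℕ}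

theorem Setup.caseQ (S : Setup n m ℓ v) (Q : QCtx n m ℓ) : False := by
  have hn := S.hn
  have ha3V : ((3,0) : ℕ×ℕ) ∈ Vnm n m := S.vmem (by omega)
  have hA2 : 2 ≤ ℓ (3,0) := S.L3 ha3V (by simp) (by simp <;> omega)
  obtain ⟨M, ⟨y0, hy0, hy0P, hy0M⟩, hbnd⟩ :=
    S.exists_max (fun u => 3 ≤ u.1 ∧ u.1 + 1 ≤ n)
      ⟨(3,0), ha3V, ⟨by simp, by simp <;> omega⟩⟩
  have hMA : 2 ≤ M := le_trans hA2 (hbnd _ ha3V ⟨by simp, by simp <;> omega⟩)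
  by_cases hex : ∃ u ∈ Vnm n m, (3 ≤ u.1 ∧ u.1 + 1 ≤ n) ∧ u ≠ (n-1,0) ∧ ℓ u = M
  · obtain ⟨y, hy, ⟨h3, hn1⟩, hyb, hyM⟩ := hex
    have hy2 : y.1 ≤ n - 2 := by
      by_cases h : y.1 = n - 1
      · exact absurd (S.pin hy h (by omega)) hyb
      · omega
    have hyv : y ≠ v := by intro h; rw [h, S.hv1] at hyM; omega
    have hM1 : lam n m ℓ (M + 1) := by
      have := S.ladd hy S.hvV hyv (by
        show (2 ≤ y.1 + v.1 ∧ y.1 + v.1 ≤ n) ∨ y.1 + v.1 = n + 2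
        rw [S.hv2]; omega)
      rwa [S.hv1, hyM] at this
    obtain ⟨w, hw, hwM⟩ := hM1
    rcases S.Sn_elim hw.1 with hc | hc
    · by_cases hw2 : w.1 = 2
      · have := Q.hc2 w hw hw2; omega
      by_cases hwr : w.1 + 1 ≤ n
      · have := hbnd w hw ⟨by omega, hwr⟩; omega
      · -- w = z : M + 2 = X
        have hwn : w.1 = n := by omega
        rw [S.pin hw hwn (by omega)] at hwM
        have hM2X : M + 2 = ℓ (n+2,0) := by have := Q.hZX; omega
        by_cases hyd : y.1 = n - 2
        · refine S.caseQd Q ?_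
          have := S.pin hy hyd (by omega)
          rw [this] at hyM
          omega
        · exact absurd (by omega : ℓ y + 2 = ℓ (n+2,0)) (S.QI hy h3 (by omega))
    · -- w = x : M + 1 = X, contradict Q1
      rw [S.pin hw hc (by omega)] at hwM
      have := S.Q1 Q hy (by omega)
      omega
  · have hyB : y0 = ((n-1,0) : ℕ×ℕ) := by
      by_contra h
      exact hex ⟨y0, hy0, hy0P, h, hy0M⟩
    refine S.caseQb Q ?_
    intro u hu h3 hn1 hub
    have h1 := hbnd u hu ⟨h3, hn1⟩
    have h2 : ℓ u ≠ M := fun h => hex ⟨u, hu, ⟨h3, hn1⟩, hub, h⟩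
    rw [← hyB, hy0M]
    omega

theorem Setup.main (S : Setup n m ℓ v) : False := by
  rcases S.PQ with hP | hQ
  · exact S.caseP hP
  · exact S.caseQ ⟨hQ.1, hQ.2.1, hQ.2.2⟩

end OneNot

/-- For `n ≥ 39`, any admissible `m`, and any sum labeling `ℓ` of `G(n,m)`,
no vertex of `ψ(2)` has label `1`. -/
theorem one_not_on_psi_two (n : ℕ) (hn : 39 ≤ n) (m : ℕ → ℕ)
    (hm : Admissible n m) (ℓ : ℕ × ℕ → ℕ) (hℓ : IsSumLabelingG n m ℓ)
    (v : ℕ × ℕ) (hv : v ∈ psi m 2) :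
    ℓ v ≠ 1 := by
  intro hv1
  have hv2 : v.1 = 2 := hv.1
  have hvV : v ∈ Vnm n m := by
    refine ⟨?_, ?_⟩
    · rw [hv2]; exact Or.inl ⟨le_refl 2, by omega⟩
    · rw [hv2]; exact hv.2
  exact OneNot.Setup.main ⟨hn, hm, hℓ, hvV, hv2, hv1⟩
end

section
/- For every natural number n ≥ 39, every admissible multiplicity function m, every sum labeling ℓ of G(n,m), and every vertex v ∈ ψ(3): ℓ(v) ≠ 1. -/
namespace OneNotPsi3

def InL (n : ℕ) (m : ℕ → ℕ) (ℓ : ℕ × ℕ → ℕ) (x : ℕ) : Prop :=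
  ∃ w ∈ Vnm n m, ℓ w = x

lemma mem_Sn_iff {n k : ℕ} : k ∈ Sn n ↔ ((2 ≤ k ∧ k ≤ n) ∨ k = n + 2) := Iff.rfl
lemma mem_Vnm_iff {n : ℕ} {m : ℕ → ℕ} {p : ℕ × ℕ} :
    p ∈ Vnm n m ↔ p.1 ∈ Sn n ∧ p.2 < m p.1 := Iff.rfl

section Basics
variable {n : ℕ} {m : ℕ → ℕ} {ℓ : ℕ × ℕ → ℕ}

lemma m_pos (hm : Admissible n m) {i : ℕ} (hi : i ∈ Sn n) : 1 ≤ m i := by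
  by_cases h : 2 * i ∈ Sn n
  · have := hm.1 i hi h; omega
  · have := hm.2.1 i hi h; omega

lemma m_single (hm : Admissible n m) {i : ℕ} (hi : i ∈ Sn n)
    (hbig : 2 * i > n + 2) : m i = 1 := by
  apply hm.2.1 i hi
  rw [mem_Sn_iff]; omega

lemma vert_mem (hm : Admissible n m) {i : ℕ} (hi : i ∈ Sn n) : (i, 0) ∈ Vnm n m :=
  ⟨hi, m_pos hm hi⟩

lemma blocked_eq (hn : 39 ≤ n) (hm : Admissible n m) {w : ℕ × ℕ}
    (hw : w ∈ Vnm n m) (h : w.1 = n - 2 ∨ w.1 = n ∨ w.1 = n + 2) :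
    w = (n - 2, 0) ∨ w = (n, 0) ∨ w = (n + 2, 0) := by
  obtain ⟨hw1, hw2⟩ := hw
  have hm1 : m w.1 = 1 := m_single hm hw1 (by rcases h with h|h|h <;> omega)
  have hw20 : w.2 = 0 := by omega
  rcases h with h|h|h
  · left; exact Prod.ext h hw20
  · right; left; exact Prod.ext h hw20
  · right; right; exact Prod.ext h hw20

lemma label_pos (hIs : IsSumLabelingG n m ℓ) {u : ℕ × ℕ} (hu : u ∈ Vnm n m) :
    1 ≤ ℓ u := hIs.1 u hu

lemma sum_mem (hIs : IsSumLabelingG n m ℓ) {u w : ℕ × ℕ} (hu : u ∈ Vnm n m)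
    (hw : w ∈ Vnm n m) (hne : u ≠ w) (hadj : u.1 + w.1 ∈ Sn n) :
    InL n m ℓ (ℓ u + ℓ w) := by
  obtain ⟨x, hx, hx2⟩ := (hIs.2 u hu w hw hne).mp ⟨hne, hadj⟩
  exact ⟨x, hx, hx2.symm⟩

lemma sum_not_mem (hIs : IsSumLabelingG n m ℓ) {u w : ℕ × ℕ} (hu : u ∈ Vnm n m)
    (hw : w ∈ Vnm n m) (hne : u ≠ w) (hnadj : u.1 + w.1 ∉ Sn n) :
    ¬ InL n m ℓ (ℓ u + ℓ w) := by
  intro ⟨x, hx, hx2⟩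
  exact hnadj ((hIs.2 u hu w hw hne).mpr ⟨x, hx, hx2.symm⟩).2

lemma exists_bound (n : ℕ) (m : ℕ → ℕ) (ℓ : ℕ × ℕ → ℕ) :
    ∃ C, ∀ u ∈ Vnm n m, ℓ u ≤ C := by
  classical
  set M := (Finset.range (n + 3)).sup m with hM
  refine ⟨((Finset.range (n + 3)) ×ˢ (Finset.range M)).sup ℓ, ?_⟩
  intro u hu
  apply Finset.le_sup
  rw [Finset.mem_product, Finset.mem_range, Finset.mem_range]
  obtain ⟨hu1, hu2⟩ := hu
  have h1 : u.1 < n + 3 := by rcases (mem_Sn_iff.mp hu1) with h | h <;> omega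
  have h2 : m u.1 ≤ M := Finset.le_sup (by rw [Finset.mem_range]; omega)
  exact ⟨h1, by omega⟩

end Basics

/-! Context: a labeling in which the `ψ(3)` vertex `v` has label 1. -/

section Main
variable {n : ℕ} {m : ℕ → ℕ} {ℓ : ℕ × ℕ → ℕ} {v : ℕ × ℕ}
  (hn : 39 ≤ n) (hm : Admissible n m) (hIs : IsSumLabelingG n m ℓ)
  (hv : v ∈ Vnm n m) (hv3 : v.1 = 3) (hv1 : ℓ v = 1)

include hn hm hIs hv hv3 hv1

/-- Any label ≥ 2 that is not blocked propagates one step up. -/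
lemma step {x : ℕ} (hx : InL n m ℓ x) (h2 : 2 ≤ x)
    (ha : x ≠ ℓ (n - 2, 0)) (hb : x ≠ ℓ (n, 0)) (hc : x ≠ ℓ (n + 2, 0)) :
    InL n m ℓ (x + 1) := by
  obtain ⟨w, hw, hwx⟩ := hx
  have hwv : w ≠ v := fun h => by rw [h, hv1] at hwx; omega
  have hw1 : w.1 ∈ Sn n := hw.1
  -- w is not one of the blocked vertices
  have hnb : ¬ (w.1 = n - 2 ∨ w.1 = n ∨ w.1 = n + 2) := by
    intro h
    rcases blocked_eq hn hm hw h with h'|h'|h'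
    · exact ha (by rw [← hwx, h'])
    · exact hb (by rw [← hwx, h'])
    · exact hc (by rw [← hwx, h'])
  have hsum : w.1 + v.1 ∈ Sn n := by
    rw [hv3, mem_Sn_iff]
    rcases mem_Sn_iff.mp hw1 with h | h <;> omega
  have := sum_mem hIs hw hv hwv hsum
  rwa [hwx, hv1] at this

/-- Chains: every label ≥ 2 climbs to a blocked label. -/
lemma chain {x : ℕ} (hx : InL n m ℓ x) (h2 : 2 ≤ x) :
    ∃ B, (B = ℓ (n - 2, 0) ∨ B = ℓ (n, 0) ∨ B = ℓ (n + 2, 0)) ∧ x ≤ B ∧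
      (∀ y, x ≤ y → y ≤ B → InL n m ℓ y) ∧
      (∀ y, x ≤ y → y < B → y ≠ ℓ (n - 2, 0) ∧ y ≠ ℓ (n, 0) ∧ y ≠ ℓ (n + 2, 0)) := by
  obtain ⟨C, hC⟩ := exists_bound n m ℓ
  have hXC : ∀ z, InL n m ℓ z → z ≤ C := fun z ⟨w, hw, hwz⟩ => hwz ▸ hC w hw
  have key : ∀ k x, C + 1 - x ≤ k → InL n m ℓ x → 2 ≤ x →
      ∃ B, (B = ℓ (n - 2, 0) ∨ B = ℓ (n, 0) ∨ B = ℓ (n + 2, 0)) ∧ x ≤ B ∧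
      (∀ y, x ≤ y → y ≤ B → InL n m ℓ y) ∧
      (∀ y, x ≤ y → y < B → y ≠ ℓ (n - 2, 0) ∧ y ≠ ℓ (n, 0) ∧ y ≠ ℓ (n + 2, 0)) := by
    intro k
    induction k with
    | zero =>
      intro x hk hx h2
      have := hXC x hx; omega
    | succ k ih =>
      intro x hk hx h2
      by_cases hbl : x = ℓ (n - 2, 0) ∨ x = ℓ (n, 0) ∨ x = ℓ (n + 2, 0)
      · exact ⟨x, hbl, le_refl x, fun y h1 h2 => by
          have : y = x := by omega
          rwa [this], fun y h1 h2 => by omega⟩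
      · push_neg at hbl
        have hx1 := step hn hm hIs hv hv3 hv1 hx h2 hbl.1 hbl.2.1 hbl.2.2
        have hxC := hXC x hx
        obtain ⟨B, hB, hB2, hB3, hB4⟩ := ih (x + 1) (by omega) hx1 (by omega)
        refine ⟨B, hB, by omega, ?_, ?_⟩
        · intro y h1 h2
          rcases Nat.eq_or_lt_of_le h1 with h | h
          · rwa [← h]
          · exact hB3 y (by omega) h2
        · intro y h1 h2
          rcases Nat.eq_or_lt_of_le h1 with h | h
          · rw [← h]; exact ⟨hbl.1, hbl.2.1, hbl.2.2⟩
          · exact hB4 y (by omega) h2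
  exact key (C + 1 - x) x (le_refl _) hx h2

/-- Any vertex labeled 1 lies in `ψ(3)` or is `(n-1, 0)`. -/
lemma one_excl {u : ℕ × ℕ} (hu : u ∈ Vnm n m) (hu1 : ℓ u = 1) :
    u.1 = 3 ∨ u.1 = n - 1 := by
  by_contra h
  push_neg at h
  have hD : ((n-1 : ℕ), (0 : ℕ)) ∈ Vnm n m := vert_mem hm (by rw [mem_Sn_iff]; omega)
  -- (n-1,0) ~ v, giving a vertex labeled  ℓ(n-1,0) + 1
  have h1 : InL n m ℓ (ℓ (n-1, 0) + 1) := by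
    have hne : ((n-1 : ℕ), (0:ℕ)) ≠ v := fun h => by
      have := congrArg Prod.fst h; simp [hv3] at this; omega
    have hsum : ((n-1 : ℕ), (0:ℕ)).1 + v.1 ∈ Sn n := by
      rw [hv3, mem_Sn_iff]; simp; omega
    have := sum_mem hIs hD hv hne hsum
    rwa [hv1] at this
  -- but u is not adjacent to (n-1,0)
  have hne2 : u ≠ ((n-1 : ℕ), (0:ℕ)) := fun he => by
    have := congrArg Prod.fst he; simp at this; omega
  have hnadj : u.1 + ((n-1 : ℕ), (0:ℕ)).1 ∉ Sn n := by
    simp only [mem_Sn_iff]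
    have hu1' := mem_Sn_iff.mp hu.1
    push_neg
    constructor
    · intro _; omega
    · omega
  have := sum_not_mem hIs hu hD hne2 hnadj
  rw [hu1] at this
  rw [Nat.add_comm] at h1
  exact this h1


omit hv hv3 hv1 in
/-- Labels separate the classes `ψ(i)`, `2 ≤ i < i' ≤ n-3`, on base vertices. -/
lemma sep {i i' : ℕ} (h2 : 2 ≤ i) (hlt : i < i') (hub : i' ≤ n - 3) :
    ℓ (i, 0) ≠ ℓ (i', 0) := by
  intro heq
  have hiS : i ∈ Sn n := by rw [mem_Sn_iff]; omega
  have hi'S : i' ∈ Sn n := by rw [mem_Sn_iff]; omega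
  have hVi : (i, (0:ℕ)) ∈ Vnm n m := vert_mem hm hiS
  have hVi' : (i', (0:ℕ)) ∈ Vnm n m := vert_mem hm hi'S
  have main : ∀ w : ℕ × ℕ, w ∈ Vnm n m → w ≠ (i, 0) → w ≠ (i', 0) →
      w.1 + i ∈ Sn n → w.1 + i' ∉ Sn n → False := by
    intro w hw hne1 hne2 hadj hnadj
    have h1 : InL n m ℓ (ℓ w + ℓ (i, 0)) := sum_mem hIs hw hVi hne1 hadj
    have h2' : ¬ InL n m ℓ (ℓ w + ℓ (i', 0)) := sum_not_mem hIs hw hVi' hne2 hnadj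
    rw [heq] at h1
    exact h2' h1
  by_cases hB : 2 * i = n + 2
  · have hm2 : 2 ≤ m i := hm.1 i hiS (by rw [hB, mem_Sn_iff]; omega)
    apply main (i, 1) ⟨hiS, by show 1 < m i; omega⟩
    · intro h; exact absurd (congrArg Prod.snd h) (by simp)
    · intro h; have := congrArg Prod.fst h; simp at this; omega
    · show i + i ∈ Sn n; rw [mem_Sn_iff]; omega
    · show i + i' ∉ Sn n; rw [mem_Sn_iff]; omega
  · by_cases hC : i + i' = n + 2
    · by_cases hD : i' = i + 2
      · apply main (i - 1, 0) (vert_mem hm (by rw [mem_Sn_iff]; omega))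
        · intro h; have := congrArg Prod.fst h; simp at this; omega
        · intro h; have := congrArg Prod.fst h; simp at this; omega
        · show i - 1 + i ∈ Sn n; rw [mem_Sn_iff]; omega
        · show i - 1 + i' ∉ Sn n; rw [mem_Sn_iff]; omega
      · apply main (n - i, 0) (vert_mem hm (by rw [mem_Sn_iff]; omega))
        · intro h; have := congrArg Prod.fst h; simp at this; omega
        · intro h; have := congrArg Prod.fst h; simp at this; omega
        · show n - i + i ∈ Sn n; rw [mem_Sn_iff]; omega
        · show n - i + i' ∉ Sn n; rw [mem_Sn_iff]; omega
    · apply main (n + 2 - i, 0) (vert_mem hm (by rw [mem_Sn_iff]; omega))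
      · intro h; have := congrArg Prod.fst h; simp at this; omega
      · intro h; have := congrArg Prod.fst h; simp at this; omega
      · show n + 2 - i + i ∈ Sn n; rw [mem_Sn_iff]; omega
      · show n + 2 - i + i' ∉ Sn n; rw [mem_Sn_iff]; omega

/-- The blocked labels do not propagate. -/
lemma no_plus {i : ℕ} (hi : i = n - 2 ∨ i = n ∨ i = n + 2) :
    ¬ InL n m ℓ (ℓ (i, 0) + 1) := by
  have hiS : i ∈ Sn n := by rw [mem_Sn_iff]; omega
  have hne : ((i : ℕ), (0:ℕ)) ≠ v := fun h => by
    have := congrArg Prod.fst h; simp [hv3] at this; omega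
  have hnadj : ((i : ℕ), (0:ℕ)).1 + v.1 ∉ Sn n := by
    rw [hv3]; show ¬ (i + 3 ∈ Sn n); rw [mem_Sn_iff]; omega
  have := sum_not_mem hIs (vert_mem hm hiS) hv hne hnadj
  rwa [hv1] at this

lemma blocked_ge2 {i : ℕ} (hi : i = n - 2 ∨ i = n ∨ i = n + 2) :
    2 ≤ ℓ (i, 0) := by
  have hiS : i ∈ Sn n := by rw [mem_Sn_iff]; omega
  have h1 : 1 ≤ ℓ (i, 0) := label_pos hIs (vert_mem hm hiS)
  rcases Nat.eq_or_lt_of_le h1 with h | h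
  · exfalso
    have := one_excl hn hm hIs hv hv3 hv1 (vert_mem hm hiS) h.symm
    simp at this; omega
  · omega

/-- A 12-consecutive window of unblocked labels. -/
lemma window : ∃ r, 2 ≤ r ∧ ∀ s, s < 12 → InL n m ℓ (r + s) ∧
    (r + s) ≠ ℓ (n - 2, 0) ∧ (r + s) ≠ ℓ (n, 0) ∧ (r + s) ≠ ℓ (n + 2, 0) := by
  classical
  set Z : Finset ℕ := (Finset.Icc 2 (n - 3)).erase 3 with hZ
  have hZm : ∀ i ∈ Z, 2 ≤ i ∧ i ≤ n - 3 ∧ i ≠ 3 := by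
    intro i hi
    rw [hZ, Finset.mem_erase, Finset.mem_Icc] at hi
    omega
  have hzV : ∀ i ∈ Z, (i, (0:ℕ)) ∈ Vnm n m := by
    intro i hi
    obtain ⟨h1, h2, h3⟩ := hZm i hi
    exact vert_mem hm (by rw [mem_Sn_iff]; omega)
  have hz2 : ∀ i ∈ Z, 2 ≤ ℓ (i, 0) := by
    intro i hi
    obtain ⟨h1', h2', h3'⟩ := hZm i hi
    have h1 : 1 ≤ ℓ (i, 0) := label_pos hIs (hzV i hi)
    rcases Nat.eq_or_lt_of_le h1 with h | h
    · exfalso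
      have := one_excl hn hm hIs hv hv3 hv1 (hzV i hi) h.symm
      simp at this; omega
    · omega
  have hzplus : ∀ i ∈ Z, InL n m ℓ (ℓ (i, 0) + 1) := by
    intro i hi
    obtain ⟨h1, h2, h3⟩ := hZm i hi
    have hne : ((i:ℕ), (0:ℕ)) ≠ v := fun h => by
      have := congrArg Prod.fst h; simp [hv3] at this; omega
    have hadj : ((i:ℕ), (0:ℕ)).1 + v.1 ∈ Sn n := by
      rw [hv3]; show i + 3 ∈ Sn n; rw [mem_Sn_iff]; omega
    have := sum_mem hIs (hzV i hi) hv hne hadj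
    rwa [hv1] at this
  have hznb : ∀ i ∈ Z, ℓ (i, 0) ≠ ℓ (n - 2, 0) ∧ ℓ (i, 0) ≠ ℓ (n, 0) ∧
      ℓ (i, 0) ≠ ℓ (n + 2, 0) := by
    intro i hi
    refine ⟨?_, ?_, ?_⟩ <;> intro h <;>
      [exact no_plus hn hm hIs hv hv3 hv1 (Or.inl rfl) (h ▸ hzplus i hi);
       exact no_plus hn hm hIs hv hv3 hv1 (Or.inr (Or.inl rfl)) (h ▸ hzplus i hi);
       exact no_plus hn hm hIs hv hv3 hv1 (Or.inr (Or.inr rfl)) (h ▸ hzplus i hi)]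
  have hchains : ∀ i ∈ Z, ∃ B,
      (B = ℓ (n - 2, 0) ∨ B = ℓ (n, 0) ∨ B = ℓ (n + 2, 0)) ∧ ℓ (i, 0) ≤ B ∧
      (∀ y, ℓ (i, 0) ≤ y → y ≤ B → InL n m ℓ y) ∧
      (∀ y, ℓ (i, 0) ≤ y → y < B →
        y ≠ ℓ (n - 2, 0) ∧ y ≠ ℓ (n, 0) ∧ y ≠ ℓ (n + 2, 0)) := by
    intro i hi
    exact chain hn hm hIs hv hv3 hv1 ⟨(i, 0), hzV i hi, rfl⟩ (hz2 i hi)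
  choose! f hf1 hf2 hf3 hf4 using hchains
  have hmaps : ∀ i ∈ Z, f i ∈ ({ℓ (n-2,0), ℓ (n,0), ℓ (n+2,0)} : Finset ℕ) := by
    intro i hi
    rcases hf1 i hi with h|h|h <;> simp [h]
  have hcard3 : ({ℓ (n-2,0), ℓ (n,0), ℓ (n+2,0)} : Finset ℕ).card ≤ 3 := by
    apply le_trans (Finset.card_insert_le _ _)
    have := Finset.card_insert_le (ℓ (n,0)) ({ℓ (n+2,0)} : Finset ℕ)
    simp at this ⊢; omega
  have hZcard : Z.card = n - 5 := by
    rw [hZ, Finset.card_erase_of_mem (by rw [Finset.mem_Icc]; omega), Nat.card_Icc]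
    omega
  have hlt : ({ℓ (n-2,0), ℓ (n,0), ℓ (n+2,0)} : Finset ℕ).card * 11 < Z.card := by
    rw [hZcard]; omega
  obtain ⟨T, hT, hTc⟩ := Finset.exists_lt_card_fiber_of_mul_lt_card_of_maps_to hmaps hlt
  set S : Finset ℕ := Z.filter (fun i => f i = T) with hS
  have hSsub : ∀ i ∈ S, i ∈ Z ∧ f i = T := by
    intro i hi; rw [hS, Finset.mem_filter] at hi; exact hi
  have hinj : Set.InjOn (fun i => ℓ (i, 0)) S := by
    intro i hi j hj hij
    by_contra hne
    obtain ⟨hi1, hi2, hi3⟩ := hZm i (hSsub i hi).1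
    obtain ⟨hj1, hj2, hj3⟩ := hZm j (hSsub j hj).1
    rcases lt_trichotomy i j with h | h | h
    · exact sep hn hm hIs hi1 h hj2 hij
    · exact hne h
    · exact sep hn hm hIs hj1 h hi2 hij.symm
  set W : Finset ℕ := S.image (fun i => ℓ (i, 0)) with hW
  have hWcard : 12 ≤ W.card := by
    rw [hW, Finset.card_image_of_injOn hinj]; omega
  have hWne : W.Nonempty := Finset.card_pos.mp (by omega)
  set zmin := W.min' hWne with hzmin
  obtain ⟨i0, hi0S, hi0q⟩ := Finset.mem_image.mp (W.min'_mem hWne)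
  have hi0Z : i0 ∈ Z := (hSsub i0 hi0S).1
  have hfi0 : f i0 = T := (hSsub i0 hi0S).2
  have hwlt : ∀ w ∈ W, zmin ≤ w ∧ w < T := by
    intro w hw
    refine ⟨W.min'_le w hw, ?_⟩
    obtain ⟨j, hjS, hjq⟩ := Finset.mem_image.mp hw
    have hjZ := (hSsub j hjS).1
    have hfj := (hSsub j hjS).2
    have hle : ℓ (j, 0) ≤ T := hfj ▸ hf2 j hjZ
    have hnb := hznb j hjZ
    have hTm : T = ℓ (n-2,0) ∨ T = ℓ (n,0) ∨ T = ℓ (n+2,0) := by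
      simpa using hT
    have : ℓ (j, 0) ≠ T := by rcases hTm with h|h|h <;> rw [h] <;> tauto
    omega
  have hsub : W ⊆ Finset.Ico zmin T := by
    intro w hw
    rw [Finset.mem_Ico]
    exact hwlt w hw
  have h12 : zmin + 12 ≤ T := by
    have := Finset.card_le_card hsub
    rw [Nat.card_Ico] at this
    omega
  have hzmin2 : 2 ≤ zmin := by
    rw [hzmin, ← hi0q]
    exact hz2 i0 hi0Z
  refine ⟨T - 12, by omega, ?_⟩
  intro s hs
  have hy1 : ℓ (i0, 0) ≤ T - 12 + s := by rw [hi0q]; omega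
  have hy2 : T - 12 + s ≤ f i0 := by rw [hfi0]; omega
  have hy3 : T - 12 + s < f i0 := by rw [hfi0]; omega
  exact ⟨hf3 i0 hi0Z _ hy1 hy2, hf4 i0 hi0Z _ hy1 hy3⟩

/-- Mod-chain machinery: labels climb by steps of `η` to one of the stopping
values, staying in the same residue class. -/
lemma modchain {η : ℕ} (hη : 1 ≤ η) (F : List ℕ)
    (hstop : ∀ x, InL n m ℓ x → 2 ≤ x → x ∉ F → InL n m ℓ (x + η))
    {x : ℕ} (hx : InL n m ℓ x) (h2 : 2 ≤ x) :
    ∃ fv ∈ F, x ≤ fv ∧ x ≡ fv [MOD η] := by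
  obtain ⟨C, hC⟩ := exists_bound n m ℓ
  have hXC : ∀ z, InL n m ℓ z → z ≤ C := fun z ⟨w, hw, hwz⟩ => hwz ▸ hC w hw
  have key : ∀ k x, C + 1 - x ≤ k → InL n m ℓ x → 2 ≤ x →
      ∃ fv ∈ F, x ≤ fv ∧ x ≡ fv [MOD η] := by
    intro k
    induction k with
    | zero => intro x hk hx h2; have := hXC x hx; omega
    | succ k ih =>
      intro x hk hx h2
      by_cases hmem : x ∈ F
      · exact ⟨x, hmem, le_refl x, Nat.ModEq.refl x⟩
      · have hnext := hstop x hx h2 hmem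
        have hxC := hXC x hx
        obtain ⟨fv, hfv1, hfv2, hfv3⟩ := ih (x + η) (by omega) hnext (by omega)
        refine ⟨fv, hfv1, by omega, ?_⟩
        have hxx : x ≡ x + η [MOD η] := (Nat.add_mod_right x η).symm
        exact hxx.trans hfv3
  exact key (C + 1 - x) x (le_refl _) hx h2

omit hn hm hIs hv hv3 hv1 in
/-- From a 12-window, a step `η` with a stopping list of size `≤ K < 12`
must satisfy `η ≤ K`. -/
lemma eta_le {η : ℕ} (hη : 1 ≤ η) (F : List ℕ) {K : ℕ} (hK : F.length ≤ K)
    (hK12 : K < 12)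
    (hstopall : ∀ x, InL n m ℓ x → 2 ≤ x → ∃ fv ∈ F, x ≤ fv ∧ x ≡ fv [MOD η])
    {r : ℕ} (hr : 2 ≤ r) (hwin : ∀ s, s < 12 → InL n m ℓ (r + s)) :
    η ≤ K := by
  classical
  by_contra hgt
  push_neg at hgt
  set μ := min η 12 with hμ
  have hforall : ∀ s ∈ Finset.range μ, ∃ fv ∈ F, (r + s) ≤ fv ∧
      (r + s) ≡ fv [MOD η] := by
    intro s hs
    rw [Finset.mem_range] at hs
    exact hstopall (r + s) (hwin s (by omega)) (by omega)
  choose! t ht1 ht2 ht3 using hforall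
  have hcardle : (Finset.range μ).card ≤ F.toFinset.card := by
    apply Finset.card_le_card_of_injOn t
    · intro s hs
      rw [Finset.mem_coe, List.mem_toFinset]
      exact ht1 s hs
    · intro s hs s' hs' hts
      simp only [Finset.coe_sort_coe, Finset.mem_coe, Finset.mem_range] at hs hs'
      have h1 : (r + s) ≡ (r + s') [MOD η] :=
        ((ht3 s (by simpa using hs)).trans (hts ▸ (ht3 s' (by simpa using hs')).symm))
      have h2 : s ≡ s' [MOD η] := Nat.ModEq.add_left_cancel' r h1
      unfold Nat.ModEq at h2
      rw [Nat.mod_eq_of_lt (by omega), Nat.mod_eq_of_lt (by omega)] at h2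
      exact h2
  have hlen : F.toFinset.card ≤ K := le_trans (List.toFinset_card_le F) hK
  rw [Finset.card_range] at hcardle
  omega

/-- Every `ψ(3)` label is at most 4. -/
lemma psi3_le {u : ℕ × ℕ} (hu : u ∈ Vnm n m) (hu3 : u.1 = 3) : ℓ u ≤ 4 := by
  set η := ℓ u with hη
  have hη1 : 1 ≤ η := label_pos hIs hu
  set F : List ℕ := [ℓ (n-2, 0), ℓ (n, 0), ℓ (n+2, 0), η] with hF
  have hstop : ∀ x, InL n m ℓ x → 2 ≤ x → x ∉ F → InL n m ℓ (x + η) := by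
    intro x hx h2 hmem
    rw [hF] at hmem
    simp only [List.mem_cons, List.not_mem_nil, or_false, not_or] at hmem
    obtain ⟨hna, hnb, hnc, hnη⟩ := hmem
    obtain ⟨w, hw, hwx⟩ := hx
    have hwu : w ≠ u := fun h => hnη (by rw [← hwx, h])
    have hnotbl : ¬(w.1 = n - 2 ∨ w.1 = n ∨ w.1 = n + 2) := by
      intro h
      rcases blocked_eq hn hm hw h with h'|h'|h'
      · exact hna (by rw [← hwx, h'])
      · exact hnb (by rw [← hwx, h'])
      · exact hnc (by rw [← hwx, h'])
    have hadj : w.1 + u.1 ∈ Sn n := by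
      rw [hu3, mem_Sn_iff]
      rcases mem_Sn_iff.mp hw.1 with h | h <;> omega
    have := sum_mem hIs hw hu hwu hadj
    rwa [hwx, ← hη] at this
  have hstopall : ∀ x, InL n m ℓ x → 2 ≤ x → ∃ fv ∈ F, x ≤ fv ∧ x ≡ fv [MOD η] :=
    fun x hx h2 => modchain hn hm hIs hv hv3 hv1 hη1 F hstop hx h2
  obtain ⟨r, hr, hwin⟩ := window hn hm hIs hv hv3 hv1
  apply eta_le hη1 F (by rw [hF]; simp) (by omega) hstopall hr
  intro s hs
  exact (hwin s hs).1

/-- Every `ψ(2)` label is at most 5. -/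
lemma psi2_le {u : ℕ × ℕ} (hu : u ∈ Vnm n m) (hu2 : u.1 = 2) : ℓ u ≤ 5 := by
  set η := ℓ u with hη
  have hη1 : 1 ≤ η := label_pos hIs hu
  set F : List ℕ := [ℓ (n-2, 0), ℓ (n, 0), ℓ (n+2, 0), ℓ (n-1, 0), η] with hF
  have hstop : ∀ x, InL n m ℓ x → 2 ≤ x → x ∉ F → InL n m ℓ (x + η) := by
    intro x hx h2 hmem
    rw [hF] at hmem
    simp only [List.mem_cons, List.not_mem_nil, or_false, not_or] at hmem
    obtain ⟨hna, hnb, hnc, hnd, hnη⟩ := hmem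
    obtain ⟨w, hw, hwx⟩ := hx
    have hwu : w ≠ u := fun h => hnη (by rw [← hwx, h])
    have hnotbl : ¬(w.1 = n - 2 ∨ w.1 = n ∨ w.1 = n + 2) := by
      intro h
      rcases blocked_eq hn hm hw h with h'|h'|h'
      · exact hna (by rw [← hwx, h'])
      · exact hnb (by rw [← hwx, h'])
      · exact hnc (by rw [← hwx, h'])
    have hnot1 : w.1 ≠ n - 1 := by
      intro h
      have hm1 : m w.1 = 1 := by
        apply hm.2.1 w.1 hw.1
        rw [mem_Sn_iff]; omega
      have hw0 : w.2 = 0 := by have := hw.2; omega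
      have : w = ((n-1 : ℕ), (0 : ℕ)) := Prod.ext h hw0
      exact hnd (by rw [← hwx, this])
    have hadj : w.1 + u.1 ∈ Sn n := by
      rw [hu2, mem_Sn_iff]
      rcases mem_Sn_iff.mp hw.1 with h | h <;> omega
    have := sum_mem hIs hw hu hwu hadj
    rwa [hwx, ← hη] at this
  have hstopall : ∀ x, InL n m ℓ x → 2 ≤ x → ∃ fv ∈ F, x ≤ fv ∧ x ≡ fv [MOD η] :=
    fun x hx h2 => modchain hn hm hIs hv hv3 hv1 hη1 F hstop hx h2
  obtain ⟨r, hr, hwin⟩ := window hn hm hIs hv hv3 hv1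
  apply eta_le hη1 F (by rw [hF]; simp) (by omega) hstopall hr
  intro s hs
  exact (hwin s hs).1

omit hv hv3 hv1 in
/-- There are at least 34 distinct labels, so all labels cannot be `≤ 33`. -/
lemma count_kill (hK : ∀ x, InL n m ℓ x → x ≤ 33) : False := by
  classical
  set Z : Finset ℕ := (Finset.Icc 2 (n - 3)).erase 3 with hZ
  have hZm : ∀ i ∈ Z, 2 ≤ i ∧ i ≤ n - 3 ∧ i ≠ 3 := by
    intro i hi
    rw [hZ, Finset.mem_erase, Finset.mem_Icc] at hi
    omega
  have hzV : ∀ i ∈ Z, (i, (0:ℕ)) ∈ Vnm n m := by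
    intro i hi
    obtain ⟨h1, h2, h3⟩ := hZm i hi
    exact vert_mem hm (by rw [mem_Sn_iff]; omega)
  have hinj : Set.InjOn (fun i => ℓ (i, 0)) Z := by
    intro i hi j hj hij
    by_contra hne
    obtain ⟨hi1, hi2, hi3⟩ := hZm i hi
    obtain ⟨hj1, hj2, hj3⟩ := hZm j hj
    rcases lt_trichotomy i j with h | h | h
    · exact sep hn hm hIs hi1 h hj2 hij
    · exact hne h
    · exact sep hn hm hIs hj1 h hi2 hij.symm
  have hZcard : Z.card = n - 5 := by
    rw [hZ, Finset.card_erase_of_mem (by rw [Finset.mem_Icc]; omega), Nat.card_Icc]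
    omega
  have hsub : Z.image (fun i => ℓ (i, 0)) ⊆ Finset.Icc 1 33 := by
    intro x hx
    obtain ⟨i, hi, hie⟩ := Finset.mem_image.mp hx
    rw [Finset.mem_Icc]
    constructor
    · rw [← hie]; exact label_pos hIs (hzV i hi)
    · rw [← hie]; exact hK _ ⟨(i, 0), hzV i hi, rfl⟩
  have h1 : (Z.image (fun i => ℓ (i, 0))).card = n - 5 := by
    rw [Finset.card_image_of_injOn hinj, hZcard]
  have h2 := Finset.card_le_card hsub
  rw [h1, Nat.card_Icc] at h2
  omega

/-- Anything that sums with `ℓ(n,0)` to a label must be a `ψ(2)` label. -/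
lemma nzero_refl {w : ℕ × ℕ} (hw : w ∈ Vnm n m) (hne : w ≠ ((n:ℕ), (0:ℕ)))
    (hsum : InL n m ℓ (ℓ ((n:ℕ), (0:ℕ)) + ℓ w)) : ℓ w ≤ 5 := by
  have hBV : ((n:ℕ), (0:ℕ)) ∈ Vnm n m := vert_mem hm (by rw [mem_Sn_iff]; omega)
  obtain ⟨x, hx, hxe⟩ := hsum
  have hadj := (hIs.2 ((n:ℕ), (0:ℕ)) hBV w hw (Ne.symm hne)).mpr ⟨x, hx, hxe.symm⟩
  have h2 : w.1 = 2 := by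
    have h3 : n + w.1 ∈ Sn n := hadj.2
    have hw1 := mem_Sn_iff.mp hw.1
    rcases mem_Sn_iff.mp h3 with h | h <;> omega
  exact psi2_le hn hm hIs hv hv3 hv1 hw h2

end Main
end OneNotPsi3

open OneNotPsi3

/-- For `n ≥ 39`, any admissible `m`, and any sum labeling `ℓ` of `G(n,m)`,
no vertex of `ψ(3)` has label `1`. -/
theorem one_not_on_psi_three (n : ℕ) (hn : 39 ≤ n) (m : ℕ → ℕ)
    (hm : Admissible n m) (ℓ : ℕ × ℕ → ℕ) (hℓ : IsSumLabelingG n m ℓ)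
    (v : ℕ × ℕ) (hv : v ∈ psi m 3) :
    ℓ v ≠ 1 := by
  intro hv1
  obtain ⟨hv3, hvm⟩ := hv
  have h3S : (3:ℕ) ∈ Sn n := by rw [mem_Sn_iff]; omega
  have hvV : v ∈ Vnm n m := ⟨by rw [hv3]; exact h3S, by rw [hv3]; exact hvm⟩
  -- the four special vertices
  have hAV : ((n - 2:ℕ), (0:ℕ)) ∈ Vnm n m := vert_mem hm (by rw [mem_Sn_iff]; omega)
  have hBV : ((n:ℕ), (0:ℕ)) ∈ Vnm n m := vert_mem hm (by rw [mem_Sn_iff]; omega)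
  have hCV : ((n + 2:ℕ), (0:ℕ)) ∈ Vnm n m := vert_mem hm (by rw [mem_Sn_iff]; omega)
  have hDV : ((n - 1:ℕ), (0:ℕ)) ∈ Vnm n m := vert_mem hm (by rw [mem_Sn_iff]; omega)
  have h2V : ((2:ℕ), (0:ℕ)) ∈ Vnm n m := vert_mem hm (by rw [mem_Sn_iff]; omega)
  -- basic label facts
  have hg2 : 2 ≤ ℓ ((2:ℕ), (0:ℕ)) := by
    have h1 : 1 ≤ ℓ ((2:ℕ), (0:ℕ)) := label_pos hℓ h2V
    rcases Nat.eq_or_lt_of_le h1 with h | h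
    · exfalso
      have := one_excl hn hm hℓ hvV hv3 hv1 h2V h.symm
      simp at this; omega
    · omega
  have hg5 : ℓ ((2:ℕ), (0:ℕ)) ≤ 5 := psi2_le hn hm hℓ hvV hv3 hv1 h2V rfl
  have hA2 : 2 ≤ ℓ ((n-2:ℕ), (0:ℕ)) := blocked_ge2 hn hm hℓ hvV hv3 hv1 (Or.inl rfl)
  have hBb2 : 2 ≤ ℓ ((n:ℕ), (0:ℕ)) := blocked_ge2 hn hm hℓ hvV hv3 hv1 (Or.inr (Or.inl rfl))
  have hC2 : 2 ≤ ℓ ((n+2:ℕ), (0:ℕ)) := blocked_ge2 hn hm hℓ hvV hv3 hv1 (Or.inr (Or.inr rfl))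
  have hnpA : ¬ InL n m ℓ (ℓ ((n-2:ℕ), (0:ℕ)) + 1) := no_plus hn hm hℓ hvV hv3 hv1 (Or.inl rfl)
  have hnpB : ¬ InL n m ℓ (ℓ ((n:ℕ), (0:ℕ)) + 1) := no_plus hn hm hℓ hvV hv3 hv1 (Or.inr (Or.inl rfl))
  have hnpC : ¬ InL n m ℓ (ℓ ((n+2:ℕ), (0:ℕ)) + 1) := no_plus hn hm hℓ hvV hv3 hv1 (Or.inr (Or.inr rfl))
  have hIAg : InL n m ℓ (ℓ ((n-2:ℕ),(0:ℕ)) + ℓ ((2:ℕ),(0:ℕ))) := by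
    apply sum_mem hℓ hAV h2V
    · intro h; have := congrArg Prod.fst h; simp at this; omega
    · show n - 2 + 2 ∈ Sn n; rw [mem_Sn_iff]; omega
  have hIBg : InL n m ℓ (ℓ ((n:ℕ),(0:ℕ)) + ℓ ((2:ℕ),(0:ℕ))) := by
    apply sum_mem hℓ hBV h2V
    · intro h; have := congrArg Prod.fst h; simp at this; omega
    · show n + 2 ∈ Sn n; rw [mem_Sn_iff]; omega
  have hCcTop : ∀ x, InL n m ℓ x → x ≤ ℓ ((n+2:ℕ), (0:ℕ)) := by
    have hmaxM : ∀ x, InL n m ℓ x →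
        x ≤ max (max (ℓ ((n-2:ℕ),(0:ℕ))) (ℓ ((n:ℕ),(0:ℕ)))) (ℓ ((n+2:ℕ),(0:ℕ))) := by
      intro x hx
      rcases le_or_gt 2 x with h | h
      · obtain ⟨B', hB'1, hB'2, _, _⟩ := chain hn hm hℓ hvV hv3 hv1 hx h
        rcases hB'1 with e|e|e <;> omega
      · omega
    intro x hx
    have h1 := hmaxM _ hIAg
    have h2 := hmaxM _ hIBg
    have h3 := hmaxM x hx
    omega
  have hACc : ℓ ((n-2:ℕ),(0:ℕ)) + 2 ≤ ℓ ((n+2:ℕ),(0:ℕ)) := by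
    have := hCcTop _ hIAg; omega
  have hBCc : ℓ ((n:ℕ),(0:ℕ)) + 2 ≤ ℓ ((n+2:ℕ),(0:ℕ)) := by
    have := hCcTop _ hIBg; omega
  have hcnt : ∀ K : ℕ, K ≤ 33 → ℓ ((n+2:ℕ),(0:ℕ)) ≤ K → False := by
    intro K h1 h2
    apply count_kill hn hm hℓ
    intro x hx
    have := hCcTop x hx
    omega
  have hpushAB : ∀ X, (X = ℓ ((n-2:ℕ),(0:ℕ)) ∨ X = ℓ ((n:ℕ),(0:ℕ))) →
      InL n m ℓ (X + ℓ ((2:ℕ),(0:ℕ))) := by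
    intro X h
    rcases h with h|h <;> rw [h]
    exacts [hIAg, hIBg]
  by_cases hE : ∃ u, u ∈ Vnm n m ∧ u.1 = 3 ∧ 2 ≤ ℓ u
  · -- Case E2: some ψ(3) vertex has a label ≥ 2
    obtain ⟨u0, hu0V, hu03, hu02⟩ := hE
    have hη4 : ℓ u0 ≤ 4 := psi3_le hn hm hℓ hvV hv3 hv1 hu0V hu03
    have hkill : ∀ s B',
        (B' = ℓ ((n-2:ℕ),(0:ℕ)) ∨ B' = ℓ ((n:ℕ),(0:ℕ)) ∨ B' = ℓ ((n+2:ℕ),(0:ℕ))) →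
        (∀ y, s ≤ y → y ≤ B' → InL n m ℓ y) →
        (∀ y, s ≤ y → y < B' →
          y ≠ ℓ ((n-2:ℕ),(0:ℕ)) ∧ y ≠ ℓ ((n:ℕ),(0:ℕ)) ∧ y ≠ ℓ ((n+2:ℕ),(0:ℕ))) →
        s + ℓ u0 ≤ B' + 1 → 11 ≤ B' → False := by
      intro s B' hBm hintv hnely hcond h11
      have hzIn : InL n m ℓ (B' + 1 - ℓ u0) := hintv _ (by omega) (by omega)
      have hznb := hnely (B' + 1 - ℓ u0) (by omega) (by omega)
      obtain ⟨w, hwV, hwz⟩ := hzIn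
      have hwu : w ≠ u0 := by intro h; rw [h] at hwz; omega
      have hwnb : ¬(w.1 = n - 2 ∨ w.1 = n ∨ w.1 = n + 2) := by
        intro h
        rcases blocked_eq hn hm hwV h with h'|h'|h'
        · rw [h'] at hwz; exact hznb.1 hwz.symm
        · rw [h'] at hwz; exact hznb.2.1 hwz.symm
        · rw [h'] at hwz; exact hznb.2.2 hwz.symm
      have hadj : u0.1 + w.1 ∈ Sn n := by
        rw [hu03]
        rcases mem_Sn_iff.mp hwV.1 with h | h <;> (rw [mem_Sn_iff]; omega)
      have hIn := sum_mem hℓ hu0V hwV (Ne.symm hwu) hadj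
      rw [hwz] at hIn
      have heq : ℓ u0 + (B' + 1 - ℓ u0) = B' + 1 := by omega
      rw [heq] at hIn
      rcases hBm with h|h|h <;> rw [h] at hIn
      exacts [hnpA hIn, hnpB hIn, hnpC hIn]
    -- stage 1
    obtain ⟨B1, hB1m, hB1ge, hB1intv, hB1ne⟩ :=
      chain hn hm hℓ hvV hv3 hv1 ⟨((2:ℕ),(0:ℕ)), h2V, rfl⟩ hg2
    by_cases hc1 : ℓ ((2:ℕ),(0:ℕ)) + ℓ u0 ≤ B1 + 1 ∧ 11 ≤ B1
    · exact hkill _ _ hB1m hB1intv hB1ne hc1.1 hc1.2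
    have hB1le : B1 ≤ 10 := by rcases not_and_or.mp hc1 with h|h <;> omega
    have hB1ab : B1 = ℓ ((n-2:ℕ),(0:ℕ)) ∨ B1 = ℓ ((n:ℕ),(0:ℕ)) := by
      rcases hB1m with h|h|h
      · exact Or.inl h
      · exact Or.inr h
      · exact (hcnt 10 (by omega) (by omega)).elim
    -- stage 2
    obtain ⟨B2, hB2m, hB2ge, hB2intv, hB2ne⟩ :=
      chain hn hm hℓ hvV hv3 hv1 (hpushAB B1 hB1ab) (by omega)
    by_cases hc2 : B1 + ℓ ((2:ℕ),(0:ℕ)) + ℓ u0 ≤ B2 + 1 ∧ 11 ≤ B2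
    · exact hkill _ _ hB2m hB2intv hB2ne hc2.1 hc2.2
    have hB2le : B2 ≤ 18 := by rcases not_and_or.mp hc2 with h|h <;> omega
    have hB2gt : B1 < B2 := by omega
    have hB2ab : B2 = ℓ ((n-2:ℕ),(0:ℕ)) ∨ B2 = ℓ ((n:ℕ),(0:ℕ)) := by
      rcases hB2m with h|h|h
      · exact Or.inl h
      · exact Or.inr h
      · exact (hcnt 18 (by omega) (by omega)).elim
    -- stage 3
    obtain ⟨B3, hB3m, hB3ge, hB3intv, hB3ne⟩ :=
      chain hn hm hℓ hvV hv3 hv1 (hpushAB B2 hB2ab) (by omega)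
    have hB3gt : B2 < B3 := by omega
    rcases hB3m with h3e|h3e|h3e
    · rcases hB1ab with h1e|h1e <;> rcases hB2ab with h2e|h2e <;> omega
    · rcases hB1ab with h1e|h1e <;> rcases hB2ab with h2e|h2e <;> omega
    · -- B3 = Cc
      by_cases hc3 : B2 + ℓ ((2:ℕ),(0:ℕ)) + ℓ u0 ≤ B3 + 1 ∧ 11 ≤ B3
      · exact hkill _ _ (Or.inr (Or.inr h3e)) hB3intv hB3ne hc3.1 hc3.2
      · have hB3le : B3 ≤ 26 := by rcases not_and_or.mp hc3 with h|h <;> omega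
        exact hcnt 26 (by omega) (by omega)
  · -- Case E3: every ψ(3) vertex is labeled 1
    have hall : ∀ u, u ∈ Vnm n m → u.1 = 3 → ℓ u = 1 := by
      intro u h1 h3
      by_contra hne
      exact hE ⟨u, h1, h3, by have := label_pos hℓ h1; omega⟩
    have hm3 : 2 ≤ m 3 := hm.1 3 h3S (by rw [mem_Sn_iff]; omega)
    set v' : ℕ × ℕ := (3, if v.2 = 0 then 1 else 0) with hv'def
    have hv'V : v' ∈ Vnm n m := by
      refine ⟨h3S, ?_⟩
      show (if v.2 = 0 then 1 else 0) < m 3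
      split <;> omega
    have hv'ne : v ≠ v' := by
      intro h
      have h2 := congrArg Prod.snd h
      rw [hv'def] at h2
      simp only at h2
      split at h2 <;> omega
    have hv'3 : v'.1 = 3 := rfl
    have hv'1 : ℓ v' = 1 := hall v' hv'V rfl
    have hIn2 : InL n m ℓ 2 := by
      have := sum_mem hℓ hvV hv'V hv'ne
        (by rw [hv3, hv'3]; rw [mem_Sn_iff]; omega)
      rwa [hv1, hv'1] at this
    have hI1g : InL n m ℓ (1 + ℓ ((2:ℕ),(0:ℕ))) := by
      have := sum_mem hℓ hvV h2V
        (by intro h; rw [h] at hv3; simp at hv3)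
        (by rw [hv3]; show (3:ℕ) + 2 ∈ Sn n; rw [mem_Sn_iff]; omega)
      rwa [hv1] at this
    have hscan : ∀ t, InL n m ℓ t → 2 ≤ t → t ≠ ℓ ((n-1:ℕ),(0:ℕ)) →
        ¬ InL n m ℓ (ℓ ((n-1:ℕ),(0:ℕ)) + t) := by
      intro t ht h2t hnd hsum
      obtain ⟨w, hwV, hwt⟩ := ht
      have hw3 : w.1 ≠ 3 := by intro h; have := hall w hwV h; omega
      have hwD : ((n-1:ℕ), (0:ℕ)) ≠ w := by
        intro h; rw [← h] at hwt; exact hnd hwt.symm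
      have hnadj : ((n-1:ℕ), (0:ℕ)).1 + w.1 ∉ Sn n := by
        show ¬(n - 1 + w.1 ∈ Sn n)
        rcases mem_Sn_iff.mp hwV.1 with h|h <;> (rw [mem_Sn_iff]; omega)
      have hnot := sum_not_mem hℓ hDV hwV hwD hnadj
      rw [hwt] at hnot
      exact hnot hsum
    have hpin : ∀ s B',
        (B' = ℓ ((n-2:ℕ),(0:ℕ)) ∨ B' = ℓ ((n:ℕ),(0:ℕ)) ∨ B' = ℓ ((n+2:ℕ),(0:ℕ))) →
        (∀ y, s ≤ y → y ≤ B' → InL n m ℓ y) →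
        (∀ y, s ≤ y → y < B' →
          y ≠ ℓ ((n-2:ℕ),(0:ℕ)) ∧ y ≠ ℓ ((n:ℕ),(0:ℕ)) ∧ y ≠ ℓ ((n+2:ℕ),(0:ℕ))) →
        s + ℓ ((2:ℕ),(0:ℕ)) ≤ B' + 1 → 11 ≤ B' →
        ℓ ((n-1:ℕ),(0:ℕ)) = B' + 1 - ℓ ((2:ℕ),(0:ℕ)) := by
      intro s B' hBm hintv hnely hcond h11
      have hzIn : InL n m ℓ (B' + 1 - ℓ ((2:ℕ),(0:ℕ))) := hintv _ (by omega) (by omega)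
      have hznb := hnely (B' + 1 - ℓ ((2:ℕ),(0:ℕ))) (by omega) (by omega)
      obtain ⟨w, hwV, hwz⟩ := hzIn
      have hw20 : w ≠ ((2:ℕ),(0:ℕ)) := by intro h; rw [h] at hwz; omega
      by_cases hw1 : w.1 = n - 1
      · have hm1 : m w.1 = 1 := hm.2.1 w.1 hwV.1 (by rw [hw1, mem_Sn_iff]; omega)
        have hweq : w = ((n-1:ℕ), (0:ℕ)) := Prod.ext hw1 (by have := hwV.2; omega)
        rw [← hweq, hwz]
      · exfalso
        have hwnb : ¬(w.1 = n - 2 ∨ w.1 = n ∨ w.1 = n + 2) := by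
          intro h
          rcases blocked_eq hn hm hwV h with h'|h'|h'
          · rw [h'] at hwz; exact hznb.1 hwz.symm
          · rw [h'] at hwz; exact hznb.2.1 hwz.symm
          · rw [h'] at hwz; exact hznb.2.2 hwz.symm
        have hadj : w.1 + ((2:ℕ),(0:ℕ)).1 ∈ Sn n := by
          show w.1 + 2 ∈ Sn n
          rcases mem_Sn_iff.mp hwV.1 with h|h <;> (rw [mem_Sn_iff]; omega)
        have hIn := sum_mem hℓ hwV h2V hw20 hadj
        rw [hwz] at hIn
        have heq : B' + 1 - ℓ ((2:ℕ),(0:ℕ)) + ℓ ((2:ℕ),(0:ℕ)) = B' + 1 := by omega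
        rw [heq] at hIn
        rcases hBm with h|h|h <;> rw [h] at hIn
        exacts [hnpA hIn, hnpB hIn, hnpC hIn]
    have hscan2 : ∀ s B',
        (B' = ℓ ((n-2:ℕ),(0:ℕ)) ∨ B' = ℓ ((n:ℕ),(0:ℕ)) ∨ B' = ℓ ((n+2:ℕ),(0:ℕ))) →
        (∀ y, s ≤ y → y ≤ B' → InL n m ℓ y) →
        (∀ y, s ≤ y → y < B' →
          y ≠ ℓ ((n-2:ℕ),(0:ℕ)) ∧ y ≠ ℓ ((n:ℕ),(0:ℕ)) ∧ y ≠ ℓ ((n+2:ℕ),(0:ℕ))) →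
        s + ℓ ((2:ℕ),(0:ℕ)) ≤ B' + 1 → 11 ≤ B' → 3 ≤ ℓ ((2:ℕ),(0:ℕ)) → False := by
      intro s B' hBm hintv hnely hcond h11 hg3
      have hd := hpin s B' hBm hintv hnely hcond h11
      apply hscan 2 hIn2 (le_refl 2) (by rw [hd]; omega)
      rw [hd]
      have heq : B' + 1 - ℓ ((2:ℕ),(0:ℕ)) + 2 = B' + 3 - ℓ ((2:ℕ),(0:ℕ)) := by omega
      rw [heq]
      exact hintv _ (by omega) (by omega)
    have hpushkill : ∀ s B',
        (B' = ℓ ((n-2:ℕ),(0:ℕ)) ∨ B' = ℓ ((n:ℕ),(0:ℕ)) ∨ B' = ℓ ((n+2:ℕ),(0:ℕ))) →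
        (∀ y, s ≤ y → y ≤ B' → InL n m ℓ y) →
        (∀ y, s ≤ y → y < B' →
          y ≠ ℓ ((n-2:ℕ),(0:ℕ)) ∧ y ≠ ℓ ((n:ℕ),(0:ℕ)) ∧ y ≠ ℓ ((n+2:ℕ),(0:ℕ))) →
        s + ℓ ((2:ℕ),(0:ℕ)) ≤ B' + 1 → 11 ≤ B' → ℓ ((2:ℕ),(0:ℕ)) = 2 →
        (B' = ℓ ((n-2:ℕ),(0:ℕ)) ∨ B' = ℓ ((n:ℕ),(0:ℕ))) → False := by
      intro s B' hBm hintv hnely hcond h11 hg2e hab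
      have hd := hpin s B' hBm hintv hnely hcond h11
      have hI3 : InL n m ℓ 3 := by
        rw [hg2e] at hI1g
        exact hI1g
      have hpush : InL n m ℓ (B' + 2) := by
        have := hpushAB B' hab
        rwa [hg2e] at this
      apply hscan 3 hI3 (by omega) (by rw [hd]; omega)
      have heq : ℓ ((n-1:ℕ),(0:ℕ)) + 3 = B' + 2 := by omega
      rw [heq]
      exact hpush
    have hnAB : ¬ InL n m ℓ (ℓ ((n:ℕ),(0:ℕ)) + ℓ ((n-2:ℕ),(0:ℕ))) := by
      apply sum_not_mem hℓ hBV hAV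
      · intro h; have := congrArg Prod.fst h; simp at this; omega
      · show n + (n - 2) ∉ Sn n; rw [mem_Sn_iff]; omega
    have hrefl : ∀ t, InL n m ℓ t → t ≠ ℓ ((n:ℕ),(0:ℕ)) →
        InL n m ℓ (ℓ ((n:ℕ),(0:ℕ)) + t) → t ≤ 5 := by
      intro t ht hne hsum
      obtain ⟨w', hw'V, hw'e⟩ := ht
      have hw'ne : w' ≠ ((n:ℕ),(0:ℕ)) := by
        intro h; rw [h] at hw'e; exact hne hw'e.symm
      have := nzero_refl hn hm hℓ hvV hv3 hv1 hw'V hw'ne (by rw [hw'e]; exact hsum)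
      omega
    -- stage 1
    obtain ⟨B1, hB1m, hB1ge, hB1intv, hB1ne⟩ :=
      chain hn hm hℓ hvV hv3 hv1 hIn2 (le_refl 2)
    have hB1ab : B1 = ℓ ((n-2:ℕ),(0:ℕ)) ∨ B1 = ℓ ((n:ℕ),(0:ℕ)) := by
      rcases hB1m with h|h|h
      · exact Or.inl h
      · exact Or.inr h
      · exact ((hB1ne (ℓ ((n-2:ℕ),(0:ℕ))) hA2 (by omega)).1 rfl).elim
    by_cases hc1 : 2 + ℓ ((2:ℕ),(0:ℕ)) ≤ B1 + 1 ∧ 11 ≤ B1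
    · by_cases hg3 : 3 ≤ ℓ ((2:ℕ),(0:ℕ))
      · exact hscan2 _ _ hB1m hB1intv hB1ne hc1.1 hc1.2 hg3
      · exact hpushkill _ _ hB1m hB1intv hB1ne hc1.1 hc1.2 (by omega) hB1ab
    have hB1le : B1 ≤ 10 := by rcases not_and_or.mp hc1 with h|h <;> omega
    -- stage 2
    obtain ⟨B2, hB2m, hB2ge, hB2intv, hB2ne⟩ :=
      chain hn hm hℓ hvV hv3 hv1 (hpushAB B1 hB1ab) (by omega)
    have hB2gt : B1 < B2 := by omega
    by_cases hc2 : B1 + ℓ ((2:ℕ),(0:ℕ)) + ℓ ((2:ℕ),(0:ℕ)) ≤ B2 + 1 ∧ 11 ≤ B2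
    · by_cases hg3 : 3 ≤ ℓ ((2:ℕ),(0:ℕ))
      · exact hscan2 _ _ hB2m hB2intv hB2ne hc2.1 hc2.2 hg3
      · have hg2e : ℓ ((2:ℕ),(0:ℕ)) = 2 := by omega
        rcases hB2m with h2e|h2e|h2e
        · exact hpushkill _ _ (Or.inl h2e) hB2intv hB2ne hc2.1 hc2.2 hg2e (Or.inl h2e)
        · exact hpushkill _ _ (Or.inr (Or.inl h2e)) hB2intv hB2ne hc2.1 hc2.2 hg2e
            (Or.inr h2e)
        · -- HAIRY stage 2 : B2 = ℓ(n+2,0), g = 2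
          have hBeq : ℓ ((n:ℕ),(0:ℕ)) = B1 := by
            rcases hB1ab with hB1e | hB1e
            · by_contra hBne
              rcases lt_trichotomy (ℓ ((n:ℕ),(0:ℕ))) B1 with h|h|h
              · exact (hB1ne _ hBb2 h).2.1 rfl
              · exact hBne h
              · by_cases h' : ℓ ((n:ℕ),(0:ℕ)) = B1 + 1
                · have hX : ℓ ((n:ℕ),(0:ℕ)) = ℓ ((n-2:ℕ),(0:ℕ)) + 1 := by
                    rw [← hB1e]; exact h'
                  exact hnpA ⟨((n:ℕ),(0:ℕ)), hBV, hX⟩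
                · have hlt2 : ℓ ((n:ℕ),(0:ℕ)) < B2 := by omega
                  exact (hB2ne _ (by omega) hlt2).2.1 rfl
            · exact hB1e.symm
          by_cases hbig : B1 + ℓ ((2:ℕ),(0:ℕ)) ≤ ℓ ((n+2:ℕ),(0:ℕ)) - B1
          · have ht'In : InL n m ℓ (ℓ ((n+2:ℕ),(0:ℕ)) - B1) :=
              hB2intv _ (by omega) (by omega)
            have h5 : ℓ ((n+2:ℕ),(0:ℕ)) - B1 ≤ 5 := by
              apply hrefl _ ht'In
              · rw [hBeq]; omega
              · rw [hBeq]
                have heq : B1 + (ℓ ((n+2:ℕ),(0:ℕ)) - B1) = ℓ ((n+2:ℕ),(0:ℕ)) := by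
                  omega
                rw [heq]
                exact ⟨((n+2:ℕ),(0:ℕ)), hCV, rfl⟩
            exact hcnt 15 (by omega) (by omega)
          · exact hcnt 23 (by omega) (by omega)
    have hB2le : B2 ≤ 18 := by rcases not_and_or.mp hc2 with h|h <;> omega
    have hB2ab : B2 = ℓ ((n-2:ℕ),(0:ℕ)) ∨ B2 = ℓ ((n:ℕ),(0:ℕ)) := by
      rcases hB2m with h|h|h
      · exact Or.inl h
      · exact Or.inr h
      · exact (hcnt 18 (by omega) (by omega)).elim
    -- stage 3
    obtain ⟨B3, hB3m, hB3ge, hB3intv, hB3ne⟩ :=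
      chain hn hm hℓ hvV hv3 hv1 (hpushAB B2 hB2ab) (by omega)
    have hB3gt : B2 < B3 := by omega
    rcases hB3m with h3e|h3e|h3e
    · rcases hB1ab with h1e|h1e <;> rcases hB2ab with h2e|h2e <;> omega
    · rcases hB1ab with h1e|h1e <;> rcases hB2ab with h2e|h2e <;> omega
    · -- B3 = ℓ(n+2,0)
      by_cases hc3 : B2 + ℓ ((2:ℕ),(0:ℕ)) + ℓ ((2:ℕ),(0:ℕ)) ≤ B3 + 1 ∧ 11 ≤ B3
      · by_cases hg3 : 3 ≤ ℓ ((2:ℕ),(0:ℕ))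
        · exact hscan2 _ _ (Or.inr (Or.inr h3e)) hB3intv hB3ne hc3.1 hc3.2 hg3
        · have hg2e : ℓ ((2:ℕ),(0:ℕ)) = 2 := by omega
          have hB2le' : B2 ≤ 13 := by rcases not_and_or.mp hc2 with h|h <;> omega
          rcases hB1ab with hB1e|hB1e <;> rcases hB2ab with hB2e|hB2e
          · omega
          · -- B1 = A, B2 = B(n,0)
            have hCcB2 : B2 + 2 ≤ ℓ ((n+2:ℕ),(0:ℕ)) := by omega
            by_cases ha1 : ℓ ((n+2:ℕ),(0:ℕ)) - B2 ≤ B1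
            · have ht'In : InL n m ℓ (ℓ ((n+2:ℕ),(0:ℕ)) - B2) :=
                hB1intv _ (by omega) (by omega)
              have h5 : ℓ ((n+2:ℕ),(0:ℕ)) - B2 ≤ 5 := by
                apply hrefl _ ht'In
                · rw [← hB2e]; omega
                · rw [← hB2e]
                  have heq : B2 + (ℓ ((n+2:ℕ),(0:ℕ)) - B2) = ℓ ((n+2:ℕ),(0:ℕ)) := by
                    omega
                  rw [heq]
                  exact ⟨((n+2:ℕ),(0:ℕ)), hCV, rfl⟩
              exact hcnt 19 (by omega) (by omega)
            · by_cases ha2 : ℓ ((n+2:ℕ),(0:ℕ)) - B2 = B1 + 1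
              · apply hnAB
                rw [← hB2e, ← hB1e]
                have heq : B2 + B1 = ℓ ((n+2:ℕ),(0:ℕ)) - 1 := by omega
                rw [heq]
                exact hB3intv _ (by omega) (by omega)
              · by_cases ha3 : ℓ ((n+2:ℕ),(0:ℕ)) - B2 ≤ B2
                · by_cases ha3' : ℓ ((n+2:ℕ),(0:ℕ)) - B2 = B2
                  · exact hcnt 26 (by omega) (by omega)
                  · have ht'In : InL n m ℓ (ℓ ((n+2:ℕ),(0:ℕ)) - B2) :=
                      hB2intv _ (by omega) (by omega)
                    have h5 : ℓ ((n+2:ℕ),(0:ℕ)) - B2 ≤ 5 := by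
                      apply hrefl _ ht'In
                      · rw [← hB2e]; omega
                      · rw [← hB2e]
                        have heq : B2 + (ℓ ((n+2:ℕ),(0:ℕ)) - B2) =
                            ℓ ((n+2:ℕ),(0:ℕ)) := by omega
                        rw [heq]
                        exact ⟨((n+2:ℕ),(0:ℕ)), hCV, rfl⟩
                    exact hcnt 19 (by omega) (by omega)
                · by_cases ha4 : ℓ ((n+2:ℕ),(0:ℕ)) - B2 = B2 + 1
                  · exact hcnt 27 (by omega) (by omega)
                  · have ht'In : InL n m ℓ (ℓ ((n+2:ℕ),(0:ℕ)) - B2) :=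
                      hB3intv _ (by omega) (by omega)
                    have h5 : ℓ ((n+2:ℕ),(0:ℕ)) - B2 ≤ 5 := by
                      apply hrefl _ ht'In
                      · rw [← hB2e]; omega
                      · rw [← hB2e]
                        have heq : B2 + (ℓ ((n+2:ℕ),(0:ℕ)) - B2) =
                            ℓ ((n+2:ℕ),(0:ℕ)) := by omega
                        rw [heq]
                        exact ⟨((n+2:ℕ),(0:ℕ)), hCV, rfl⟩
                    exact hcnt 19 (by omega) (by omega)
          · -- B1 = B(n,0), B2 = A
            have hCcB1 : B1 + 2 ≤ ℓ ((n+2:ℕ),(0:ℕ)) := by omega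
            by_cases hb1 : ℓ ((n+2:ℕ),(0:ℕ)) - B1 ≤ B1
            · by_cases hb1' : ℓ ((n+2:ℕ),(0:ℕ)) - B1 = B1
              · exact hcnt 20 (by omega) (by omega)
              · have ht'In : InL n m ℓ (ℓ ((n+2:ℕ),(0:ℕ)) - B1) :=
                  hB1intv _ (by omega) (by omega)
                have h5 : ℓ ((n+2:ℕ),(0:ℕ)) - B1 ≤ 5 := by
                  apply hrefl _ ht'In
                  · rw [← hB1e]; omega
                  · rw [← hB1e]
                    have heq : B1 + (ℓ ((n+2:ℕ),(0:ℕ)) - B1) =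
                        ℓ ((n+2:ℕ),(0:ℕ)) := by omega
                    rw [heq]
                    exact ⟨((n+2:ℕ),(0:ℕ)), hCV, rfl⟩
                exact hcnt 15 (by omega) (by omega)
            · by_cases hb2 : ℓ ((n+2:ℕ),(0:ℕ)) - B1 = B1 + 1
              · exact hcnt 21 (by omega) (by omega)
              · by_cases hb3 : ℓ ((n+2:ℕ),(0:ℕ)) - B1 ≤ B2
                · have ht'In : InL n m ℓ (ℓ ((n+2:ℕ),(0:ℕ)) - B1) :=
                    hB2intv _ (by omega) (by omega)
                  have h5 : ℓ ((n+2:ℕ),(0:ℕ)) - B1 ≤ 5 := by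
                    apply hrefl _ ht'In
                    · rw [← hB1e]; omega
                    · rw [← hB1e]
                      have heq : B1 + (ℓ ((n+2:ℕ),(0:ℕ)) - B1) =
                          ℓ ((n+2:ℕ),(0:ℕ)) := by omega
                      rw [heq]
                      exact ⟨((n+2:ℕ),(0:ℕ)), hCV, rfl⟩
                  exact hcnt 15 (by omega) (by omega)
                · by_cases hb4 : ℓ ((n+2:ℕ),(0:ℕ)) - B1 = B2 + 1
                  · apply hnAB
                    rw [← hB2e, ← hB1e]
                    have heq : B1 + B2 = ℓ ((n+2:ℕ),(0:ℕ)) - 1 := by omega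
                    rw [heq]
                    exact hB3intv _ (by omega) (by omega)
                  · have ht'In : InL n m ℓ (ℓ ((n+2:ℕ),(0:ℕ)) - B1) :=
                      hB3intv _ (by omega) (by omega)
                    have h5 : ℓ ((n+2:ℕ),(0:ℕ)) - B1 ≤ 5 := by
                      apply hrefl _ ht'In
                      · rw [← hB1e]; omega
                      · rw [← hB1e]
                        have heq : B1 + (ℓ ((n+2:ℕ),(0:ℕ)) - B1) =
                            ℓ ((n+2:ℕ),(0:ℕ)) := by omega
                        rw [heq]
                        exact ⟨((n+2:ℕ),(0:ℕ)), hCV, rfl⟩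
                    exact hcnt 15 (by omega) (by omega)
          · omega
      · have hB3le : B3 ≤ 26 := by rcases not_and_or.mp hc3 with h|h <;> omega
        exact hcnt 26 (by omega) (by omega)
end

section
/- Let G be a finite simple graph with a sum labeling ℓ and label-set M = {ℓ(x) : x ∈ V}, and let v₁, v₂ be distinct equivalent vertices, each having exactly k terminals. Then ℓ(v₁) is among the k smallest labels in M, i.e. |{m ∈ M : m < ℓ(v₁)}| ≤ k − 1. Moreover, if ℓ(v₁) = ℓ(v₂), then ℓ(v₁) is among the k−1 smallest labels in M, i.e. |{m ∈ M : m < ℓ(v₁)}| ≤ k − 2. -/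
/-- A (possibly non-injective) sum labeling of a finite simple graph `G`. -/
def IsSumLabeling {V : Type*} (G : SimpleGraph V) (ℓ : V → ℕ) : Prop :=
  (∀ v : V, 1 ≤ ℓ v) ∧
  ∀ u v : V, u ≠ v → (G.Adj u v ↔ ∃ w : V, ℓ u + ℓ v = ℓ w)

/-- Two vertices `u`, `v` are equivalent if `N(u) \ {v} = N(v) \ {u}`. -/
def Equiv' {V : Type*} (G : SimpleGraph V) (u v : V) : Prop :=
  G.neighborSet u \ {v} = G.neighborSet v \ {u}

/-- If `v₁`, `v₂` are distinct equivalent vertices, each with exactly `k`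
terminals, then `ℓ(v₁)` is among the `k` smallest labels; and if moreover
`ℓ(v₁) = ℓ(v₂)`, it is among the `k - 1` smallest labels. -/
theorem label_among_smallest {V : Type*} [Fintype V]
    (G : SimpleGraph V) (ℓ : V → ℕ) (hℓ : IsSumLabeling G ℓ)
    (v₁ v₂ : V) (hne : v₁ ≠ v₂) (hequiv : Equiv' G v₁ v₂) (k : ℕ)
    (ht₁ : Set.ncard {w : V | ¬ G.Adj v₁ w} = k)
    (ht₂ : Set.ncard {w : V | ¬ G.Adj v₂ w} = k) :
    Set.ncard {x ∈ Set.range ℓ | x < ℓ v₁} ≤ k - 1 ∧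
      (ℓ v₁ = ℓ v₂ → Set.ncard {x ∈ Set.range ℓ | x < ℓ v₁} ≤ k - 2) := by
  classical
  obtain ⟨hpos, hadj⟩ := hℓ
  have hL : 1 ≤ ℓ v₁ := hpos v₁
  set B := Finset.univ.sup ℓ with hB
  have hle : ∀ w : V, ℓ w ≤ B := fun w => Finset.le_sup (Finset.mem_univ w)
  -- the chain lemma
  have chain : ∀ d : ℕ, ∀ u : V, B - ℓ u ≤ d →
      ∃ t, ¬ G.Adj v₁ t ∧ ∃ n, ℓ t = ℓ u + n * ℓ v₁ := by
    intro d
    induction d with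
    | zero =>
      intro u hd
      by_cases h : G.Adj v₁ u
      · obtain ⟨w, hw⟩ := (hadj v₁ u h.ne).mp h
        have := hle w
        have := hle u
        omega
      · exact ⟨u, h, 0, by simp⟩
    | succ d ih =>
      intro u hd
      by_cases h : G.Adj v₁ u
      · obtain ⟨w, hw⟩ := (hadj v₁ u h.ne).mp h
        obtain ⟨t, ht, n, hn⟩ := ih w (by omega)
        exact ⟨t, ht, n + 1, by rw [hn, ← hw]; ring⟩
      · exact ⟨u, h, 0, by simp⟩
  have chainAll : ∀ u : V, ∃ t, ¬ G.Adj v₁ t ∧ ∃ n, ℓ t = ℓ u + n * ℓ v₁ :=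
    fun u => chain (B - ℓ u) u le_rfl
  set S := {x ∈ Set.range ℓ | x < ℓ v₁} with hS
  have hexS : ∀ x ∈ S, ∃ t, ¬ G.Adj v₁ t ∧ ℓ t % ℓ v₁ = x := by
    rintro x ⟨⟨u, rfl⟩, hlt⟩
    obtain ⟨t, ht, n, hn⟩ := chainAll u
    exact ⟨t, ht, by rw [hn, Nat.add_mul_mod_self_right, Nat.mod_eq_of_lt hlt]⟩
  have hpos' : ∀ x ∈ S, 1 ≤ x := by
    rintro x ⟨⟨u, rfl⟩, hlt⟩
    exact hpos u
  have hmodv₁ : ℓ v₁ % ℓ v₁ = 0 := Nat.mod_self _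
  -- part 1
  have key : ∀ (T : Set V), (∀ x ∈ S, ∃ t ∈ T, ℓ t % ℓ v₁ = x) → S.ncard ≤ T.ncard := by
    intro T hT
    have hsub : S ⊆ (fun w => ℓ w % ℓ v₁) '' T := by
      intro x hx
      obtain ⟨t, htT, htx⟩ := hT x hx
      exact ⟨t, htT, htx⟩
    calc S.ncard ≤ ((fun w => ℓ w % ℓ v₁) '' T).ncard :=
          Set.ncard_le_ncard hsub (Set.toFinite _)
      _ ≤ T.ncard := Set.ncard_image_le (Set.toFinite _)
  have hv₁mem : v₁ ∈ {w : V | ¬ G.Adj v₁ w} := by simp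
  constructor
  · have h1 : S.ncard ≤ ({w : V | ¬ G.Adj v₁ w} \ {v₁}).ncard := by
      apply key
      intro x hx
      obtain ⟨t, ht, htx⟩ := hexS x hx
      refine ⟨t, ⟨ht, ?_⟩, htx⟩
      intro h
      rw [Set.mem_singleton_iff] at h
      subst h
      have := hpos' x hx
      omega
    rwa [Set.ncard_diff_singleton_of_mem hv₁mem, ht₁] at h1
  · intro heq
    -- find a terminal t₀ ≠ v₁ with ℓ t₀ % ℓ v₁ = 0
    have hextra : ∃ t₀, ¬ G.Adj v₁ t₀ ∧ t₀ ≠ v₁ ∧ ℓ t₀ % ℓ v₁ = 0 := by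
      by_cases hadj12 : G.Adj v₁ v₂
      · obtain ⟨w, hw⟩ := (hadj v₁ v₂ hne).mp hadj12
        obtain ⟨t, ht, n, hn⟩ := chainAll w
        have h2 : ℓ t = (n + 2) * ℓ v₁ := by rw [hn, ← hw, ← heq]; ring
        refine ⟨t, ht, ?_, ?_⟩
        · have hlt : ℓ v₁ < ℓ t := by
            rw [hn, ← hw]
            have := hpos v₂
            omega
          intro h
          rw [h] at hlt
          exact lt_irrefl _ hlt
        · rw [h2, Nat.mul_mod_left]
      · exact ⟨v₂, hadj12, hne.symm, by rw [← heq, Nat.mod_self]⟩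
    obtain ⟨t₀, ht₀, ht₀ne, ht₀mod⟩ := hextra
    have h2 : S.ncard ≤ (({w : V | ¬ G.Adj v₁ w} \ {v₁}) \ {t₀}).ncard := by
      apply key
      intro x hx
      obtain ⟨t, ht, htx⟩ := hexS x hx
      have hx1 := hpos' x hx
      refine ⟨t, ⟨⟨ht, ?_⟩, ?_⟩, htx⟩
      · intro h
        rw [Set.mem_singleton_iff] at h
        subst h
        omega
      · intro h
        rw [Set.mem_singleton_iff] at h
        subst h
        omega
    have ht₀mem : t₀ ∈ {w : V | ¬ G.Adj v₁ w} \ {v₁} := ⟨ht₀, ht₀ne⟩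
    rwa [Set.ncard_diff_singleton_of_mem ht₀mem, Set.ncard_diff_singleton_of_mem hv₁mem,
      ht₁] at h2
end

section
/- For every natural number n ≥ 39, every admissible multiplicity function m, and every minimal sum labeling ℓ of G(n,m): ℓ(v₁) = ℓ(v₂) for all vertices v₁, v₂ ∈ ψ(2). -/
set_option maxHeartbeats 4000000 in
theorem psi_two_label_unique_aux (n : ℕ) (hn : 39 ≤ n) (m : ℕ → ℕ)
    (hm : Admissible n m) (ℓ : ℕ × ℕ → ℕ) (hℓ : IsSumLabelingG n m ℓ)
    (hmin : ∃ u ∈ Vnm n m, ℓ u = 1)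
    (v₁ v₂ : ℕ × ℕ) (hv₁ : v₁ ∈ psi m 2) (hv₂ : v₂ ∈ psi m 2) :
    ℓ v₁ = ℓ v₂ := by
  classical
  have hSn : ∀ k, k ∈ Sn n ↔ ((2 ≤ k ∧ k ≤ n) ∨ k = n + 2) := fun _ => Iff.rfl
  obtain ⟨hmA, hmB, hmC⟩ := hm
  obtain ⟨hpos, hiff⟩ := hℓ
  have hmge1 : ∀ i, i ∈ Sn n → 1 ≤ m i := by
    intro i hi
    by_cases h : 2 * i ∈ Sn n
    · have := hmA i hi h; omega
    · have := hmB i hi h; omega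
  have hm2ge : 2 ≤ m 2 := hmA 2 ((hSn 2).mpr (by omega)) ((hSn 4).mpr (by omega))
  have hmn1 : ∀ k, k ≤ 4 → m (n - k) = 1 := by
    intro k hk
    exact hmB _ ((hSn _).mpr (by omega)) (by intro h; rw [hSn] at h; omega)
  have hmn2 : m (n + 2) = 1 :=
    hmB _ ((hSn _).mpr (by omega)) (by intro h; rw [hSn] at h; omega)
  -- key vertices
  have htV : ∀ k, k ≤ 4 → ((n - k, 0) : ℕ × ℕ) ∈ Vnm n m := by
    intro k hk
    refine ⟨?_, ?_⟩
    · show (n - k) ∈ Sn n; exact (hSn _).mpr (by omega)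
    · show (0 : ℕ) < m (n - k); have := hmn1 k hk; omega
  have hzV : ((n + 2, 0) : ℕ × ℕ) ∈ Vnm n m := by
    refine ⟨?_, ?_⟩
    · show (n + 2) ∈ Sn n; exact (hSn _).mpr (by omega)
    · show (0 : ℕ) < m (n + 2); omega
  -- singleton classes
  have hsingle : ∀ p, p ∈ Vnm n m → ∀ k, k ≤ 4 → p.1 = n - k → p = (n - k, 0) := by
    intro p hp k hk h1
    obtain ⟨p1, p2⟩ := p
    have h1' : p1 = n - k := h1
    have h2' : p2 < m p1 := hp.2
    rw [h1', hmn1 k hk] at h2'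
    simp only [Prod.mk.injEq]
    exact ⟨h1', by omega⟩
  have hsinglez : ∀ p, p ∈ Vnm n m → p.1 = n + 2 → p = (n + 2, 0) := by
    intro p hp h1
    obtain ⟨p1, p2⟩ := p
    have h1' : p1 = n + 2 := h1
    have h2' : p2 < m p1 := hp.2
    rw [h1', hmn2] at h2'
    simp only [Prod.mk.injEq]
    exact ⟨h1', by omega⟩
  -- edge and nonedge lemmas
  have edge : ∀ u, u ∈ Vnm n m → ∀ v, v ∈ Vnm n m → u ≠ v → u.1 + v.1 ∈ Sn n →
      ∃ w, w ∈ Vnm n m ∧ ℓ w = ℓ u + ℓ v := by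
    intro u hu v hv hne hs
    obtain ⟨w, hw, he⟩ := (hiff u hu v hv hne).mp ⟨hne, hs⟩
    exact ⟨w, hw, he.symm⟩
  have nonedge : ∀ u, u ∈ Vnm n m → ∀ v, v ∈ Vnm n m → u ≠ v → u.1 + v.1 ∉ Sn n →
      ¬ ∃ w, w ∈ Vnm n m ∧ ℓ w = ℓ u + ℓ v := by
    intro u hu v hv hne hs hL
    obtain ⟨w, hw, he⟩ := hL
    exact hs ((hiff u hu v hv hne).mpr ⟨w, hw, he.symm⟩).2
  -- every vertex except (n+2,0) has a neighbour
  have hNbr : ∀ u, u ∈ Vnm n m → u ≠ (n + 2, 0) →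
      ∃ v, v ∈ Vnm n m ∧ v ≠ u ∧ u.1 + v.1 ∈ Sn n := by
    intro u hu hne
    have hu1 := (hSn u.1).mp hu.1
    have hu1n : 2 ≤ u.1 ∧ u.1 ≤ n := by
      rcases hu1 with h | h
      · exact h
      · exact absurd (hsinglez u hu h) hne
    by_cases hc : u.1 = n - 1
    · refine ⟨(3, 0), ⟨?_, ?_⟩, ?_, ?_⟩
      · show (3 : ℕ) ∈ Sn n; exact (hSn _).mpr (by omega)
      · show (0 : ℕ) < m 3; have := hmge1 3 ((hSn _).mpr (by omega)); omega
      · intro h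
        have h3 : (3 : ℕ) = u.1 := congrArg Prod.fst h
        omega
      · show u.1 + 3 ∈ Sn n
        exact (hSn _).mpr (by omega)
    · by_cases h20 : u = (2, 0)
      · refine ⟨(2, 1), ⟨?_, ?_⟩, ?_, ?_⟩
        · show (2 : ℕ) ∈ Sn n; exact (hSn _).mpr (by omega)
        · show (1 : ℕ) < m 2; omega
        · intro h; rw [h20] at h; simp at h
        · show u.1 + 2 ∈ Sn n
          exact (hSn _).mpr (by omega)
      · refine ⟨(2, 0), ⟨?_, ?_⟩, fun h => h20 h.symm, ?_⟩
        · show (2 : ℕ) ∈ Sn n; exact (hSn _).mpr (by omega)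
        · show (0 : ℕ) < m 2; omega
        · show u.1 + 2 ∈ Sn n
          exact (hSn _).mpr (by omega)
  -- finiteness of the vertex set
  have hVfin : (Vnm n m).Finite := by
    apply Set.Finite.subset
      (Finset.finite_toSet ((Finset.range (n + 3)) ×ˢ
        (Finset.range ((Finset.range (n + 3)).sup m))))
    intro p hp
    have h1 := (hSn p.1).mp hp.1
    have h2 : p.2 < m p.1 := hp.2
    have hp1 : p.1 ∈ Finset.range (n + 3) := by
      rw [Finset.mem_range]; omega
    have h3 : m p.1 ≤ (Finset.range (n + 3)).sup m := Finset.le_sup hp1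
    rw [Finset.coe_product, Set.mem_prod]
    refine ⟨by rw [Finset.mem_coe]; exact hp1, ?_⟩
    rw [Finset.mem_coe, Finset.mem_range]
    omega
  -- the label of (n+2,0) is the maximum label
  obtain ⟨u₀, hu₀V, hu₀max⟩ := Set.Finite.exists_maximalFor ℓ (Vnm n m) hVfin ⟨_, hzV⟩
  have hzmax : ∀ u, u ∈ Vnm n m → ℓ u ≤ ℓ (n + 2, 0) := by
    have hle : ∀ u, u ∈ Vnm n m → ℓ u ≤ ℓ u₀ := by
      intro u hu
      by_contra hlt
      have := hu₀max (j := u) hu (by omega)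
      omega
    rcases eq_or_ne u₀ (n + 2, 0) with he | hne
    · rw [← he]; exact hle
    · exfalso
      obtain ⟨v, hvV, hvne, hsum⟩ := hNbr u₀ hu₀V hne
      obtain ⟨w, hwV, hwl⟩ := edge u₀ hu₀V v hvV (Ne.symm hvne) hsum
      have h1 := hle w hwV
      have h2 := hpos v hvV
      omega
  -- psi 2 lives in V
  have hpsiV : ∀ p, p ∈ psi m 2 → p ∈ Vnm n m := by
    intro p hp
    obtain ⟨h1, h2⟩ := hp
    refine ⟨?_, ?_⟩
    · rw [h1]; exact (hSn _).mpr (by omega)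
    · rw [h1]; exact h2
  -- the finset of labels of psi 2
  set T : Finset ℕ := (({2} : Finset ℕ) ×ˢ Finset.range (m 2)).image ℓ with hT
  have hmemT : ∀ p, p ∈ psi m 2 → ℓ p ∈ T := by
    intro p hp
    rw [hT]
    apply Finset.mem_image_of_mem
    rw [Finset.mem_product, Finset.mem_singleton, Finset.mem_range]
    exact ⟨hp.1, hp.2⟩
  have hTcarrier : ∀ x, x ∈ T → ∃ p, p ∈ psi m 2 ∧ ℓ p = x := by
    intro x hx
    rw [hT, Finset.mem_image] at hx
    obtain ⟨p, hp, he⟩ := hx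
    rw [Finset.mem_product, Finset.mem_singleton, Finset.mem_range] at hp
    exact ⟨p, ⟨hp.1, hp.2⟩, he⟩
  have hv1T := hmemT v₁ hv₁
  have hv2T := hmemT v₂ hv₂
  have hTne : T.Nonempty := ⟨_, hv1T⟩
  set α := T.min' hTne with hα
  set β := T.max' hTne with hβ
  have hgoal : α = β → ℓ v₁ = ℓ v₂ := by
    intro h
    have a1 := T.min'_le _ hv1T
    have a2 := T.min'_le _ hv2T
    have b1 := T.le_max' _ hv1T
    have b2 := T.le_max' _ hv2T
    omega
  by_contra hcon
  have hαβ : α < β := by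
    have h1 := T.min'_le _ (T.max'_mem hTne)
    rcases lt_or_eq_of_le h1 with h | h
    · exact h
    · exact absurd (hgoal h) hcon
  obtain ⟨vα, hvαP, hvαl⟩ := hTcarrier α (T.min'_mem hTne)
  obtain ⟨vβ, hvβP, hvβl⟩ := hTcarrier β (T.max'_mem hTne)
  have hvαV := hpsiV vα hvαP
  have hvβV := hpsiV vβ hvβP
  have hvα1 : vα.1 = 2 := hvαP.1
  have hvβ1 : vβ.1 = 2 := hvβP.1
  have hαpos : 1 ≤ α := by rw [← hvαl]; exact hpos vα hvαV
  have hβmax : ∀ p, p ∈ Vnm n m → p.1 = 2 → ℓ p ≤ β := by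
    intro p hpV hp1
    exact T.le_max' _ (hmemT p ⟨hp1, by rw [← hp1]; exact hpV.2⟩)
  have hvab : vα ≠ vβ := fun h => by rw [h, hvβl] at hvαl; omega
  clear_value T α β
  clear hmemT hTcarrier hgoal hv1T hv2T hα hβ hTne hT T
  clear hu₀max hu₀V hNbr hVfin hiff hmin hmC
  -- the carrier of α + β
  obtain ⟨w, hwV, hwl⟩ := edge vα hvαV vβ hvβV hvab ((hSn _).mpr (by omega))
  rw [hvαl, hvβl] at hwl
  have hw1S := (hSn w.1).mp hwV.1
  have hwne2 : w.1 ≠ 2 := by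
    intro h
    have := hβmax w hwV h
    omega
  -- edges from the probes (n-k,0) to vα, vβ
  have hedgeβ : ∀ k, k ≤ 4 → k ≠ 1 → ∃ w', w' ∈ Vnm n m ∧ ℓ w' = ℓ (n - k, 0) + β := by
    intro k hk hk1
    have h := edge (n - k, 0) (htV k hk) vβ hvβV
      (by intro he; have h2 : n - k = vβ.1 := congrArg Prod.fst he; omega)
      (by show (n - k) + vβ.1 ∈ Sn n; exact (hSn _).mpr (by omega))
    rwa [hvβl] at h
  have hedgeα : ∀ k, k ≤ 4 → k ≠ 1 → ∃ w', w' ∈ Vnm n m ∧ ℓ w' = ℓ (n - k, 0) + α := by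
    intro k hk hk1
    have h := edge (n - k, 0) (htV k hk) vα hvαV
      (by intro he; have h2 : n - k = vα.1 := congrArg Prod.fst he; omega)
      (by show (n - k) + vα.1 ∈ Sn n; exact (hSn _).mpr (by omega))
    rwa [hvαl] at h
  have hdpos : ∀ k, k ≤ 4 → 1 ≤ ℓ (n - k, 0) := fun k hk => hpos _ (htV k hk)
  -- the extension engine: adding a label of a psi-2 vertex
  have hEadd : ∀ vc, vc ∈ Vnm n m → vc.1 = 2 → ∀ x, (∃ w', w' ∈ Vnm n m ∧ ℓ w' = x) →
      x ≠ ℓ (n - 1, 0) → x ≠ ℓ (n + 2, 0) → x ≠ ℓ vc →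
      ∃ w', w' ∈ Vnm n m ∧ ℓ w' = x + ℓ vc := by
    intro vc hvcV hvc1 x hx hx1 hx2 hx3
    obtain ⟨u, huV, hul⟩ := hx
    have hu1 := (hSn u.1).mp huV.1
    have hun1 : u.1 ≠ n - 1 := by
      intro h
      rw [hsingle u huV 1 (by omega) h] at hul
      exact hx1 hul.symm
    have hun2 : u.1 ≠ n + 2 := by
      intro h
      rw [hsinglez u huV h] at hul
      exact hx2 hul.symm
    have hne : u ≠ vc := fun h => hx3 (by rw [← hul, h])
    have h := edge u huV vc hvcV hne ((hSn _).mpr (by omega))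
    rw [hul] at h
    exact h
  -- carrier constraint from probe k
  have hC : ∀ k, k ≤ 4 → k ≠ 1 →
      ¬(ℓ (n - k, 0) + β = ℓ (n - 1, 0) ∨ ℓ (n - k, 0) + β = ℓ (n + 2, 0)) →
      ∀ u, u ∈ Vnm n m → ℓ u = α + β → (u = (n - k, 0) ∨ (n - k) + u.1 ∈ Sn n) := by
    intro k hk hk1 hnb u huV hul
    by_cases h1 : u = (n - k, 0)
    · exact Or.inl h1
    by_cases h2 : (n - k) + u.1 ∈ Sn n
    · exact Or.inr h2
    exfalso
    push_neg at hnb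
    have hd1 := hdpos k hk
    have hLx := hEadd vα hvαV hvα1 _ (hedgeβ k hk hk1) hnb.1 hnb.2
      (by rw [hvαl]; omega)
    rw [hvαl] at hLx
    have heq : ℓ (n - k, 0) + β + α = ℓ (n - k, 0) + ℓ u := by rw [hul]; omega
    rw [heq] at hLx
    exact nonedge (n - k, 0) (htV k hk) u huV (fun h => h1 h.symm) h2 hLx
  -- the probe labels are pairwise distinct
  have hdne : ∀ j k, j < k → k ≤ 4 → ℓ (n - j, 0) ≠ ℓ (n - k, 0) := by
    intro j k hjk hk4 hEq
    have hkV : ((k + 2, 0) : ℕ × ℕ) ∈ Vnm n m := by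
      refine ⟨?_, ?_⟩
      · show (k + 2) ∈ Sn n; exact (hSn _).mpr (by omega)
      · show (0 : ℕ) < m (k + 2)
        have := hmge1 (k + 2) ((hSn _).mpr (by omega)); omega
    have hLk := edge (n - k, 0) (htV k (by omega)) (k + 2, 0) hkV
      (by intro h; have h2 : n - k = k + 2 := congrArg Prod.fst h; omega)
      (by show (n - k) + (k + 2) ∈ Sn n; exact (hSn _).mpr (by omega))
    rw [← hEq] at hLk
    exact nonedge (n - j, 0) (htV j (by omega)) (k + 2, 0) hkV
      (by intro h; have h2 : n - j = k + 2 := congrArg Prod.fst h; omega)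
      (by intro h; have h2 : (n - j) + (k + 2) ∈ Sn n := h; rw [hSn] at h2; omega)
      hLk
  -- probe 0 is blocked
  have hH0 : ℓ (n - 0, 0) + β = ℓ (n - 1, 0) ∨ ℓ (n - 0, 0) + β = ℓ (n + 2, 0) := by
    by_contra hnH0
    obtain ⟨k', hk'2, hk'4, hnHk'⟩ :
        ∃ k', 2 ≤ k' ∧ k' ≤ 4 ∧
          ¬(ℓ (n - k', 0) + β = ℓ (n - 1, 0) ∨ ℓ (n - k', 0) + β = ℓ (n + 2, 0)) := by
      by_cases h2 : ℓ (n - 2, 0) + β = ℓ (n - 1, 0) ∨ ℓ (n - 2, 0) + β = ℓ (n + 2, 0)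
      · by_cases h3 : ℓ (n - 3, 0) + β = ℓ (n - 1, 0) ∨ ℓ (n - 3, 0) + β = ℓ (n + 2, 0)
        · have e23 := hdne 2 3 (by omega) (by omega)
          have e24 := hdne 2 4 (by omega) (by omega)
          have e34 := hdne 3 4 (by omega) (by omega)
          exact ⟨4, by omega, by omega, by omega⟩
        · exact ⟨3, by omega, by omega, h3⟩
      · exact ⟨2, by omega, by omega, h2⟩
    have hC0 := hC 0 (by omega) (by omega) hnH0 w hwV hwl
    have hCk' := hC k' (by omega) (by omega) hnHk' w hwV hwl
    rcases hC0 with h | h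
    · rcases hCk' with h' | h'
      · rw [h] at h'
        have h2 : n - 0 = n - k' := congrArg Prod.fst h'
        omega
      · rw [h] at h'
        have h'' : (n - k') + (n - 0) ∈ Sn n := h'
        rw [hSn] at h''
        omega
    · have h' : (n - 0) + w.1 ∈ Sn n := h
      rw [hSn] at h'
      omega
  -- one of probes 2, 3 is blocked
  have hH23 : (ℓ (n - 2, 0) + β = ℓ (n - 1, 0) ∨ ℓ (n - 2, 0) + β = ℓ (n + 2, 0)) ∨
      (ℓ (n - 3, 0) + β = ℓ (n - 1, 0) ∨ ℓ (n - 3, 0) + β = ℓ (n + 2, 0)) := by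
    by_contra hnn
    have hnH2 : ¬(ℓ (n - 2, 0) + β = ℓ (n - 1, 0) ∨ ℓ (n - 2, 0) + β = ℓ (n + 2, 0)) :=
      fun h => hnn (Or.inl h)
    have hnH3 : ¬(ℓ (n - 3, 0) + β = ℓ (n - 1, 0) ∨ ℓ (n - 3, 0) + β = ℓ (n + 2, 0)) :=
      fun h => hnn (Or.inr h)
    have hC2 := hC 2 (by omega) (by omega) hnH2 w hwV hwl
    have hC3 := hC 3 (by omega) (by omega) hnH3 w hwV hwl
    rcases hC2 with h2 | h2
    · rcases hC3 with h3 | h3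
      · rw [h2] at h3
        have h4 : n - 2 = n - 3 := congrArg Prod.fst h3
        omega
      · rw [h2] at h3
        have h4 : (n - 3) + (n - 2) ∈ Sn n := h3
        rw [hSn] at h4
        omega
    · rcases hC3 with h3 | h3
      · rw [h3] at h2
        have h4 : (n - 2) + (n - 3) ∈ Sn n := h2
        rw [hSn] at h4
        omega
      · rw [hSn] at h2 h3
        omega
  have hd1z : ℓ (n - 1, 0) ≤ ℓ (n + 2, 0) := hzmax _ (htV 1 (by omega))
  by_cases hH2 : ℓ (n - 2, 0) + β = ℓ (n - 1, 0) ∨ ℓ (n - 2, 0) + β = ℓ (n + 2, 0)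
  · -- CASE I : probes 0 and 2 blocked; carrier lives in class 3
    have e02 := hdne 0 2 (by omega) (by omega)
    have e03 := hdne 0 3 (by omega) (by omega)
    have e04 := hdne 0 4 (by omega) (by omega)
    have e23 := hdne 2 3 (by omega) (by omega)
    have e24 := hdne 2 4 (by omega) (by omega)
    have hnH3 : ¬(ℓ (n - 3, 0) + β = ℓ (n - 1, 0) ∨ ℓ (n - 3, 0) + β = ℓ (n + 2, 0)) := by
      omega
    have hnH4 : ¬(ℓ (n - 4, 0) + β = ℓ (n - 1, 0) ∨ ℓ (n - 4, 0) + β = ℓ (n + 2, 0)) := by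
      omega
    have hC3 := hC 3 (by omega) (by omega) hnH3 w hwV hwl
    have hC4 := hC 4 (by omega) (by omega) hnH4 w hwV hwl
    have hw3 : w.1 = 3 := by
      rcases hC3 with h3 | h3
      · rcases hC4 with h4 | h4
        · rw [h3] at h4
          have h5 : n - 3 = n - 4 := congrArg Prod.fst h4
          omega
        · rw [h3] at h4
          have h5 : (n - 4) + (n - 3) ∈ Sn n := h4
          rw [hSn] at h5
          omega
      · rcases hC4 with h4 | h4
        · rw [h4] at h3
          have h5 : (n - 3) + (n - 4) ∈ Sn n := h3
          rw [hSn] at h5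
          omega
        · rw [hSn] at h3 h4
          omega
    have hD0 : ℓ (n - 0, 0) + α = ℓ (n - 1, 0) ∨ ℓ (n - 0, 0) + α = ℓ (n + 2, 0) ∨
        ℓ (n - 0, 0) + α = β := by
      by_contra hcc
      push_neg at hcc
      obtain ⟨c1, c2, c3⟩ := hcc
      have hLx := hEadd vβ hvβV hvβ1 _ (hedgeα 0 (by omega) (by omega)) c1 c2
        (by rw [hvβl]; exact c3)
      rw [hvβl] at hLx
      have heq : ℓ (n - 0, 0) + α + β = ℓ (n - 0, 0) + ℓ w := by rw [hwl]; omega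
      rw [heq] at hLx
      exact nonedge (n - 0, 0) (htV 0 (by omega)) w hwV
        (by intro h; have h2 : n - 0 = w.1 := congrArg Prod.fst h; omega)
        (by intro h; have h2 : (n - 0) + w.1 ∈ Sn n := h; rw [hSn] at h2; omega)
        hLx
    have hD2 : ℓ (n - 2, 0) + α = ℓ (n - 1, 0) ∨ ℓ (n - 2, 0) + α = ℓ (n + 2, 0) ∨
        ℓ (n - 2, 0) + α = β := by
      by_contra hcc
      push_neg at hcc
      obtain ⟨c1, c2, c3⟩ := hcc
      have hLx := hEadd vβ hvβV hvβ1 _ (hedgeα 2 (by omega) (by omega)) c1 c2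
        (by rw [hvβl]; exact c3)
      rw [hvβl] at hLx
      have heq : ℓ (n - 2, 0) + α + β = ℓ (n - 2, 0) + ℓ w := by rw [hwl]; omega
      rw [heq] at hLx
      exact nonedge (n - 2, 0) (htV 2 (by omega)) w hwV
        (by intro h; have h2 : n - 2 = w.1 := congrArg Prod.fst h; omega)
        (by intro h; have h2 : (n - 2) + w.1 ∈ Sn n := h; rw [hSn] at h2; omega)
        hLx
    obtain ⟨wf, hwfV, hwfl⟩ := edge (n - 1, 0) (htV 1 (by omega)) w hwV
      (by intro h; have h2 : n - 1 = w.1 := congrArg Prod.fst h; omega)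
      (by show (n - 1) + w.1 ∈ Sn n; exact (hSn _).mpr (by omega))
    rw [hwl] at hwfl
    have hfz := hzmax wf hwfV
    clear * - hH0 hH2 hD0 hD2 e02 hd1z hwfl hfz hαβ hαpos
    omega
  · -- CASE II : probes 0 and 3 blocked; carrier lives in class 4
    have hH3 : ℓ (n - 3, 0) + β = ℓ (n - 1, 0) ∨ ℓ (n - 3, 0) + β = ℓ (n + 2, 0) := by
      rcases hH23 with h | h
      · exact absurd h hH2
      · exact h
    have e03 := hdne 0 3 (by omega) (by omega)
    have e04 := hdne 0 4 (by omega) (by omega)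
    have e34 := hdne 3 4 (by omega) (by omega)
    have hnH4 : ¬(ℓ (n - 4, 0) + β = ℓ (n - 1, 0) ∨ ℓ (n - 4, 0) + β = ℓ (n + 2, 0)) := by
      omega
    have hC2 := hC 2 (by omega) (by omega) hH2 w hwV hwl
    have hC4 := hC 4 (by omega) (by omega) hnH4 w hwV hwl
    have hw4 : w.1 = 4 := by
      rcases hC2 with h2 | h2
      · rcases hC4 with h4 | h4
        · rw [h2] at h4
          have h5 : n - 2 = n - 4 := congrArg Prod.fst h4
          omega
        · rw [h2] at h4
          have h5 : (n - 4) + (n - 2) ∈ Sn n := h4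
          rw [hSn] at h5
          omega
      · rcases hC4 with h4 | h4
        · rw [h4] at h2
          have h5 : (n - 2) + (n - 4) ∈ Sn n := h2
          rw [hSn] at h5
          omega
        · rw [hSn] at h2 h4
          omega
    have hD0 : ℓ (n - 0, 0) + α = ℓ (n - 1, 0) ∨ ℓ (n - 0, 0) + α = ℓ (n + 2, 0) ∨
        ℓ (n - 0, 0) + α = β := by
      by_contra hcc
      push_neg at hcc
      obtain ⟨c1, c2, c3⟩ := hcc
      have hLx := hEadd vβ hvβV hvβ1 _ (hedgeα 0 (by omega) (by omega)) c1 c2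
        (by rw [hvβl]; exact c3)
      rw [hvβl] at hLx
      have heq : ℓ (n - 0, 0) + α + β = ℓ (n - 0, 0) + ℓ w := by rw [hwl]; omega
      rw [heq] at hLx
      exact nonedge (n - 0, 0) (htV 0 (by omega)) w hwV
        (by intro h; have h2 : n - 0 = w.1 := congrArg Prod.fst h; omega)
        (by intro h; have h2 : (n - 0) + w.1 ∈ Sn n := h; rw [hSn] at h2; omega)
        hLx
    have hD3 : ℓ (n - 3, 0) + α = ℓ (n - 1, 0) ∨ ℓ (n - 3, 0) + α = ℓ (n + 2, 0) ∨
        ℓ (n - 3, 0) + α = β := by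
      by_contra hcc
      push_neg at hcc
      obtain ⟨c1, c2, c3⟩ := hcc
      have hLx := hEadd vβ hvβV hvβ1 _ (hedgeα 3 (by omega) (by omega)) c1 c2
        (by rw [hvβl]; exact c3)
      rw [hvβl] at hLx
      have heq : ℓ (n - 3, 0) + α + β = ℓ (n - 3, 0) + ℓ w := by rw [hwl]; omega
      rw [heq] at hLx
      exact nonedge (n - 3, 0) (htV 3 (by omega)) w hwV
        (by intro h; have h2 : n - 3 = w.1 := congrArg Prod.fst h; omega)
        (by intro h; have h2 : (n - 3) + w.1 ∈ Sn n := h; rw [hSn] at h2; omega)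
        hLx
    obtain ⟨wx, hwxV, hwxl⟩ := edge w hwV vβ hvβV
      (by intro h; have h2 : w.1 = vβ.1 := congrArg Prod.fst h; omega)
      ((hSn _).mpr (by omega))
    rw [hwl, hvβl] at hwxl
    have hDX : (α + β) + β = ℓ (n - 1, 0) ∨ (α + β) + β = ℓ (n + 2, 0) ∨
        (α + β) + β + β ≤ ℓ (n + 2, 0) := by
      by_cases x1 : (α + β) + β = ℓ (n - 1, 0)
      · exact Or.inl x1
      by_cases x2 : (α + β) + β = ℓ (n + 2, 0)
      · exact Or.inr (Or.inl x2)
      have hwx' : ∃ w', w' ∈ Vnm n m ∧ ℓ w' = (α + β) + β := ⟨wx, hwxV, hwxl⟩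
      have hne3 : (α + β) + β ≠ ℓ vβ := by rw [hvβl]; omega
      have hLx := hEadd vβ hvβV hvβ1 ((α + β) + β) hwx' x1 x2 hne3
      rw [hvβl] at hLx
      obtain ⟨w3, hw3V, hw3l⟩ := hLx
      have hle3 := hzmax w3 hw3V
      clear * - hw3l hle3
      omega
    have hkey : ℓ (n - 3, 0) = α + β ∨ ℓ (n - 0, 0) = α + β := by
      clear * - hH0 hH3 hD0 hD3 e03 hd1z hαpos hαβ hDX
      omega
    rcases hkey with hk3 | hk0
    · have h := hC 2 (by omega) (by omega) hH2 (n - 3, 0) (htV 3 (by omega)) hk3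
      rcases h with h | h
      · have h2 : n - 3 = n - 2 := congrArg Prod.fst h
        omega
      · have h2 : (n - 2) + (n - 3) ∈ Sn n := h
        rw [hSn] at h2
        omega
    · have h := hC 2 (by omega) (by omega) hH2 (n - 0, 0) (htV 0 (by omega)) hk0
      rcases h with h | h
      · have h2 : n - 0 = n - 2 := congrArg Prod.fst h
        omega
      · have h2 : (n - 2) + (n - 0) ∈ Sn n := h
        rw [hSn] at h2
        omega

/-- For `n ≥ 39`, any admissible `m`, and any minimal sum labeling `ℓ` of
`G(n,m)`, all vertices of `ψ(2)` carry the same label. -/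
theorem psi_two_label_unique (n : ℕ) (hn : 39 ≤ n) (m : ℕ → ℕ)
    (hm : Admissible n m) (ℓ : ℕ × ℕ → ℕ) (hℓ : IsSumLabelingG n m ℓ)
    (hmin : ∃ u ∈ Vnm n m, ℓ u = 1)
    (v₁ v₂ : ℕ × ℕ) (hv₁ : v₁ ∈ psi m 2) (hv₂ : v₂ ∈ psi m 2) :
    ℓ v₁ = ℓ v₂ :=
  psi_two_label_unique_aux n hn m hm ℓ hℓ hmin v₁ v₂ hv₁ hv₂
end
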